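/- arXiv:1006.4623 — 7 statements merged into one kernel-verified Lean document; each statement's English description precedes it below -/
import Mathlib

section
/- Let U be a finite-dimensional complex vector space and Z ∈ End(U) a semisimple endomorphism, written Z = Σ_{a=1}^m z_a·P_a where z₁,…,z_m are distinct complex numbers and P₁,…,P_m ∈ End(U) are nonzero projections with P_aP_b = δ_{ab}P_a and P₁+⋯+P_m = id. Let θ₁, θ₂ be real numbers with |θ₁ − θ₂| < π, and let Σ̄ = {s₁e^{iθ₁} + s₂e^{iθ₂} : s₁, s₂ ≥ 0} ∖ {0} be the closed convex sector bounded by the rays ℝ_{>0}e^{iθ₁} and ℝ_{>0}e^{iθ₂}. Suppose u ∈ U satisfies exp(−Z/t)·u → 0 as t → 0 within H_{θ₁} ∩ H_{θ₂}. Then P_a u = 0 for every index a such that z_a ∉ Σ̄; that is, u lies in the span of the eigenspaces of Z corresponding to eigenvalues lying in Σ̄. -/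
open Complex Filter Topology

lemma exp_mul_proj {U : Type*} [NormedAddCommGroup U] [NormedSpace ℂ U] [CompleteSpace U]
    (A Q : U →L[ℂ] U) (ζ : ℂ) (hAQ : A * Q = ζ • Q) :
    NormedSpace.exp A * Q = Complex.exp ζ • Q := by
  have hpow : ∀ n : ℕ, A ^ n * Q = ζ ^ n • Q := by
    intro n
    induction n with
    | zero => simp
    | succ n ih =>
      rw [pow_succ, mul_assoc, hAQ, mul_smul_comm, ih, smul_smul, ← pow_succ']
  rw [NormedSpace.exp_eq_tsum ℂ]
  rw [← (NormedSpace.expSeries_summable' (𝕂 := ℂ) A).tsum_mul_right Q]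
  have h2 : ∀ n : ℕ, ((n.factorial⁻¹ : ℂ) • A ^ n) * Q = ((n.factorial⁻¹ : ℂ) * ζ ^ n) • Q := by
    intro n; rw [smul_mul_assoc, hpow, smul_smul]
  simp_rw [h2]
  rw [Summable.tsum_smul_const]
  · congr 1
    rw [Complex.exp_eq_exp_ℂ, NormedSpace.exp_eq_tsum ℂ]
    simp [smul_eq_mul]
  · simpa [smul_eq_mul] using NormedSpace.expSeries_summable' (𝕂 := ℂ) ζ

lemma perturb (a b z v₀ : ℂ)
    (hab : 0 < a.re * (a + b).re + a.im * (a + b).im)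
    (hbb : 0 < b.re * (a + b).re + b.im * (a + b).im)
    (h1 : 0 ≤ a.re * v₀.re + a.im * v₀.im)
    (h2 : 0 ≤ b.re * v₀.re + b.im * v₀.im)
    (h3 : z.re * v₀.re + z.im * v₀.im < 0) :
    ∃ v : ℂ, 0 < a.re * v.re + a.im * v.im ∧ 0 < b.re * v.re + b.im * v.im ∧
      z.re * v.re + z.im * v.im ≤ 0 := by
  set w : ℂ := a + b with hw
  set t : ℝ := z.re * w.re + z.im * w.im with ht
  set d : ℝ := z.re * v₀.re + z.im * v₀.im with hd
  set ε : ℝ := (-d) / (1 + |t|) with hε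
  have hden : (0:ℝ) < 1 + |t| := by positivity
  have hεpos : 0 < ε := div_pos (by linarith) hden
  refine ⟨v₀ + (ε : ℂ) * w, ?_, ?_, ?_⟩
  · simp only [Complex.add_re, Complex.add_im, Complex.mul_re, Complex.mul_im,
      Complex.ofReal_re, Complex.ofReal_im]
    nlinarith
  · simp only [Complex.add_re, Complex.add_im, Complex.mul_re, Complex.mul_im,
      Complex.ofReal_re, Complex.ofReal_im]
    nlinarith
  · simp only [Complex.add_re, Complex.add_im, Complex.mul_re, Complex.mul_im,
      Complex.ofReal_re, Complex.ofReal_im]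
    have hεt : ε * t ≤ ε * |t| := mul_le_mul_of_nonneg_left (le_abs_self t) hεpos.le
    have hεd : ε * (1 + |t|) = -d := div_mul_cancel₀ _ hden.ne'
    nlinarith [abs_nonneg t]

set_option maxHeartbeats 2000000 in
lemma sep_lemma (θ₁ θ₂ : ℝ) (hθ : |θ₁ - θ₂| < Real.pi) (z : ℂ)
    (hz : z ∉ ({w : ℂ | ∃ s₁ s₂ : ℝ, 0 ≤ s₁ ∧ 0 ≤ s₂ ∧
        w = (s₁ : ℂ) * Complex.exp ((θ₁ : ℂ) * Complex.I)
          + (s₂ : ℂ) * Complex.exp ((θ₂ : ℂ) * Complex.I)} \ {0})) :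
    ∃ v : ℂ,
      0 < (Complex.exp ((θ₁ : ℂ) * Complex.I)).re * v.re
          + (Complex.exp ((θ₁ : ℂ) * Complex.I)).im * v.im ∧
      0 < (Complex.exp ((θ₂ : ℂ) * Complex.I)).re * v.re
          + (Complex.exp ((θ₂ : ℂ) * Complex.I)).im * v.im ∧
      z.re * v.re + z.im * v.im ≤ 0 := by
  set a : ℂ := Complex.exp ((θ₁ : ℂ) * Complex.I) with ha
  set b : ℂ := Complex.exp ((θ₂ : ℂ) * Complex.I) with hb
  have hare : a.re = Real.cos θ₁ := Complex.exp_ofReal_mul_I_re θ₁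
  have haim : a.im = Real.sin θ₁ := Complex.exp_ofReal_mul_I_im θ₁
  have hbre : b.re = Real.cos θ₂ := Complex.exp_ofReal_mul_I_re θ₂
  have hbim : b.im = Real.sin θ₂ := Complex.exp_ofReal_mul_I_im θ₂
  have hpa : a.re ^ 2 + a.im ^ 2 = 1 := by
    rw [hare, haim]; rw [add_comm]; exact Real.sin_sq_add_cos_sq θ₁
  have hpb : b.re ^ 2 + b.im ^ 2 = 1 := by
    rw [hbre, hbim]; rw [add_comm]; exact Real.sin_sq_add_cos_sq θ₂
  have habs := abs_lt.mp hθ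
  -- 1 + cos (θ₁ - θ₂) > 0
  have hhalf : 0 < Real.cos ((θ₁ - θ₂) / 2) :=
    Real.cos_pos_of_mem_Ioo ⟨by linarith, by linarith⟩
  have hcsq : Real.cos ((θ₁ - θ₂) / 2) ^ 2 = 1 / 2 + Real.cos (θ₁ - θ₂) / 2 := by
    have h2 : 2 * ((θ₁ - θ₂) / 2) = θ₁ - θ₂ := by ring
    rw [Real.cos_sq, h2]
  have hcos1 : -1 < Real.cos (θ₁ - θ₂) := by nlinarith
  have hdot_ab : a.re * b.re + a.im * b.im = Real.cos (θ₁ - θ₂) := by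
    rw [hare, haim, hbre, hbim, Real.cos_sub]
  have hab : 0 < a.re * (a + b).re + a.im * (a + b).im := by
    simp only [Complex.add_re, Complex.add_im]; nlinarith
  have hbb : 0 < b.re * (a + b).re + b.im * (a + b).im := by
    simp only [Complex.add_re, Complex.add_im]; nlinarith
  simp only [Set.mem_diff, Set.mem_setOf_eq, Set.mem_singleton_iff, not_and, not_not] at hz
  by_cases hz0 : z = 0
  · exact ⟨a + b, hab, hbb, by rw [hz0]; simp⟩
  have hz' : ∀ s₁ s₂ : ℝ, 0 ≤ s₁ → 0 ≤ s₂ →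
      z ≠ (s₁ : ℂ) * a + (s₂ : ℂ) * b := by
    intro s₁ s₂ h1 h2 heq
    exact hz0 (hz ⟨s₁, s₂, h1, h2, heq⟩)
  -- membership criterion in coordinates
  have hmem : ∀ s₁ s₂ : ℝ, z.re = s₁ * a.re + s₂ * b.re → z.im = s₁ * a.im + s₂ * b.im →
      z = (s₁ : ℂ) * a + (s₂ : ℂ) * b := by
    intro s₁ s₂ hre him
    apply Complex.ext
    · simp [Complex.add_re, Complex.mul_re, hre]
    · simp [Complex.add_im, Complex.mul_im, him]
  by_cases hD0 : a.re * b.im - a.im * b.re = 0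
  · -- degenerate: θ₂ = θ₁, so b = a
    have hsin : Real.sin (θ₂ - θ₁) = 0 := by
      rw [Real.sin_sub]
      rw [hare, haim, hbre, hbim] at hD0
      linarith
    have hθeq : θ₂ = θ₁ := by
      have := (Real.sin_eq_zero_iff_of_lt_of_lt (by linarith) (by linarith)).mp hsin
      linarith
    have hba : b = a := by rw [ha, hb, hθeq]
    by_cases hcr0 : a.re * z.im - a.im * z.re = 0
    · -- z is a real multiple of a
      have hz_eq : z = ((z.re * a.re + z.im * a.im : ℝ) : ℂ) * a := by
        apply Complex.ext
        · simp only [Complex.mul_re, Complex.ofReal_re, Complex.ofReal_im]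
          linear_combination (-z.re) * hpa - a.im * hcr0
        · simp only [Complex.mul_im, Complex.ofReal_re, Complex.ofReal_im]
          linear_combination (-z.im) * hpa + a.re * hcr0
      have htneg : z.re * a.re + z.im * a.im < 0 := by
        by_contra hcon
        push_neg at hcon
        refine hz' (z.re * a.re + z.im * a.im) 0 hcon le_rfl ?_
        rw [hba, ← hz_eq]; push_cast; ring
      refine ⟨a, by nlinarith, by rw [hba]; nlinarith, by nlinarith⟩
    · -- use v₀ with coords (cr * a.im, -(cr * a.re))
      refine perturb a b z ⟨(a.re * z.im - a.im * z.re) * a.im,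
        -((a.re * z.im - a.im * z.re) * a.re)⟩ hab hbb ?_ ?_ ?_
      · show 0 ≤ a.re * ((a.re * z.im - a.im * z.re) * a.im) +
          a.im * (-((a.re * z.im - a.im * z.re) * a.re))
        nlinarith [sq_nonneg (a.re * z.im - a.im * z.re)]
      · rw [hba]
        show 0 ≤ a.re * ((a.re * z.im - a.im * z.re) * a.im) +
          a.im * (-((a.re * z.im - a.im * z.re) * a.re))
        nlinarith [sq_nonneg (a.re * z.im - a.im * z.re)]
      · show z.re * ((a.re * z.im - a.im * z.re) * a.im) +
          z.im * (-((a.re * z.im - a.im * z.re) * a.re)) < 0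
        have hsq : 0 < (a.re * z.im - a.im * z.re) ^ 2 := by positivity
        nlinarith
  · -- nondegenerate: Cramer
    have hid : z = (((z.re * b.im - z.im * b.re) / (a.re * b.im - a.im * b.re) : ℝ) : ℂ) * a
        + (((a.re * z.im - a.im * z.re) / (a.re * b.im - a.im * b.re) : ℝ) : ℂ) * b := by
      apply hmem
      · rw [div_mul_eq_mul_div, div_mul_eq_mul_div, ← add_div, eq_div_iff hD0]; ring
      · rw [div_mul_eq_mul_div, div_mul_eq_mul_div, ← add_div, eq_div_iff hD0]; ring
    have hneg : (z.re * b.im - z.im * b.re) / (a.re * b.im - a.im * b.re) < 0 ∨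
        (a.re * z.im - a.im * z.re) / (a.re * b.im - a.im * b.re) < 0 := by
      by_contra hcon
      push_neg at hcon
      exact hz' _ _ hcon.1 hcon.2 hid
    rcases hneg with hneg | hneg
    · -- v₀ with coords (D * b.im, -(D * b.re)) where D = cross a b
      have hDc : (a.re * b.im - a.im * b.re) * (z.re * b.im - z.im * b.re) < 0 := by
        rcases div_neg_iff.mp hneg with ⟨h1, h2⟩ | ⟨h1, h2⟩ <;> nlinarith
      refine perturb a b z ⟨(a.re * b.im - a.im * b.re) * b.im,
        -((a.re * b.im - a.im * b.re) * b.re)⟩ hab hbb ?_ ?_ ?_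
      · show 0 ≤ a.re * ((a.re * b.im - a.im * b.re) * b.im) +
          a.im * (-((a.re * b.im - a.im * b.re) * b.re))
        nlinarith [sq_nonneg (a.re * b.im - a.im * b.re)]
      · show 0 ≤ b.re * ((a.re * b.im - a.im * b.re) * b.im) +
          b.im * (-((a.re * b.im - a.im * b.re) * b.re))
        nlinarith [sq_nonneg (a.re * b.im - a.im * b.re)]
      · show z.re * ((a.re * b.im - a.im * b.re) * b.im) +
          z.im * (-((a.re * b.im - a.im * b.re) * b.re)) < 0
        nlinarith
    · -- v₀ with coords (-(D * a.im), D * a.re)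
      have hDc : (a.re * b.im - a.im * b.re) * (a.re * z.im - a.im * z.re) < 0 := by
        rcases div_neg_iff.mp hneg with ⟨h1, h2⟩ | ⟨h1, h2⟩ <;> nlinarith
      refine perturb a b z ⟨-((a.re * b.im - a.im * b.re) * a.im),
        (a.re * b.im - a.im * b.re) * a.re⟩ hab hbb ?_ ?_ ?_
      · show 0 ≤ a.re * (-((a.re * b.im - a.im * b.re) * a.im)) +
          a.im * ((a.re * b.im - a.im * b.re) * a.re)
        nlinarith [sq_nonneg (a.re * b.im - a.im * b.re)]
      · show 0 ≤ b.re * (-((a.re * b.im - a.im * b.re) * a.im)) +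
          b.im * ((a.re * b.im - a.im * b.re) * a.re)
        nlinarith [sq_nonneg (a.re * b.im - a.im * b.re)]
      · show z.re * (-((a.re * b.im - a.im * b.re) * a.im)) +
          z.im * ((a.re * b.im - a.im * b.re) * a.re) < 0
        nlinarith

set_option maxHeartbeats 1000000 in
/-- If `Z = Σ z_a • P_a` is a semisimple endomorphism of a finite-dimensional
complex vector space and `exp (-Z/t) u → 0` as `t → 0` in `H_{θ₁} ∩ H_{θ₂}` (with
`|θ₁ - θ₂| < π`), then `P_a u = 0` whenever `z_a` does not lie in the closed convex sector
bounded by the rays `ℝ_{>0} e^{iθ₁}` and `ℝ_{>0} e^{iθ₂}`. -/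
theorem stmt1 {U : Type*} [NormedAddCommGroup U] [NormedSpace ℂ U] [FiniteDimensional ℂ U]
    {m : ℕ} (z : Fin m → ℂ) (hz : Function.Injective z)
    (P : Fin m → U →L[ℂ] U) (hPne : ∀ a, P a ≠ 0)
    (hmul : ∀ a b, P a * P b = if a = b then P a else 0)
    (hsum : ∑ a, P a = 1)
    (Z : U →L[ℂ] U) (hZ : Z = ∑ a, z a • P a)
    (θ₁ θ₂ : ℝ) (hθ : |θ₁ - θ₂| < Real.pi)
    (u : U)
    (hu : Tendsto (fun t : ℂ => NormedSpace.exp ((-t⁻¹) • Z) u)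
      (𝓝[{t : ℂ | 0 < (t * Complex.exp (-(θ₁ : ℂ) * Complex.I)).re} ∩
          {t : ℂ | 0 < (t * Complex.exp (-(θ₂ : ℂ) * Complex.I)).re}] 0) (𝓝 0)) :
    ∀ a, z a ∉ ({w : ℂ | ∃ s₁ s₂ : ℝ, 0 ≤ s₁ ∧ 0 ≤ s₂ ∧
        w = (s₁ : ℂ) * Complex.exp ((θ₁ : ℂ) * Complex.I)
          + (s₂ : ℂ) * Complex.exp ((θ₂ : ℂ) * Complex.I)} \ {0}) →
      P a u = 0 := by
  intro a0 hza
  obtain ⟨v, hv1, hv2, hv3⟩ := sep_lemma θ₁ θ₂ hθ (z a0) hza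
  have hv0 : v ≠ 0 := by
    intro h
    rw [h] at hv1
    simp at hv1
  -- algebra of projections
  have hZP : Z * P a0 = z a0 • P a0 := by
    rw [hZ, Finset.sum_mul, Finset.sum_eq_single a0]
    · rw [smul_mul_assoc, hmul, if_pos rfl]
    · intro b _ hb
      rw [smul_mul_assoc, hmul, if_neg hb, smul_zero]
    · intro h
      exact absurd (Finset.mem_univ a0) h
  have hPZ : P a0 * Z = z a0 • P a0 := by
    rw [hZ, Finset.mul_sum, Finset.sum_eq_single a0]
    · rw [mul_smul_comm, hmul, if_pos rfl]
    · intro b _ hb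
      rw [mul_smul_comm, hmul, if_neg (fun h => hb h.symm), smul_zero]
    · intro h
      exact absurd (Finset.mem_univ a0) h
  have key : ∀ t : ℂ, P a0 (NormedSpace.exp ((-t⁻¹) • Z) u)
      = Complex.exp ((-t⁻¹) * z a0) • P a0 u := by
    intro t
    have hAP : ((-t⁻¹) • Z) * P a0 = ((-t⁻¹) * z a0) • P a0 := by
      rw [smul_mul_assoc, hZP, smul_smul]
    have hcomm : Commute (P a0) ((-t⁻¹) • Z) := by
      show P a0 * ((-t⁻¹) • Z) = ((-t⁻¹) • Z) * P a0
      rw [mul_smul_comm, smul_mul_assoc, hPZ, hZP]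
    calc P a0 (NormedSpace.exp ((-t⁻¹) • Z) u)
        = ((P a0) * NormedSpace.exp ((-t⁻¹) • Z)) u := rfl
      _ = (NormedSpace.exp ((-t⁻¹) • Z) * P a0) u := by rw [hcomm.exp_right.eq]
      _ = (Complex.exp ((-t⁻¹) * z a0) • P a0) u := by rw [exp_mul_proj _ _ _ hAP]
      _ = Complex.exp ((-t⁻¹) * z a0) • P a0 u := rfl
  -- the curve r ↦ r • v approaches 0 within the double half-plane
  have hconj : ∀ θ : ℝ, Complex.exp (-(θ : ℂ) * Complex.I)
      = (starRingEnd ℂ) (Complex.exp ((θ : ℂ) * Complex.I)) := by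
    intro θ
    rw [← Complex.exp_conj]
    congr 1
    simp [Complex.conj_I, Complex.conj_ofReal]
  have hmaps : ∀ r : ℝ, 0 < r →
      ((r : ℂ) * v) ∈ ({t : ℂ | 0 < (t * Complex.exp (-(θ₁ : ℂ) * Complex.I)).re} ∩
        {t : ℂ | 0 < (t * Complex.exp (-(θ₂ : ℂ) * Complex.I)).re}) := by
    intro r hr
    constructor <;>
    · simp only [Set.mem_setOf_eq]
      rw [hconj]
      simp only [Complex.mul_re, Complex.mul_im, Complex.conj_re, Complex.conj_im,
        Complex.ofReal_re, Complex.ofReal_im]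
      nlinarith [mul_pos hr hv1, mul_pos hr hv2]
  have hcurve : Tendsto (fun r : ℝ => (r : ℂ) * v) (𝓝[>] (0 : ℝ))
      (𝓝[({t : ℂ | 0 < (t * Complex.exp (-(θ₁ : ℂ) * Complex.I)).re} ∩
        {t : ℂ | 0 < (t * Complex.exp (-(θ₂ : ℂ) * Complex.I)).re})] 0) := by
    apply tendsto_nhdsWithin_of_tendsto_nhds_of_eventually_within
    · have h1 : Tendsto (fun r : ℝ => (r : ℂ)) (𝓝[>] (0 : ℝ)) (𝓝 0) := by
        have := Complex.continuous_ofReal.tendsto 0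
        simpa using this.mono_left nhdsWithin_le_nhds
      simpa using h1.mul_const v
    · filter_upwards [self_mem_nhdsWithin] with r hr using hmaps r hr
  have hcomp : Tendsto (fun r : ℝ => NormedSpace.exp ((-((r : ℂ) * v)⁻¹) • Z) u)
      (𝓝[>] (0 : ℝ)) (𝓝 0) := hu.comp hcurve
  have hP : Tendsto (fun r : ℝ => P a0 (NormedSpace.exp ((-((r : ℂ) * v)⁻¹) • Z) u))
      (𝓝[>] (0 : ℝ)) (𝓝 0) := by
    have := ((P a0).continuous.tendsto 0).comp hcomp
    rwa [map_zero] at this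
  have hnorm : Tendsto (fun r : ℝ => ‖P a0 (NormedSpace.exp ((-((r : ℂ) * v)⁻¹) • Z) u)‖)
      (𝓝[>] (0 : ℝ)) (𝓝 0) := by
    simpa using hP.norm
  have hbound : ∀ᶠ r : ℝ in 𝓝[>] (0 : ℝ),
      ‖P a0 u‖ ≤ ‖P a0 (NormedSpace.exp ((-((r : ℂ) * v)⁻¹) • Z) u)‖ := by
    filter_upwards [self_mem_nhdsWithin] with r hr
    rw [key]
    rw [norm_smul, Complex.norm_exp]
    have hns : 0 < Complex.normSq ((r : ℂ) * v) :=
      Complex.normSq_pos.mpr (mul_ne_zero (Complex.ofReal_ne_zero.mpr hr.ne') hv0)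
    have hform : ((((r : ℂ) * v)⁻¹) * z a0).re
        = (((r : ℂ) * v).re * (z a0).re + ((r : ℂ) * v).im * (z a0).im)
          / Complex.normSq ((r : ℂ) * v) := by
      rw [Complex.mul_re, Complex.inv_re, Complex.inv_im]
      field_simp
      ring
    have hnum : ((r : ℂ) * v).re * (z a0).re + ((r : ℂ) * v).im * (z a0).im ≤ 0 := by
      simp only [Complex.mul_re, Complex.mul_im, Complex.ofReal_re, Complex.ofReal_im]
      nlinarith [mul_nonneg hr.le (neg_nonneg.mpr hv3)]
    have hre : 0 ≤ ((-(((r : ℂ) * v)⁻¹)) * z a0).re := by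
      rw [neg_mul, Complex.neg_re, hform]
      have := div_nonpos_of_nonpos_of_nonneg hnum hns.le
      linarith
    have h1 : (1 : ℝ) ≤ Real.exp ((-(((r : ℂ) * v)⁻¹)) * z a0).re := Real.one_le_exp hre
    nlinarith [norm_nonneg (P a0 u)]
  have hle : ‖P a0 u‖ ≤ 0 := ge_of_tendsto hnorm hbound
  exact norm_le_zero_iff.mp hle
end

section
/- Let V be a finite-dimensional complex vector space and Z ∈ End(V) a semisimple endomorphism, written Z = Σ_{a=1}^m z_a·P_a where z₁,…,z_m are distinct complex numbers and P₁,…,P_m ∈ End(V) are nonzero projections with P_aP_b = δ_{ab}P_a and P₁+⋯+P_m = id. Let θ₁, θ₂ be real numbers with |θ₁ − θ₂| < π, and let Σ̄ = {s₁e^{iθ₁} + s₂e^{iθ₂} : s₁, s₂ ≥ 0} ∖ {0}. Suppose g ∈ End(V) is invertible and exp(−Z/t)·g·exp(Z/t) → id as t → 0 within H_{θ₁} ∩ H_{θ₂}. Then g − id is nilpotent (so g is unipotent), and the logarithm X = Σ_{n≥1} (−1)^{n−1}(g − id)^n/n (a finite sum) satisfies P_a·X·P_b = 0 for all indices a, b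 with z_a − z_b ∉ Σ̄; that is, X lies in the span of the eigenspaces of ad(Z) corresponding to eigenvalues lying in Σ̄. -/
open Complex Filter Topology

private lemma pow_sum_proj' {A : Type*} [Ring A] [Algebra ℂ A] {m : ℕ} (P : Fin m → A)
    (hmul : ∀ a b, P a * P b = if a = b then P a else 0)
    (hsum : ∑ a, P a = 1) (c : Fin m → ℂ) (n : ℕ) :
    (∑ a, c a • P a) ^ n = ∑ a, (c a) ^ n • P a := by
  induction n with
  | zero => simp [hsum]
  | succ n ih =>
    rw [pow_succ, ih, Finset.sum_mul_sum]
    simp only [smul_mul_smul_comm, hmul]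
    rw [Finset.sum_comm]
    refine Finset.sum_congr rfl fun b _ => ?_
    rw [Finset.sum_eq_single b]
    · simp [pow_succ, mul_comm, smul_smul]
    · intro a _ hab; simp [if_neg hab]
    · simp

private lemma exp_sum_proj' {A : Type*} [NormedRing A] [NormedAlgebra ℂ A] [CompleteSpace A]
    {m : ℕ} (P : Fin m → A)
    (hmul : ∀ a b, P a * P b = if a = b then P a else 0)
    (hsum : ∑ a, P a = 1) (c : Fin m → ℂ) :
    NormedSpace.exp (∑ a, c a • P a) = ∑ a, Complex.exp (c a) • P a := by
  rw [NormedSpace.exp_eq_tsum ℂ]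
  have h1 : ∀ n : ℕ, ((n.factorial : ℂ))⁻¹ • (∑ a, c a • P a) ^ n
      = ∑ a, (((n.factorial : ℂ))⁻¹ * (c a) ^ n) • P a := by
    intro n
    rw [pow_sum_proj' P hmul hsum, Finset.smul_sum]
    simp [smul_smul]
  simp only [h1]
  rw [Summable.tsum_finsetSum]
  · refine Finset.sum_congr rfl fun a _ => ?_
    rw [Summable.tsum_smul_const]
    · congr 1
      rw [Complex.exp_eq_exp_ℂ, NormedSpace.exp_eq_tsum ℂ]
      simp [smul_eq_mul]
    · simpa [smul_eq_mul] using NormedSpace.expSeries_summable' (𝕂 := ℂ) (c a)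
  · intro a _
    apply Summable.smul_const
    simpa [smul_eq_mul] using NormedSpace.expSeries_summable' (𝕂 := ℂ) (c a)

private lemma geoAux' (θ₁ θ₂ : ℝ) (hle : θ₁ ≤ θ₂) (hθ : θ₂ - θ₁ < Real.pi) (w : ℂ)
    (h : ∀ φ : ℝ, |φ - θ₁| < Real.pi/2 → |φ - θ₂| < Real.pi/2 →
      0 < (w * Complex.exp (-(φ:ℂ) * Complex.I)).re) :
    (∃ s₁ s₂ : ℝ, 0 ≤ s₁ ∧ 0 ≤ s₂ ∧
      w = (s₁ : ℂ) * Complex.exp ((θ₁:ℂ) * Complex.I) + (s₂ : ℂ) * Complex.exp ((θ₂:ℂ) * Complex.I))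
    ∧ w ≠ 0 := by
  have pi_pos := Real.pi_pos
  have hw0 : w ≠ 0 := by
    intro h0
    have := h ((θ₁+θ₂)/2) (by rw [abs_lt]; constructor <;> nlinarith)
      (by rw [abs_lt]; constructor <;> nlinarith)
    rw [h0] at this; simp at this
  set x := w.re with hx; set y := w.im with hy
  have hf : ∀ φ : ℝ, (w * Complex.exp (-(φ:ℂ) * Complex.I)).re
      = x * Real.cos φ + y * Real.sin φ := by
    intro φ
    have : (-(φ:ℂ) * Complex.I) = ((-φ : ℝ) : ℂ) * Complex.I := by push_cast; ring
    rw [this, Complex.mul_re, Complex.exp_ofReal_mul_I_re, Complex.exp_ofReal_mul_I_im]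
    simp [Real.cos_neg, Real.sin_neg, hx, hy]
  set f : ℝ → ℝ := fun φ => x * Real.cos φ + y * Real.sin φ with hfdef
  have hpos : ∀ φ ∈ Set.Ioo (θ₂ - Real.pi/2) (θ₁ + Real.pi/2), 0 < f φ := by
    rintro φ ⟨h1, h2⟩
    have h3 := h φ (by rw [abs_lt]; constructor <;> nlinarith)
      (by rw [abs_lt]; constructor <;> nlinarith)
    rw [hf] at h3; exact h3
  have hαβ : θ₂ - Real.pi/2 < θ₁ + Real.pi/2 := by linarith
  have hcont : Continuous f := by fun_prop
  have hA : 0 ≤ f (θ₂ - Real.pi/2) := by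
    have ht : Tendsto f (𝓝[>] (θ₂ - Real.pi/2)) (𝓝 (f (θ₂ - Real.pi/2))) :=
      (hcont.tendsto _).mono_left nhdsWithin_le_nhds
    refine ge_of_tendsto ht ?_
    filter_upwards [Ioo_mem_nhdsGT_of_mem ⟨le_refl _, hαβ⟩] with φ hφ using (hpos φ hφ).le
  have hB : 0 ≤ f (θ₁ + Real.pi/2) := by
    have ht : Tendsto f (𝓝[<] (θ₁ + Real.pi/2)) (𝓝 (f (θ₁ + Real.pi/2))) :=
      (hcont.tendsto _).mono_left nhdsWithin_le_nhds
    refine ge_of_tendsto ht ?_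
    filter_upwards [Ioo_mem_nhdsLT_of_mem ⟨hαβ, le_refl _⟩] with φ hφ using (hpos φ hφ).le
  have hA' : 0 ≤ x * Real.sin θ₂ - y * Real.cos θ₂ := by
    have := hA
    rw [hfdef] at this
    simp only [Real.cos_sub, Real.sin_sub, Real.cos_pi_div_two, Real.sin_pi_div_two] at this
    linarith
  have hB' : 0 ≤ y * Real.cos θ₁ - x * Real.sin θ₁ := by
    have := hB
    rw [hfdef] at this
    simp only [Real.cos_add, Real.sin_add, Real.cos_pi_div_two, Real.sin_pi_div_two] at this
    linarith
  refine ⟨?_, hw0⟩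
  have hexp : ∀ θ : ℝ, Complex.exp ((θ:ℂ) * Complex.I) = Complex.mk (Real.cos θ) (Real.sin θ) := by
    intro θ
    apply Complex.ext
    · exact Complex.exp_ofReal_mul_I_re θ
    · exact Complex.exp_ofReal_mul_I_im θ
  rcases eq_or_lt_of_le hle with heq | hlt
  · subst heq
    have h0 : x * Real.sin θ₁ - y * Real.cos θ₁ = 0 := by linarith
    have hC : 0 < x * Real.cos θ₁ + y * Real.sin θ₁ := by
      have h3 := h θ₁ (by simpa using by positivity) (by simpa using by positivity)
      rw [hf] at h3; exact h3
    have pyth := Real.sin_sq_add_cos_sq θ₁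
    refine ⟨x * Real.cos θ₁ + y * Real.sin θ₁, 0, hC.le, le_refl _, ?_⟩
    apply Complex.ext
    · simp only [hexp, Complex.add_re, Complex.mul_re, Complex.ofReal_re, Complex.ofReal_im, ← hx]
      linear_combination Real.sin θ₁ * h0 - x * pyth
    · simp only [hexp, Complex.add_im, Complex.mul_im, Complex.ofReal_re, Complex.ofReal_im, ← hy]
      linear_combination (-Real.cos θ₁) * h0 - y * pyth
  · have hs : 0 < Real.sin (θ₂ - θ₁) := Real.sin_pos_of_pos_of_lt_pi (by linarith) hθ
    have hss : Real.sin (θ₂ - θ₁) = Real.sin θ₂ * Real.cos θ₁ - Real.cos θ₂ * Real.sin θ₁ :=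
      Real.sin_sub θ₂ θ₁
    refine ⟨(x * Real.sin θ₂ - y * Real.cos θ₂) / Real.sin (θ₂ - θ₁),
            (y * Real.cos θ₁ - x * Real.sin θ₁) / Real.sin (θ₂ - θ₁),
            div_nonneg hA' hs.le, div_nonneg hB' hs.le, ?_⟩
    apply Complex.ext
    · simp only [hexp, Complex.add_re, Complex.mul_re, Complex.ofReal_re, Complex.ofReal_im, ← hx]
      field_simp
      linear_combination x * hss
    · simp only [hexp, Complex.add_im, Complex.mul_im, Complex.ofReal_re, Complex.ofReal_im, ← hy]
      field_simp
      linear_combination y * hss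

private lemma geo' (θ₁ θ₂ : ℝ) (hθ : |θ₁ - θ₂| < Real.pi) (w : ℂ)
    (h : ∀ φ : ℝ, |φ - θ₁| < Real.pi/2 → |φ - θ₂| < Real.pi/2 →
      0 < (w * Complex.exp (-(φ:ℂ) * Complex.I)).re) :
    (∃ s₁ s₂ : ℝ, 0 ≤ s₁ ∧ 0 ≤ s₂ ∧
      w = (s₁ : ℂ) * Complex.exp ((θ₁:ℂ) * Complex.I) + (s₂ : ℂ) * Complex.exp ((θ₂:ℂ) * Complex.I))
    ∧ w ≠ 0 := by
  rw [abs_lt] at hθ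
  rcases le_total θ₁ θ₂ with hle | hle
  · exact geoAux' θ₁ θ₂ hle (by linarith) w h
  · obtain ⟨⟨s₂, s₁, h2, h1, heq⟩, hne⟩ :=
      geoAux' θ₂ θ₁ hle (by linarith) w (fun φ a b => h φ b a)
    exact ⟨⟨s₁, s₂, h1, h2, by rw [heq]; ring⟩, hne⟩

/-- If `Z = Σ z_a • P_a` is a semisimple endomorphism of a finite-dimensional
complex vector space, `g` is invertible, and `exp (-Z/t) g exp (Z/t) → 1` as `t → 0` in
`H_{θ₁} ∩ H_{θ₂}` (with `|θ₁ - θ₂| < π`), then `g - 1` is nilpotent and the logarithm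
`X = Σ_{n ≥ 1} (-1)^{n-1} (g-1)^n / n` (a finite sum) satisfies `P_a X P_b = 0` whenever
`z_a - z_b` does not lie in the closed convex sector bounded by the two rays. -/
theorem stmt2 {V : Type*} [NormedAddCommGroup V] [NormedSpace ℂ V] [FiniteDimensional ℂ V]
    {m : ℕ} (z : Fin m → ℂ) (hz : Function.Injective z)
    (P : Fin m → V →L[ℂ] V) (hPne : ∀ a, P a ≠ 0)
    (hmul : ∀ a b, P a * P b = if a = b then P a else 0)
    (hsum : ∑ a, P a = 1)
    (Z : V →L[ℂ] V) (hZ : Z = ∑ a, z a • P a)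
    (θ₁ θ₂ : ℝ) (hθ : |θ₁ - θ₂| < Real.pi)
    (g : V →L[ℂ] V) (hg : IsUnit g)
    (hconv : Tendsto
      (fun t : ℂ => NormedSpace.exp ((-t⁻¹) • Z) * g * NormedSpace.exp (t⁻¹ • Z))
      (𝓝[{t : ℂ | 0 < (t * Complex.exp (-(θ₁ : ℂ) * Complex.I)).re} ∩
          {t : ℂ | 0 < (t * Complex.exp (-(θ₂ : ℂ) * Complex.I)).re}] 0) (𝓝 1)) :
    IsNilpotent (g - 1) ∧
    ∀ N : ℕ, (g - 1) ^ N = 0 →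
      ∀ a b, z a - z b ∉ ({w : ℂ | ∃ s₁ s₂ : ℝ, 0 ≤ s₁ ∧ 0 ≤ s₂ ∧
          w = (s₁ : ℂ) * Complex.exp ((θ₁ : ℂ) * Complex.I)
            + (s₂ : ℂ) * Complex.exp ((θ₂ : ℂ) * Complex.I)} \ {0}) →
        P a * (∑ n ∈ Finset.Ico 1 N, ((-1 : ℂ) ^ (n - 1) / (n : ℂ)) • (g - 1) ^ n) * P b
          = 0 := by
  have pi_pos := Real.pi_pos
  set S : Set ℂ := {t : ℂ | 0 < (t * Complex.exp (-(θ₁ : ℂ) * Complex.I)).re} ∩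
      {t : ℂ | 0 < (t * Complex.exp (-(θ₂ : ℂ) * Complex.I)).re} with hS
  -- the ray t = ε e^{iφ} enters S
  have hray : ∀ φ : ℝ, |φ - θ₁| < Real.pi/2 → |φ - θ₂| < Real.pi/2 →
      Tendsto (fun ε : ℝ => (ε : ℂ) * Complex.exp ((φ:ℂ) * Complex.I))
        (𝓝[>] (0:ℝ)) (𝓝[S] 0) := by
    intro φ h1 h2
    rw [tendsto_nhdsWithin_iff]
    constructor
    · have : Tendsto (fun ε : ℝ => (ε : ℂ) * Complex.exp ((φ:ℂ) * Complex.I)) (𝓝 (0:ℝ))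
          (𝓝 ((0:ℂ) * Complex.exp ((φ:ℂ) * Complex.I))) :=
        (Complex.continuous_ofReal.mul continuous_const).tendsto' 0 _ (by simp)
      simpa using this.mono_left nhdsWithin_le_nhds
    · filter_upwards [self_mem_nhdsWithin] with ε (hε : (0:ℝ) < ε)
      have key : ∀ θ : ℝ, |φ - θ| < Real.pi/2 →
          0 < ((ε : ℂ) * Complex.exp ((φ:ℂ) * Complex.I) * Complex.exp (-(θ:ℂ) * Complex.I)).re := by
        intro θ hφθ
        have heq : (ε : ℂ) * Complex.exp ((φ:ℂ) * Complex.I) * Complex.exp (-(θ:ℂ) * Complex.I)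
            = (ε : ℂ) * Complex.exp (((φ - θ : ℝ) : ℂ) * Complex.I) := by
          rw [mul_assoc, ← Complex.exp_add]
          congr 2
          push_cast; ring
        rw [heq, Complex.re_ofReal_mul, Complex.exp_ofReal_mul_I_re]
        exact mul_pos hε (Real.cos_pos_of_mem_Ioo (abs_lt.mp hφθ |> fun h => ⟨by linarith [h.1], h.2⟩))
      exact ⟨key θ₁ h1, key θ₂ h2⟩
  have hmid₁ : |(θ₁+θ₂)/2 - θ₁| < Real.pi/2 := by
    rw [abs_lt] at hθ ⊢; constructor <;> linarith
  have hmid₂ : |(θ₁+θ₂)/2 - θ₂| < Real.pi/2 := by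
    rw [abs_lt] at hθ ⊢; constructor <;> linarith
  haveI hNB : (𝓝[S] (0:ℂ)).NeBot := (hray _ hmid₁ hmid₂).neBot
  -- block limits
  have hblock : ∀ a b, Tendsto
      (fun t : ℂ => Complex.exp (t⁻¹ * (z b - z a)) • (P a * g * P b))
      (𝓝[S] 0) (𝓝 (if a = b then P a else 0)) := by
    intro a b
    have hPl : ∀ (c : Fin m → ℂ) a, P a * (∑ d, Complex.exp (c d) • P d)
        = Complex.exp (c a) • P a := by
      intro c a
      rw [Finset.mul_sum, Finset.sum_eq_single a]
      · rw [mul_smul_comm, hmul, if_pos rfl]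
      · intro d _ hd; rw [mul_smul_comm, hmul, if_neg (Ne.symm hd), smul_zero]
      · simp
    have hPr : ∀ (c : Fin m → ℂ) b, (∑ d, Complex.exp (c d) • P d) * P b
        = Complex.exp (c b) • P b := by
      intro c b
      rw [Finset.sum_mul, Finset.sum_eq_single b]
      · rw [smul_mul_assoc, hmul, if_pos rfl]
      · intro d _ hd; rw [smul_mul_assoc, hmul, if_neg hd, smul_zero]
      · simp
    have hfun : ∀ t : ℂ,
        P a * (NormedSpace.exp ((-t⁻¹) • Z) * g * NormedSpace.exp (t⁻¹ • Z)) * P b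
        = Complex.exp (t⁻¹ * (z b - z a)) • (P a * g * P b) := by
      intro t
      have h1 : (-t⁻¹) • Z = ∑ c, (-(t⁻¹ * z c)) • P c := by
        rw [hZ, Finset.smul_sum]; simp [smul_smul, neg_mul]
      have h2 : (t⁻¹ : ℂ) • Z = ∑ c, (t⁻¹ * z c) • P c := by
        rw [hZ, Finset.smul_sum]; simp [smul_smul]
      rw [h1, h2, exp_sum_proj' P hmul hsum, exp_sum_proj' P hmul hsum]
      calc P a * ((∑ d, Complex.exp (-(t⁻¹ * z d)) • P d) * g
              * (∑ d, Complex.exp (t⁻¹ * z d) • P d)) * P b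
          = (P a * (∑ d, Complex.exp (-(t⁻¹ * z d)) • P d)) * g
              * ((∑ d, Complex.exp (t⁻¹ * z d) • P d) * P b) := by
            noncomm_ring
        _ = (Complex.exp (-(t⁻¹ * z a)) • P a) * g * (Complex.exp (t⁻¹ * z b) • P b) := by
            rw [hPl (fun d => -(t⁻¹ * z d)), hPr]
        _ = (Complex.exp (-(t⁻¹ * z a)) * Complex.exp (t⁻¹ * z b)) • (P a * g * P b) := by
            simp [smul_mul_assoc, mul_smul_comm, smul_smul, mul_comm]
        _ = Complex.exp (t⁻¹ * (z b - z a)) • (P a * g * P b) := by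
            rw [← Complex.exp_add]; congr 1; ring
    have h2 : Tendsto (fun t : ℂ =>
        P a * (NormedSpace.exp ((-t⁻¹) • Z) * g * NormedSpace.exp (t⁻¹ • Z)) * P b)
        (𝓝[S] 0) (𝓝 (P a * 1 * P b)) :=
      (tendsto_const_nhds.mul hconv).mul tendsto_const_nhds
    rw [mul_one, hmul] at h2
    exact h2.congr hfun
  -- key step 1 : nonzero blocks of g - 1 see positive real part in all admissible directions
  have key1 : ∀ a b, P a * (g - 1) * P b ≠ 0 →
      ∀ φ : ℝ, |φ - θ₁| < Real.pi/2 → |φ - θ₂| < Real.pi/2 →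
        0 < ((z a - z b) * Complex.exp (-(φ:ℂ) * Complex.I)).re := by
    intro a b hne φ h1 h2
    by_cases hab : a = b
    · exfalso
      apply hne
      subst hab
      have hb := hblock a a
      rw [if_pos rfl] at hb
      have hconst : (fun t : ℂ => Complex.exp (t⁻¹ * (z a - z a)) • (P a * g * P a))
          = fun _ : ℂ => P a * g * P a := by
        funext t; simp
      rw [hconst] at hb
      have : P a * g * P a = P a := tendsto_nhds_unique tendsto_const_nhds hb
      calc P a * (g - 1) * P a = P a * g * P a - P a * 1 * P a := by noncomm_ring
        _ = P a - P a := by rw [this, mul_one, hmul, if_pos rfl]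
        _ = 0 := sub_self _
    · have hBne : P a * g * P b ≠ 0 := by
        intro h0
        apply hne
        have : P a * (g - 1) * P b = P a * g * P b - P a * P b := by noncomm_ring
        rw [this, h0, hmul, if_neg hab, sub_zero]
      by_contra hle0
      push_neg at hle0
      have hge : 0 ≤ ((z b - z a) * Complex.exp (-(φ:ℂ) * Complex.I)).re := by
        have hneg : ((z b - z a) * Complex.exp (-(φ:ℂ) * Complex.I))
            = -((z a - z b) * Complex.exp (-(φ:ℂ) * Complex.I)) := by ring
        rw [hneg, Complex.neg_re]; linarith
      have hb := hblock a b
      rw [if_neg hab] at hb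
      have hcomp := hb.comp (hray φ h1 h2)
      have hnorm := hcomp.norm
      rw [norm_zero] at hnorm
      have hBpos : 0 < ‖P a * g * P b‖ := norm_pos_iff.mpr hBne
      have hev := hnorm.eventually_lt_const hBpos
      have hev2 : ∀ᶠ ε : ℝ in 𝓝[>] (0:ℝ), ‖P a * g * P b‖ ≤
          ‖Complex.exp ((((ε:ℂ) * Complex.exp ((φ:ℂ) * Complex.I))⁻¹) * (z b - z a))
            • (P a * g * P b)‖ := by
        filter_upwards [self_mem_nhdsWithin] with ε (hε : (0:ℝ) < ε)
        have hexp_eq : (((ε:ℂ) * Complex.exp ((φ:ℂ) * Complex.I))⁻¹) * (z b - z a)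
            = ((ε⁻¹ : ℝ) : ℂ) * ((z b - z a) * Complex.exp (-(φ:ℂ) * Complex.I)) := by
          rw [mul_inv, ← Complex.exp_neg]
          push_cast
          ring_nf
        rw [hexp_eq]
        rw [norm_smul (Complex.exp (((ε⁻¹ : ℝ) : ℂ) * ((z b - z a) * Complex.exp (-(φ:ℂ) * Complex.I)))) (P a * g * P b)]
        rw [Complex.norm_exp, Complex.re_ofReal_mul]
        have h0le : 0 ≤ ε⁻¹ * ((z b - z a) * Complex.exp (-(φ:ℂ) * Complex.I)).re :=
          mul_nonneg (by positivity) hge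
        nlinarith [Real.exp_le_exp.mpr h0le, Real.exp_zero, hBpos,
          mul_le_mul_of_nonneg_right (Real.exp_le_exp.mpr h0le) hBpos.le]
      obtain ⟨ε, hlt, hge'⟩ := (hev.and hev2).exists
      exact absurd hlt (not_lt.mpr hge')
  -- splitting products through the resolution of identity
  have hsplit : ∀ (n : ℕ) a b, P a * ((g-1) * (g-1)^n) * P b
      = ∑ c, (P a * (g-1) * P c) * (P c * (g-1)^n * P b) := by
    intro n a b
    have : (g-1) * (g-1)^n = (g-1) * (∑ c, P c) * (g-1)^n := by rw [hsum, mul_one]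
    rw [this]
    simp only [Finset.mul_sum, Finset.sum_mul]
    refine Finset.sum_congr rfl fun c _ => ?_
    have hPc : P c = P c * P c := by rw [hmul, if_pos rfl]
    conv_lhs => rw [hPc]
    noncomm_ring
  have keyn : ∀ n, 1 ≤ n → ∀ a b, P a * (g - 1)^n * P b ≠ 0 →
      ∀ φ : ℝ, |φ - θ₁| < Real.pi/2 → |φ - θ₂| < Real.pi/2 →
        0 < ((z a - z b) * Complex.exp (-(φ:ℂ) * Complex.I)).re := by
    intro n hn
    induction n, hn using Nat.le_induction with
    | base =>
      intro a b hne φ h1 h2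
      rw [pow_one] at hne
      exact key1 a b hne φ h1 h2
    | succ n hn ih =>
      intro a b hne φ h1 h2
      rw [pow_succ'] at hne
      rw [hsplit n a b] at hne
      obtain ⟨c, _, hcne⟩ := Finset.exists_ne_zero_of_sum_ne_zero hne
      have hl : P a * (g-1) * P c ≠ 0 := left_ne_zero_of_mul hcne
      have hr : P c * (g-1)^n * P b ≠ 0 := right_ne_zero_of_mul hcne
      have e1 := key1 a c hl φ h1 h2
      have e2 := ih c b hr φ h1 h2
      have : (z a - z b) * Complex.exp (-(φ:ℂ) * Complex.I)
          = (z a - z c) * Complex.exp (-(φ:ℂ) * Complex.I)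
            + (z c - z b) * Complex.exp (-(φ:ℂ) * Complex.I) := by ring
      rw [this, Complex.add_re]
      linarith
  -- nilpotency via a strictly decreasing linear functional
  set φ₀ : ℝ := (θ₁ + θ₂)/2 with hφ₀
  set r : Fin m → ℝ := fun c => ((z c) * Complex.exp (-(φ₀:ℂ) * Complex.I)).re with hr
  have hstep : ∀ n, 1 ≤ n → ∀ a b, P a * (g - 1)^n * P b ≠ 0 → r b < r a := by
    intro n hn a b hne
    have := keyn n hn a b hne φ₀ hmid₁ hmid₂
    have hsub : (z a - z b) * Complex.exp (-(φ₀:ℂ) * Complex.I)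
        = z a * Complex.exp (-(φ₀:ℂ) * Complex.I) - z b * Complex.exp (-(φ₀:ℂ) * Complex.I) := by
      ring
    rw [hsub, Complex.sub_re] at this
    simp only [hr]
    linarith
  have hcount : ∀ n, 1 ≤ n → ∀ a b, P a * (g - 1)^n * P b ≠ 0 →
      n ≤ (Finset.univ.filter (fun c => r c < r a)).card := by
    intro n hn
    induction n, hn using Nat.le_induction with
    | base =>
      intro a b hne
      have hb := hstep 1 le_rfl a b hne
      have : b ∈ Finset.univ.filter (fun c => r c < r a) := by
        simp [hb]
      calc 1 ≤ ({b} : Finset (Fin m)).card := by simp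
        _ ≤ _ := Finset.card_le_card (by simp [this])
    | succ n hn ih =>
      intro a b hne
      rw [pow_succ', hsplit n a b] at hne
      obtain ⟨c, _, hcne⟩ := Finset.exists_ne_zero_of_sum_ne_zero hne
      have hl : P a * (g-1) * P c ≠ 0 := left_ne_zero_of_mul hcne
      have hr' : P c * (g-1)^n * P b ≠ 0 := right_ne_zero_of_mul hcne
      have hca : r c < r a := by
        have := hstep 1 le_rfl a c (by rwa [pow_one])
        exact this
      have hn' := ih c b hr'
      have hsub : insert c (Finset.univ.filter (fun d => r d < r c))
          ⊆ Finset.univ.filter (fun d => r d < r a) := by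
        intro d hd
        rcases Finset.mem_insert.mp hd with h | h
        · subst h; simp [hca]
        · simp only [Finset.mem_filter, Finset.mem_univ, true_and] at h ⊢
          linarith
      have hninsert : c ∉ Finset.univ.filter (fun d => r d < r c) := by
        simp
      calc n + 1 ≤ (Finset.univ.filter (fun d => r d < r c)).card + 1 := by omega
        _ = (insert c (Finset.univ.filter (fun d => r d < r c))).card := by
            rw [Finset.card_insert_of_notMem hninsert]
        _ ≤ _ := Finset.card_le_card hsub
  have hblocks0 : ∀ a b, P a * (g - 1)^m * P b = 0 := by
    intro a b
    by_contra hne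
    have hm : 1 ≤ m := Nat.one_le_iff_ne_zero.mpr (by rintro rfl; exact a.elim0)
    have hcard := hcount m hm a b hne
    have hsub : Finset.univ.filter (fun c => r c < r a) ⊆ Finset.univ.erase a := by
      intro c hc
      simp only [Finset.mem_filter, Finset.mem_univ, true_and] at hc
      simp only [Finset.mem_erase, Finset.mem_univ, and_true]
      intro h; subst h; exact lt_irrefl _ hc
    have := Finset.card_le_card hsub
    rw [Finset.card_erase_of_mem (Finset.mem_univ a), Finset.card_univ, Fintype.card_fin] at this
    omega
  have hnil : (g - 1)^m = 0 := by
    calc (g-1)^m = 1 * (g-1)^m * 1 := by rw [one_mul, mul_one]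
      _ = (∑ a, P a) * (g-1)^m * (∑ b, P b) := by rw [hsum]
      _ = ∑ a, ∑ b, P a * (g-1)^m * P b := by
          simp only [Finset.sum_mul, Finset.mul_sum]
          rw [Finset.sum_comm]
      _ = 0 := by simp [hblocks0]
  refine ⟨⟨m, hnil⟩, ?_⟩
  intro N _ a b hnotin
  rw [Finset.mul_sum, Finset.sum_mul]
  refine Finset.sum_eq_zero fun n hn => ?_
  have hn1 : 1 ≤ n := (Finset.mem_Ico.mp hn).1
  have hblock0 : P a * (g - 1)^n * P b = 0 := by
    by_contra hne
    have hpos := keyn n hn1 a b hne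
    obtain ⟨hmem, hne0⟩ := geo' θ₁ θ₂ hθ (z a - z b) hpos
    exact hnotin ⟨hmem, by simpa using hne0⟩
  calc P a * (((-1:ℂ)^(n-1) / (n:ℂ)) • (g-1)^n) * P b
      = ((-1:ℂ)^(n-1) / (n:ℂ)) • (P a * (g-1)^n * P b) := by
        rw [mul_smul_comm, smul_mul_assoc]
    _ = 0 := by rw [hblock0, smul_zero]
end

section
/- (Watson's Lemma.) Let φ : [0,∞) → ℂ be a measurable function such that |φ(z)| ≤ C·e^{cz} for all z ≥ 0 and some constants C, c > 0, and suppose φ is analytic at 0: there exist R > 0 and complex numbers a₀, a₁, a₂, … such that φ(z) = Σ_{n≥0} a_n·z^n/n! for all z ∈ [0, R), the series converging there. Then for every integer N ≥ 0 and every δ ∈ (0, π/2) there exist constants K > 0 and ε > 0 such that for all t ∈ ℂ with 0 < |t| < ε and |arg(t)| ≤ π/2 − δ, the integral Y(t) = ∫₀^∞ φ(z)·e^{−z/t} dz converges absolutely and |Y(t) − Σ_{n=0}^{N−1} a_n·t^{n+1}| ≤ K·|t|^{N+1}. In particular, Y(t) has the asymptotic expansion Σ_{n≥0} a_n·t^{n+1}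 as t → 0 in closed subsectors of the half-plane Re(t) > 0. -/
open Complex Filter Topology MeasureTheory

open Set


lemma watson_pow_le (x : ℝ) (hx : 0 ≤ x) (n : ℕ) :
    x ^ n ≤ n.factorial * Real.exp x := by
  have h := Real.sum_le_exp_of_nonneg hx (n + 1)
  have h2 : x ^ n / n.factorial ≤ ∑ i ∈ Finset.range (n+1), x ^ i / i.factorial :=
    Finset.single_le_sum (f := fun i => x ^ i / (i.factorial : ℝ))
      (fun i _ => by positivity) (Finset.self_mem_range_succ n)
  have hn : (0:ℝ) < n.factorial := by positivity
  calc x ^ n = (x ^ n / n.factorial) * n.factorial := by field_simp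
  _ ≤ Real.exp x * n.factorial := mul_le_mul_of_nonneg_right (h2.trans h) hn.le
  _ = n.factorial * Real.exp x := by ring

lemma watson_abs_cexp (b : ℂ) (z : ℝ) :
    ‖Complex.exp (-b * z)‖ = Real.exp (-(b.re * z)) := by
  rw [Complex.norm_exp]; congr 1; simp [Complex.neg_re, Complex.mul_re]

lemma watson_integrable (g : ℝ → ℂ) (hg : Measurable g) (C c : ℝ)
    (hbound : ∀ z : ℝ, 0 ≤ z → ‖g z‖ ≤ C * Real.exp (c * z))
    (b : ℂ) (hb : c < b.re) :
    IntegrableOn (fun z : ℝ => g z * Complex.exp (-b * z)) (Ioi (0:ℝ)) := by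
  have hmeas : AEStronglyMeasurable (fun z : ℝ => g z * Complex.exp (-b * z))
      (volume.restrict (Ioi (0:ℝ))) := by
    apply Measurable.aestronglyMeasurable; fun_prop
  have hint : IntegrableOn (fun z : ℝ => C * Real.exp (-(b.re - c) * z)) (Ioi (0:ℝ)) :=
    (exp_neg_integrableOn_Ioi 0 (by linarith)).const_mul C
  apply Integrable.mono' hint hmeas
  filter_upwards [ae_restrict_mem measurableSet_Ioi] with z hz
  rw [norm_mul, watson_abs_cexp]
  have h1 : ‖g z‖ * Real.exp (-(b.re * z))
      ≤ (C * Real.exp (c * z)) * Real.exp (-(b.re * z)) :=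
    mul_le_mul_of_nonneg_right (hbound z hz.out.le) (Real.exp_nonneg _)
  refine h1.trans (le_of_eq ?_)
  rw [mul_assoc, ← Real.exp_add]; ring_nf

lemma watson_integrable_pow (n : ℕ) (b : ℂ) (hb : 0 < b.re) :
    IntegrableOn (fun z : ℝ => (z:ℂ)^n * Complex.exp (-b * z)) (Ioi (0:ℝ)) := by
  apply watson_integrable _ (by fun_prop) (n.factorial * (2/b.re)^n) (b.re/2) _ b
    (by linarith)
  intro z hz
  have h := watson_pow_le (b.re/2 * z) (by positivity) n
  have h2 : ‖(z:ℂ)^n‖ = z ^ n := by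
    rw [norm_pow, Complex.norm_real, Real.norm_eq_abs, _root_.abs_of_nonneg hz]
  rw [h2]
  have h3 : z ^ n = (2/b.re)^n * (b.re/2*z)^n := by
    rw [← mul_pow, ← mul_assoc, div_mul_div_comm, mul_comm 2 b.re, div_self (by positivity), one_mul]
  rw [h3]
  calc (2/b.re)^n * (b.re/2*z)^n ≤ (2/b.re)^n * (n.factorial * Real.exp (b.re/2*z)) := by
        apply mul_le_mul_of_nonneg_left h (by positivity)
  _ = n.factorial * (2/b.re)^n * Real.exp (b.re/2*z) := by ring

lemma watson_tendsto_pow_cexp (n : ℕ) (b : ℂ) (hb : 0 < b.re) :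
    Tendsto (fun x : ℝ => (x:ℂ)^n * Complex.exp (-b * x)) atTop (𝓝 0) := by
  have hbd : ∀ᶠ x : ℝ in atTop, ‖(x:ℂ)^n * Complex.exp (-b * x)‖
      ≤ (1/b.re^n) * ((b.re * x)^n * Real.exp (-(b.re * x))) := by
    filter_upwards [eventually_ge_atTop (0:ℝ)] with x hx
    rw [norm_mul, watson_abs_cexp, norm_pow, Complex.norm_real, Real.norm_eq_abs,
      _root_.abs_of_nonneg hx]
    apply le_of_eq
    rw [mul_pow]; field_simp
  have h1 : Tendsto (fun x : ℝ => b.re * x) atTop atTop :=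
    Tendsto.const_mul_atTop hb tendsto_id
  have h2 := (Real.tendsto_pow_mul_exp_neg_atTop_nhds_zero n).comp h1
  have h3 := h2.const_mul (1/b.re^n)
  have h4 : Tendsto (fun x : ℝ => (1/b.re^n) * ((b.re * x)^n * Real.exp (-(b.re * x))))
      atTop (𝓝 0) := by simpa [Function.comp] using h3
  exact squeeze_zero_norm' hbd h4

lemma watson_laplace_pow (n : ℕ) (b : ℂ) (hb : 0 < b.re) :
    ∫ z in Ioi (0:ℝ), (z:ℂ)^n * Complex.exp (-b * z) = n.factorial / b ^ (n+1) := by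
  have hb0 : b ≠ 0 := fun h => by simp [h] at hb
  have hexpC : ∀ w : ℂ, HasDerivAt (fun z : ℂ => Complex.exp (-b * z))
      (Complex.exp (-b * w) * -b) w := by
    intro w
    simpa using ((hasDerivAt_id w).const_mul (-b)).cexp
  have hexp : ∀ x : ℝ, HasDerivAt (fun z : ℝ => Complex.exp (-b * z))
      (Complex.exp (-b * x) * -b) x := fun x => (hexpC x).comp_ofReal
  induction n with
  | zero =>
    simp only [pow_zero, one_mul, Nat.factorial_zero, Nat.cast_one, pow_one]
    have := integral_Ioi_of_hasDerivAt_of_tendsto' (a := (0:ℝ))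
      (f := fun z : ℝ => -Complex.exp (-b * z) / b)
      (f' := fun z : ℝ => Complex.exp (-b * z)) (m := 0)
      (fun x _ => by
        have := ((hexp x).neg).div_const b
        refine this.congr_deriv ?_
        simp [hb0])
      (by simpa using watson_integrable_pow 0 b hb)
      (by
        have := ((watson_tendsto_pow_cexp 0 b hb).neg).div_const b
        simpa using this)
    rw [this]
    simp [neg_div]
  | succ n ih =>
    have hF : ∀ x : ℝ, x ∈ Ici (0:ℝ) → HasDerivAt
        (fun z : ℝ => (z:ℂ)^(n+1) * Complex.exp (-b * z))
        ((n+1 : ℂ) * (x:ℂ)^n * Complex.exp (-b * x)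
          + (-b) * ((x:ℂ)^(n+1) * Complex.exp (-b * x))) x := by
      intro x _
      have hpow : HasDerivAt (fun z : ℝ => ((z:ℂ))^(n+1)) ((n+1 : ℂ) * (x:ℂ)^n) x := by
        simpa using (hasDerivAt_pow (n+1) ((x:ℝ):ℂ)).comp_ofReal
      have := hpow.mul (hexp x)
      refine this.congr_deriv ?_
      ring
    have hint : IntegrableOn (fun x : ℝ =>
        (n+1 : ℂ) * (x:ℂ)^n * Complex.exp (-b * x)
          + (-b) * ((x:ℂ)^(n+1) * Complex.exp (-b * x))) (Ioi (0:ℝ)) := by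
      apply Integrable.add
      · simpa [mul_assoc] using (watson_integrable_pow n b hb).const_mul (n+1 : ℂ)
      · exact (watson_integrable_pow (n+1) b hb).const_mul (-b)
    have htend : Tendsto (fun z : ℝ => (z:ℂ)^(n+1) * Complex.exp (-b * z)) atTop (𝓝 0) :=
      watson_tendsto_pow_cexp (n+1) b hb
    have key := integral_Ioi_of_hasDerivAt_of_tendsto' hF hint htend
    simp only [Complex.ofReal_zero, zero_pow (Nat.succ_ne_zero n), zero_mul, sub_zero] at key
    rw [integral_add (by simpa [mul_assoc] using (watson_integrable_pow n b hb).const_mul (n+1 : ℂ))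
      ((watson_integrable_pow (n+1) b hb).const_mul (-b))] at key
    simp only [mul_assoc, integral_const_mul, ih] at key
    -- key : (n+1) * (n!/b^(n+1)) + (-b) * ∫ ... = 0
    rw [Nat.factorial_succ]
    push_cast
    rw [eq_div_iff (pow_ne_zero (n+1+1) hb0)]
    have hfact : ((n.factorial:ℂ)/b^(n+1)) * b^(n+1) = (n.factorial:ℂ) :=
      div_mul_cancel₀ _ (pow_ne_zero _ hb0)
    linear_combination (-(b^(n+1)):ℂ) * key + ((n:ℂ)+1) * hfact

lemma watson_integrable_pow_real (N : ℕ) (s : ℝ) (hs : 0 < s) :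
    IntegrableOn (fun z : ℝ => z ^ N * Real.exp (-(s * z))) (Ioi (0:ℝ)) := by
  have hint : IntegrableOn (fun z : ℝ => (N.factorial * (2/s)^N) * Real.exp (-(s/2) * z))
      (Ioi (0:ℝ)) := (exp_neg_integrableOn_Ioi 0 (by linarith)).const_mul _
  apply Integrable.mono' hint (by apply Measurable.aestronglyMeasurable; fun_prop)
  filter_upwards [ae_restrict_mem measurableSet_Ioi] with z hz
  have hz0 : (0:ℝ) ≤ z := hz.out.le
  rw [Real.norm_eq_abs, _root_.abs_of_nonneg (by positivity)]
  have h := watson_pow_le (s/2 * z) (by positivity) N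
  have h3 : z ^ N ≤ N.factorial * (2/s)^N * Real.exp (s/2*z) := by
    have h4 : z ^ N = (2/s)^N * (s/2*z)^N := by
      rw [← mul_pow, ← mul_assoc, div_mul_div_comm, mul_comm 2 s, div_self (by positivity), one_mul]
    rw [h4]
    calc (2/s)^N * (s/2*z)^N ≤ (2/s)^N * (N.factorial * Real.exp (s/2*z)) :=
          mul_le_mul_of_nonneg_left h (by positivity)
    _ = N.factorial * (2/s)^N * Real.exp (s/2*z) := by ring
  calc z ^ N * Real.exp (-(s*z))
      ≤ (N.factorial * (2/s)^N * Real.exp (s/2*z)) * Real.exp (-(s*z)) :=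
        mul_le_mul_of_nonneg_right h3 (Real.exp_nonneg _)
  _ = (N.factorial * (2/s)^N) * Real.exp (-(s/2) * z) := by
        rw [mul_assoc, ← Real.exp_add]; ring_nf

lemma watson_real_laplace_pow (N : ℕ) (s : ℝ) (hs : 0 < s) :
    ∫ z in Ioi (0:ℝ), z ^ N * Real.exp (-(s * z)) = N.factorial / s ^ (N+1) := by
  have h := Real.integral_rpow_mul_exp_neg_mul_Ioi (a := (N:ℝ)+1) (by positivity) hs
  rw [show ((N:ℝ)+1-1) = ((N:ℕ):ℝ) by ring] at h
  simp_rw [Real.rpow_natCast] at h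
  rw [Real.Gamma_nat_eq_factorial] at h
  rw [show ((N:ℝ)+1) = (((N+1:ℕ)):ℝ) by push_cast; ring, Real.rpow_natCast] at h
  rw [h, one_div, inv_pow]
  field_simp

lemma watson_taylor (R : ℝ) (hR : 0 < R) (a : ℕ → ℂ) (φ : ℝ → ℂ)
    (hanal : ∀ z : ℝ, 0 ≤ z → z < R →
      HasSum (fun n : ℕ => a n * (z : ℂ) ^ n / (n.factorial : ℂ)) (φ z)) (N : ℕ) :
    ∃ M : ℝ, 0 ≤ M ∧ ∀ z : ℝ, 0 ≤ z → z ≤ R/2 →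
      ‖φ z - ∑ n ∈ Finset.range N, a n * (z:ℂ)^n / (n.factorial : ℂ)‖
        ≤ M * z ^ N := by
  set q : ℝ := 3*R/4 with hq
  have hq0 : 0 < q := by positivity
  have hsq : Summable (fun n : ℕ => a n * (q:ℂ)^n / (n.factorial : ℂ)) :=
    (hanal q hq0.le (by rw [hq]; linarith)).summable
  have hterm : Tendsto (fun n : ℕ => ‖a n * (q:ℂ)^n / (n.factorial : ℂ)‖) atTop (𝓝 0) := by
    simpa using hsq.tendsto_atTop_zero.norm
  obtain ⟨A, hA⟩ := hterm.bddAbove_range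
  simp only [mem_upperBounds, Set.mem_range, forall_exists_index] at hA
  have hA' : ∀ n : ℕ, ‖a n * (q:ℂ)^n / (n.factorial : ℂ)‖ ≤ A := fun n => hA _ n rfl
  have hA0 : 0 ≤ A := (norm_nonneg _).trans (hA' 0)
  refine ⟨3*A/q^N, by positivity, ?_⟩
  intro z hz0 hz
  set u : ℝ := z/q with hu
  have hu0 : 0 ≤ u := by positivity
  have hu1 : u ≤ 2/3 := by rw [hu, div_le_iff₀ hq0]; rw [hq]; linarith
  have hzq : z = q * u := by rw [hu]; field_simp
  have hsz := hanal z hz0 (by linarith)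
  have hzsum : Summable (fun n : ℕ => a n * (z:ℂ)^n / (n.factorial : ℂ)) := hsz.summable
  have htail : φ z - ∑ n ∈ Finset.range N, a n * (z:ℂ)^n / (n.factorial : ℂ)
      = ∑' i : ℕ, a (i+N) * (z:ℂ)^(i+N) / ((i+N).factorial : ℂ) := by
    have h2 := hzsum.sum_add_tsum_nat_add N
    rw [← hsz.tsum_eq]
    linear_combination h2.symm
  rw [htail]
  have hbound : ∀ i : ℕ, ‖a (i+N) * (z:ℂ)^(i+N) / ((i+N).factorial : ℂ)‖
      ≤ (A * u^N) * u^i := by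
    intro i
    have h1 := hA' (i+N)
    have heq : ‖a (i+N) * (z:ℂ)^(i+N) / ((i+N).factorial : ℂ)‖
        = ‖a (i+N) * (q:ℂ)^(i+N) / ((i+N).factorial : ℂ)‖ * u^(i+N) := by
      rw [hzq]
      simp only [norm_div, norm_mul, norm_pow, Complex.norm_real, Real.norm_eq_abs,
        Complex.ofReal_mul, mul_pow]
      rw [_root_.abs_of_nonneg hq0.le, _root_.abs_of_nonneg hu0]
      ring
    rw [heq]
    calc ‖a (i+N) * (q:ℂ)^(i+N) / ((i+N).factorial : ℂ)‖ * u^(i+N)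
        ≤ A * u^(i+N) := mul_le_mul_of_nonneg_right h1 (by positivity)
    _ = (A * u^N) * u^i := by rw [pow_add]; ring
  have hgeom : Summable (fun i : ℕ => (A * u^N) * u^i) :=
    (summable_geometric_of_lt_one hu0 (by linarith)).mul_left _
  have hnsum : Summable (fun i : ℕ => ‖a (i+N) * (z:ℂ)^(i+N) / ((i+N).factorial : ℂ)‖) :=
    Summable.of_nonneg_of_le (fun i => norm_nonneg _) hbound hgeom
  have hinv3 : (1-u)⁻¹ ≤ 3 := by
    rw [show (3:ℝ) = ((1:ℝ)/3)⁻¹ by norm_num]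
    gcongr
    linarith
  calc ‖∑' i : ℕ, a (i+N) * (z:ℂ)^(i+N) / ((i+N).factorial : ℂ)‖
      ≤ ∑' i : ℕ, ‖a (i+N) * (z:ℂ)^(i+N) / ((i+N).factorial : ℂ)‖ :=
        norm_tsum_le_tsum_norm hnsum
  _ ≤ ∑' i : ℕ, (A * u^N) * u^i := Summable.tsum_le_tsum hbound hnsum hgeom
  _ = (A * u^N) * (1-u)⁻¹ := by
        rw [tsum_mul_left, tsum_geometric_of_lt_one hu0 (by linarith)]
  _ ≤ (A * u^N) * 3 := mul_le_mul_of_nonneg_left hinv3 (by positivity)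
  _ = 3*A/q^N * z^N := by rw [hu, div_pow]; field_simp

/-- Watson's Lemma: if `φ : [0,∞) → ℂ` is measurable, of at most exponential
growth, and analytic at `0` with Taylor coefficients `a_n` (i.e. `φ z = Σ a_n z^n / n!` on
`[0, R)`), then for every `N` and every `δ ∈ (0, π/2)` there are `K, ε > 0` such that for
all `t` with `0 < |t| < ε` and `|arg t| ≤ π/2 - δ`, the Laplace integral
`Y(t) = ∫₀^∞ φ(z) e^{-z/t} dz` converges absolutely and
`|Y(t) - Σ_{n<N} a_n t^{n+1}| ≤ K |t|^{N+1}`. -/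
theorem stmt4 (φ : ℝ → ℂ) (hmeas : Measurable φ)
    (C c : ℝ) (hC : 0 < C) (hc : 0 < c)
    (hgrow : ∀ z : ℝ, 0 ≤ z → ‖φ z‖ ≤ C * Real.exp (c * z))
    (R : ℝ) (hR : 0 < R) (a : ℕ → ℂ)
    (hanal : ∀ z : ℝ, 0 ≤ z → z < R →
      HasSum (fun n : ℕ => a n * (z : ℂ) ^ n / (n.factorial : ℂ)) (φ z)) :
    ∀ N : ℕ, ∀ δ : ℝ, 0 < δ → δ < Real.pi / 2 →
      ∃ K > (0 : ℝ), ∃ ε > (0 : ℝ), ∀ t : ℂ, 0 < ‖t‖ → ‖t‖ < ε →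
        |Complex.arg t| ≤ Real.pi / 2 - δ →
        IntegrableOn (fun z : ℝ => φ z * Complex.exp (-(z : ℂ) / t)) (Set.Ici (0 : ℝ)) ∧
        ‖(∫ z in Set.Ici (0 : ℝ), φ z * Complex.exp (-(z : ℂ) / t)) -
            ∑ n ∈ Finset.range N, a n * t ^ (n + 1)‖ ≤ K * ‖t‖ ^ (N + 1) := by
  intro N δ hδ0 hδ2
  have hπ := Real.pi_pos
  have hsin : 0 < Real.sin δ := Real.sin_pos_of_pos_of_lt_pi hδ0 (by linarith)
  obtain ⟨M, hM0, hMt⟩ := watson_taylor R hR a φ hanal N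
  have hρ : 0 < R/2 := by linarith
  set D1 : ℝ := ∑ n ∈ Finset.range N, ‖a n‖ / c^n with hD1
  have hD10 : 0 ≤ D1 := Finset.sum_nonneg (fun n _ => by positivity)
  set D : ℝ := C + D1 with hD
  have hD0 : 0 < D := by rw [hD]; linarith
  set E : ℝ := M + D / (R/2)^N with hE
  have hDdiv : 0 < D / (R/2)^N := div_pos hD0 (pow_pos hρ N)
  have hE0 : 0 < E := by rw [hE]; linarith
  refine ⟨E * N.factorial * (2/Real.sin δ)^(N+1) + 1, ?_, Real.sin δ / (2*c),
    div_pos hsin (by linarith), ?_⟩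
  · have h1 : (0:ℝ) < E * N.factorial * (2/Real.sin δ)^(N+1) := by
      apply mul_pos (mul_pos hE0 _) _
      · exact_mod_cast Nat.cast_pos.mpr N.factorial_pos
      · positivity
    linarith
  intro t ht0 htε harg
  have htne : t ≠ 0 := by
    intro h; rw [h] at ht0; simp at ht0
  set b : ℂ := t⁻¹ with hbdef
  have hre : Real.sin δ / ‖t‖ ≤ b.re := by
    have h1 : b.re = t.re / Complex.normSq t := by rw [hbdef]; exact Complex.inv_re t
    have h2 : Real.cos (Complex.arg t) = t.re / ‖t‖ := Complex.cos_arg htne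
    have h3 : Real.sin δ ≤ Real.cos (Complex.arg t) := by
      have h4 := Real.cos_le_cos_of_nonneg_of_le_pi (abs_nonneg (Complex.arg t))
        (by linarith : Real.pi/2 - δ ≤ Real.pi) harg
      rw [Real.cos_abs, Real.cos_pi_div_two_sub] at h4
      exact h4
    have h5 : b.re = Real.cos (Complex.arg t) / ‖t‖ := by
      rw [h1, h2, Complex.normSq_eq_norm_sq, sq, div_div]
    rw [h5]
    gcongr
  have h2c : 2*c < Real.sin δ / ‖t‖ := by
    rw [lt_div_iff₀ ht0]
    have := (lt_div_iff₀ (by positivity : (0:ℝ) < 2*c)).mp htε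
    linarith
  have hσ2c : 2*c < b.re := lt_of_lt_of_le h2c hre
  have hσpos : 0 < b.re := by linarith
  have hcb : c < b.re := by linarith
  have hfeq : ∀ z : ℝ, Complex.exp (-(z:ℂ)/t) = Complex.exp (-b * z) := by
    intro z
    congr 1
    rw [hbdef]
    ring
  have hint1 : IntegrableOn (fun z : ℝ => φ z * Complex.exp (-b * z)) (Ioi (0:ℝ)) :=
    watson_integrable φ hmeas C c hgrow b hcb
  have hint1' : IntegrableOn (fun z : ℝ => φ z * Complex.exp (-(z:ℂ)/t)) (Ioi (0:ℝ)) := by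
    simp only [hfeq]; exact hint1
  constructor
  · rw [integrableOn_Ici_iff_integrableOn_Ioi]; exact hint1'
  set P : ℝ → ℂ := fun z => ∑ n ∈ Finset.range N, a n * (z:ℂ)^n / (n.factorial : ℂ) with hPdef
  have hPint : ∀ n : ℕ, IntegrableOn
      (fun z : ℝ => (a n / (n.factorial:ℂ)) * ((z:ℂ)^n * Complex.exp (-b*z))) (Ioi (0:ℝ)) :=
    fun n => (watson_integrable_pow n b hσpos).const_mul _
  have hPint2 : IntegrableOn (fun z : ℝ => P z * Complex.exp (-b*z)) (Ioi (0:ℝ)) := by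
    have hsum := integrable_finset_sum (μ := volume.restrict (Ioi (0:ℝ)))
      (Finset.range N) (fun n (_ : n ∈ Finset.range N) => hPint n)
    apply hsum.congr
    apply ae_of_all
    intro z
    simp only [hPdef, Finset.sum_mul]
    exact Finset.sum_congr rfl fun n _ => by ring
  have hrep : ∑ n ∈ Finset.range N, a n * t^(n+1)
      = ∫ z in Ioi (0:ℝ), P z * Complex.exp (-b * z) := by
    have hterm : ∀ n ∈ Finset.range N, a n * t^(n+1)
        = ∫ z in Ioi (0:ℝ), (a n / (n.factorial:ℂ)) * ((z:ℂ)^n * Complex.exp (-b*z)) := by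
      intro n _
      rw [integral_const_mul, watson_laplace_pow n b hσpos, hbdef, inv_pow]
      have hfac : ((n.factorial : ℂ)) ≠ 0 := Nat.cast_ne_zero.mpr n.factorial_ne_zero
      have htp : (t:ℂ) ^ (n+1) ≠ 0 := pow_ne_zero _ htne
      field_simp
    rw [Finset.sum_congr rfl hterm, ← integral_finset_sum _ (fun n _ => hPint n)]
    apply setIntegral_congr_fun measurableSet_Ioi
    intro z _
    simp only [hPdef, Finset.sum_mul]
    exact Finset.sum_congr rfl fun n _ => by ring
  have hIci : (∫ z in Set.Ici (0:ℝ), φ z * Complex.exp (-(z:ℂ)/t))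
      = ∫ z in Ioi (0:ℝ), φ z * Complex.exp (-b*z) := by
    rw [MeasureTheory.integral_Ici_eq_integral_Ioi]
    apply setIntegral_congr_fun measurableSet_Ioi
    intro z _
    show φ z * Complex.exp (-(z:ℂ)/t) = φ z * Complex.exp (-b * z)
    rw [hfeq]
  have hkey : (∫ z in Set.Ici (0:ℝ), φ z * Complex.exp (-(z:ℂ)/t))
      - ∑ n ∈ Finset.range N, a n * t^(n+1)
      = ∫ z in Ioi (0:ℝ), (φ z - P z) * Complex.exp (-b*z) := by
    rw [hIci, hrep, ← integral_sub hint1 hPint2]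
    apply setIntegral_congr_fun measurableSet_Ioi
    intro z _; ring
  rw [hkey]
  have hPb : ∀ z : ℝ, 0 ≤ z → ‖P z‖ ≤ D1 * Real.exp (c*z) := by
    intro z hz
    have hterm : ∀ n ∈ Finset.range N, ‖a n * (z:ℂ)^n / (n.factorial:ℂ)‖
        ≤ (‖a n‖ / c^n) * Real.exp (c*z) := by
      intro n _
      rw [norm_div, norm_mul, norm_pow, Complex.norm_real, Real.norm_eq_abs,
        _root_.abs_of_nonneg hz, Complex.norm_natCast]
      have h1 := watson_pow_le (c*z) (by positivity) n
      have hfacpos : (0:ℝ) < n.factorial := by positivity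
      have h2 : z^n ≤ (n.factorial / c^n) * Real.exp (c*z) := by
        have h3 : z^n = (c*z)^n / c^n := by rw [mul_pow]; field_simp
        rw [h3]
        calc (c*z)^n / c^n ≤ (n.factorial * Real.exp (c*z)) / c^n := by gcongr
        _ = (n.factorial / c^n) * Real.exp (c*z) := by ring
      calc ‖a n‖ * z^n / n.factorial
          ≤ ‖a n‖ * ((n.factorial / c^n) * Real.exp (c*z)) / n.factorial := by
            gcongr
      _ = (‖a n‖ / c^n) * Real.exp (c*z) := by field_simp
    have hsum : ‖P z‖ ≤ ∑ n ∈ Finset.range N, ‖a n * (z:ℂ)^n / (n.factorial:ℂ)‖ := by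
      simp only [hPdef]
      exact norm_sum_le _ _
    calc ‖P z‖ ≤ ∑ n ∈ Finset.range N, ‖a n * (z:ℂ)^n / (n.factorial:ℂ)‖ := hsum
    _ ≤ ∑ n ∈ Finset.range N, (‖a n‖ / c^n) * Real.exp (c*z) :=
        Finset.sum_le_sum hterm
    _ = D1 * Real.exp (c*z) := by rw [hD1, Finset.sum_mul]
  have hmaj : IntegrableOn (fun z : ℝ => E * (z^N * Real.exp (-((b.re - c) * z))))
      (Ioi (0:ℝ)) := (watson_integrable_pow_real N (b.re - c) (by linarith)).const_mul E
  have hptw : ∀ᵐ z ∂(volume.restrict (Ioi (0:ℝ))),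
      ‖(φ z - P z) * Complex.exp (-b*z)‖ ≤ E * (z^N * Real.exp (-((b.re - c) * z))) := by
    filter_upwards [ae_restrict_mem measurableSet_Ioi] with z hz
    have hz0 : (0:ℝ) ≤ z := hz.out.le
    have hcore : ‖φ z - P z‖ ≤ E * z^N * Real.exp (c*z) := by
      by_cases hcase : z ≤ R/2
      · have h1 := hMt z hz0 hcase
        have h2 : M * z^N ≤ E * z^N := by
          apply mul_le_mul_of_nonneg_right _ (by positivity)
          rw [hE]; linarith
        have h3 : (1:ℝ) ≤ Real.exp (c*z) := Real.one_le_exp (by positivity)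
        have h4 : (0:ℝ) ≤ E * z^N := by positivity
        calc ‖φ z - P z‖ ≤ M * z^N := h1
        _ ≤ E * z^N := h2
        _ = E * z^N * 1 := by ring
        _ ≤ E * z^N * Real.exp (c*z) := by
            apply mul_le_mul_of_nonneg_left h3 h4
      · push_neg at hcase
        have h1 : ‖φ z - P z‖ ≤ C * Real.exp (c*z) + D1 * Real.exp (c*z) := by
          have htri : ‖φ z - P z‖ ≤ ‖φ z‖ + ‖P z‖ := by
            exact norm_sub_le (φ z) (P z)
          exact htri.trans (add_le_add (hgrow z hz0) (hPb z hz0))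
        have h2 : (1:ℝ) ≤ (z/(R/2))^N :=
          one_le_pow₀ ((le_div_iff₀ hρ).mpr (by linarith))
        calc ‖φ z - P z‖ ≤ (C + D1) * Real.exp (c*z) := by linarith
        _ ≤ ((C + D1) * (z/(R/2))^N) * Real.exp (c*z) := by
            apply mul_le_mul_of_nonneg_right _ (Real.exp_nonneg _)
            exact le_mul_of_one_le_right (by linarith) h2
        _ = (D/(R/2)^N) * z^N * Real.exp (c*z) := by
            rw [hD, div_pow]; ring
        _ ≤ E * z^N * Real.exp (c*z) := by
            apply mul_le_mul_of_nonneg_right _ (Real.exp_nonneg _)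
            apply mul_le_mul_of_nonneg_right _ (by positivity)
            rw [hE]; linarith
    rw [norm_mul, watson_abs_cexp]
    calc ‖φ z - P z‖ * Real.exp (-(b.re * z))
        ≤ (E * z^N * Real.exp (c*z)) * Real.exp (-(b.re*z)) :=
          mul_le_mul_of_nonneg_right hcore (Real.exp_nonneg _)
    _ = E * (z^N * Real.exp (-((b.re - c) * z))) := by
        rw [mul_assoc, mul_assoc, ← Real.exp_add]; ring_nf
  have hle := MeasureTheory.norm_integral_le_of_norm_le hmaj hptw
  refine hle.trans ?_
  rw [integral_const_mul, watson_real_laplace_pow N (b.re - c) (by linarith)]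
  have hbc : Real.sin δ / (2 * ‖t‖) ≤ b.re - c := by
    have h6 : Real.sin δ / (2 * ‖t‖) = (Real.sin δ / ‖t‖)/2 := by
      ring
    rw [h6]; linarith
  have hpos2 : 0 < Real.sin δ / (2 * ‖t‖) := by positivity
  have hstep : (N.factorial : ℝ) / (b.re - c)^(N+1)
      ≤ N.factorial * ((2/Real.sin δ)^(N+1) * (‖t‖)^(N+1)) := by
    calc (N.factorial : ℝ) / (b.re - c)^(N+1)
        ≤ (N.factorial : ℝ) / (Real.sin δ / (2 * ‖t‖))^(N+1) :=
          div_le_div_of_nonneg_left (by positivity) (pow_pos hpos2 _)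
            (pow_le_pow_left₀ hpos2.le hbc _)
    _ = N.factorial * ((2/Real.sin δ)^(N+1) * (‖t‖)^(N+1)) := by
        rw [div_pow, div_div_eq_mul_div, mul_pow, div_pow]
        ring
  calc E * ((N.factorial:ℝ) / (b.re - c)^(N+1))
      ≤ E * (N.factorial * ((2/Real.sin δ)^(N+1) * (‖t‖)^(N+1))) :=
        mul_le_mul_of_nonneg_left hstep hE0.le
  _ = (E * N.factorial * (2/Real.sin δ)^(N+1)) * (‖t‖)^(N+1) := by ring
  _ ≤ (E * N.factorial * (2/Real.sin δ)^(N+1) + 1) * (‖t‖)^(N+1) := by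
      apply mul_le_mul_of_nonneg_right _ (by positivity)
      linarith
end

section
/- (Convergence of regularised iterated integrals.) Let P ⊂ ℂ be a finite set and let γ : [0,1] → ℂ be a continuously differentiable path with γ(t) ∉ P for all t ∈ (0,1), γ′(0) ≠ 0 and γ′(1) ≠ 0; set p = γ(0) and q = γ(1) (which may belong to P). Let n ≥ 1 and p₁,…,p_n ∈ P with p₁ ≠ q and p_n ≠ p. Then there exists L ∈ ℂ such that the truncated iterated integrals ∫_{{u ≥ t₁ ≥ t₂ ≥ ⋯ ≥ t_n ≥ s}} ∏_{i=1}^n γ′(t_i)/(γ(t_i) − p_i) dt₁⋯dt_n converge to L as s → 0⁺ and u → 1⁻. -/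
open Complex Filter Topology MeasureTheory

section Stmt6AuxSection
open Complex Filter Topology MeasureTheory Set ENNReal

namespace Stmt6Aux



/-- Simplex with cap set `B` for the top coordinate. -/
def T (m : ℕ) (B : Set ℝ) : Set (Fin (m + 1) → ℝ) :=
  {t | t 0 ∈ B ∧ 0 < t (Fin.last m) ∧ ∀ i : Fin m, t i.succ ≤ t i.castSucc}

lemma measurableSet_T (m : ℕ) {B : Set ℝ} (hB : MeasurableSet B) : MeasurableSet (T m B) := by
  have h1 : MeasurableSet {t : Fin (m+1) → ℝ | t 0 ∈ B} := measurable_pi_apply 0 hB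
  have h2 : MeasurableSet {t : Fin (m+1) → ℝ | 0 < t (Fin.last m)} :=
    measurableSet_lt measurable_const (measurable_pi_apply _)
  have h3 : MeasurableSet {t : Fin (m+1) → ℝ | ∀ i : Fin m, t i.succ ≤ t i.castSucc} := by
    rw [Set.setOf_forall]
    exact MeasurableSet.iInter fun i =>
      measurableSet_le (measurable_pi_apply _) (measurable_pi_apply _)
  exact (h1.inter (h2.inter h3))

lemma chain_antitone {m : ℕ} {t : Fin (m+1) → ℝ}
    (h : ∀ i : Fin m, t i.succ ≤ t i.castSucc) : Antitone t :=
  Fin.antitone_iff_succ_le.2 h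

lemma mem_T_bounds {m : ℕ} {B : Set ℝ} {t : Fin (m+1) → ℝ} (ht : t ∈ T m B) (i : Fin (m+1)) :
    0 < t i ∧ t i ≤ t 0 := by
  obtain ⟨h0, hl, hc⟩ := ht
  exact ⟨lt_of_lt_of_le hl (chain_antitone hc (Fin.le_last i)),
    chain_antitone hc (Fin.zero_le i)⟩

lemma T_empty {m : ℕ} {b : ℝ} (hb : b ≤ 0) : T m (Iic b) = ∅ := by
  ext t
  simp only [mem_empty_iff_false, iff_false]
  intro ht
  have h1 := (mem_T_bounds ht 0).1
  have h2 : t 0 ≤ b := ht.1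
  linarith

lemma mem_T_cons {m : ℕ} {B : Set ℝ} {x : ℝ} {r : Fin (m+1) → ℝ} :
    Fin.cons x r ∈ T (m+1) B ↔ x ∈ B ∧ r ∈ T m (Iic x) := by
  simp only [T, mem_setOf_eq, Fin.forall_fin_succ, ← Fin.succ_last, Fin.cons_succ,
    Fin.cons_zero, Fin.castSucc_zero, mem_Iic, ← Fin.succ_castSucc]
  tauto




lemma lintegral_T_zero (F : ℝ → ℝ≥0∞) {B : Set ℝ} :
    ∫⁻ t in T 0 B, F (t 0) = ∫⁻ x in B ∩ Ioi 0, F x := by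
  have hmp := (volume_preserving_funUnique (Fin 1) ℝ).symm
  have hemb := (MeasurableEquiv.funUnique (Fin 1) ℝ).symm.measurableEmbedding
  have := hmp.setLIntegral_comp_preimage_emb hemb (fun t => F (t 0)) (T 0 B)
  have hset : (MeasurableEquiv.funUnique (Fin 1) ℝ).symm ⁻¹' T 0 B = B ∩ Ioi 0 := by
    ext x
    simp [T, MeasurableEquiv.funUnique, mem_Ioi, and_comm]
  erw [← this, hset]
  rfl



lemma lintegral_T_succ (m : ℕ) (F : Fin (m+2) → ℝ → ℝ≥0∞) (hF : ∀ i, Measurable (F i))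
    {B : Set ℝ} (hB : MeasurableSet B) :
    ∫⁻ t in T (m+1) B, ∏ i, F i (t i) =
      ∫⁻ x in B, F 0 x * ∫⁻ r in T m (Iic x), ∏ j : Fin (m+1), F j.succ (r j) := by
  set e := MeasurableEquiv.piFinSuccAbove (fun _ : Fin (m+2) => ℝ) 0 with he
  have hmp := (volume_preserving_piFinSuccAbove (fun _ : Fin (m+2) => ℝ) 0).symm
  have hemb := e.symm.measurableEmbedding
  have hstep := hmp.setLIntegral_comp_preimage_emb hemb (fun t => ∏ i, F i (t i)) (T (m+1) B)
  rw [← hstep]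
  have hsymm : ∀ y : ℝ × (Fin (m+1) → ℝ), e.symm y = Fin.cons y.1 y.2 := by
    intro y
    simp [he, MeasurableEquiv.piFinSuccAbove, Fin.insertNth_zero', Fin.consEquiv]
  set S : Set (ℝ × (Fin (m+1) → ℝ)) := {y | y.1 ∈ B ∧ y.2 ∈ T m (Iic y.1)} with hSdef
  have hpre : e.symm ⁻¹' (T (m+1) B) = S := by
    ext y
    simp only [mem_preimage, hsymm, mem_T_cons, hSdef, mem_setOf_eq]
  set G : ℝ × (Fin (m+1) → ℝ) → ℝ≥0∞ :=
    fun y => F 0 y.1 * ∏ j : Fin (m+1), F j.succ (y.2 j) with hGdef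
  have hfun : ∀ y : ℝ × (Fin (m+1) → ℝ), (∏ i, F i (e.symm y i)) = G y := by
    intro y
    rw [hsymm, Fin.prod_univ_succ]
    simp [hGdef]
  have hTmeas : ∀ x : ℝ, MeasurableSet (T m (Iic x)) :=
    fun x => measurableSet_T m measurableSet_Iic
  have hS : MeasurableSet S := by
    have h1 : MeasurableSet {y : ℝ × (Fin (m+1) → ℝ) | y.1 ∈ B} := measurable_fst hB
    have h2 : MeasurableSet {y : ℝ × (Fin (m+1) → ℝ) | y.2 0 ≤ y.1} :=
      measurableSet_le (by fun_prop) (by fun_prop)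
    have h3 : MeasurableSet {y : ℝ × (Fin (m+1) → ℝ) | 0 < y.2 (Fin.last m)} :=
      measurableSet_lt (by fun_prop) (by fun_prop)
    have h4 : MeasurableSet
        {y : ℝ × (Fin (m+1) → ℝ) | ∀ i : Fin m, y.2 i.succ ≤ y.2 i.castSucc} := by
      rw [Set.setOf_forall]
      exact MeasurableSet.iInter fun i => measurableSet_le (by fun_prop) (by fun_prop)
    have heq : S = {y : ℝ × (Fin (m+1) → ℝ) | y.1 ∈ B} ∩
        ({y | y.2 0 ≤ y.1} ∩ ({y | 0 < y.2 (Fin.last m)} ∩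
          {y | ∀ i : Fin m, y.2 i.succ ≤ y.2 i.castSucc})) := by
      ext y
      simp only [hSdef, T, mem_setOf_eq, mem_inter_iff, mem_Iic]
    rw [heq]
    exact h1.inter (h2.inter (h3.inter h4))
  have hG : Measurable G := by
    apply Measurable.mul
    · exact (hF 0).comp measurable_fst
    · exact Finset.measurable_prod _ fun j _ =>
        (hF j.succ).comp ((measurable_pi_apply _).comp measurable_snd)
  have hvol : (volume : Measure (ℝ × (Fin (m+1) → ℝ))) =
      (volume : Measure ℝ).prod (volume : Measure (Fin (m+1) → ℝ)) := rfl
  calc ∫⁻ y in e.symm ⁻¹' (T (m+1) B), (∏ i, F i (e.symm y i))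
      = ∫⁻ y in S, G y := by rw [hpre]; exact lintegral_congr hfun
    _ = ∫⁻ y, S.indicator G y ∂((volume : Measure ℝ).prod volume) := by
        rw [← hvol, lintegral_indicator hS]
    _ = ∫⁻ x, ∫⁻ r, S.indicator G (x, r) := lintegral_prod _ (hG.indicator hS).aemeasurable
    _ = ∫⁻ x, B.indicator
          (fun x => F 0 x * ∫⁻ r in T m (Iic x), ∏ j : Fin (m+1), F j.succ (r j)) x := by
        refine lintegral_congr fun x => ?_
        by_cases hx : x ∈ B
        · have hpt : ∀ r, S.indicator G (x, r) =
              (T m (Iic x)).indicator (fun r => F 0 x * ∏ j : Fin (m+1), F j.succ (r j)) r := by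
            intro r
            by_cases hr : r ∈ T m (Iic x)
            · rw [indicator_of_mem (by exact ⟨hx, hr⟩), indicator_of_mem hr]
            · rw [indicator_of_notMem (fun hmem => hr hmem.2), indicator_of_notMem hr]
          rw [lintegral_congr hpt, lintegral_indicator (hTmeas x),
            lintegral_const_mul _ (Finset.measurable_prod _ fun j _ =>
              (hF j.succ).comp (measurable_pi_apply _)), indicator_of_mem hx]
        · rw [indicator_of_notMem hx]
          have hpt : ∀ r, S.indicator G (x, r) = 0 := fun r =>
            indicator_of_notMem (fun hmem => hx hmem.1) _
          rw [lintegral_congr hpt, lintegral_zero]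
    _ = ∫⁻ x in B, F 0 x * ∫⁻ r in T m (Iic x), ∏ j : Fin (m+1), F j.succ (r j) :=
        lintegral_indicator hB _


lemma cont_rpow_on {b r : ℝ} (hb : b < 1) :
    ContinuousOn (fun x : ℝ => (1 - x) ^ (r : ℝ)) (Icc 0 b) := by
  apply ContinuousOn.rpow_const
  · exact (continuous_const.sub continuous_id).continuousOn
  · intro x hx
    exact Or.inl (by intro h; have := hx.2; nlinarith [sub_eq_zero.mp h])

lemma deriv_aux {x : ℝ} (hx : x < 1) :
    HasDerivAt (fun y : ℝ => 2 * (1 - y) ^ (-(1/2) : ℝ)) ((1 - x) ^ (-(3/2) : ℝ)) x := by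
  have h0 : (1 : ℝ) - x ≠ 0 := by linarith
  have h1 : HasDerivAt (fun y : ℝ => 1 - y) (-1) x := by
    simpa using (hasDerivAt_id x).const_sub 1
  have h2 : HasDerivAt (fun y : ℝ => y ^ (-(1/2) : ℝ))
      ((-(1/2)) * (1 - x) ^ ((-(1/2) : ℝ) - 1)) (1 - x) :=
    Real.hasDerivAt_rpow_const (Or.inl h0)
  have h3 := (h2.comp x h1).const_mul 2
  refine h3.congr_deriv ?_
  have : ((-(1/2) : ℝ) - 1) = (-(3/2) : ℝ) := by norm_num
  rw [this]
  ring

lemma key_int {b : ℝ} (hb : b ∈ Ioo (0:ℝ) 1) :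
    ∫⁻ x in Ioc 0 b, ENNReal.ofReal ((1 - x) ^ (-(3/2) : ℝ)) ≤
      ENNReal.ofReal (2 * b * (1 - b) ^ (-(1/2) : ℝ)) := by
  obtain ⟨hb0, hb1⟩ := hb
  have hcont : ContinuousOn (fun x : ℝ => (1 - x) ^ (-(3/2) : ℝ)) (Icc 0 b) := cont_rpow_on hb1
  have hInt : IntegrableOn (fun x : ℝ => (1 - x) ^ (-(3/2) : ℝ)) (Ioc 0 b) :=
    (hcont.integrableOn_Icc).mono_set Ioc_subset_Icc_self
  have hnn : 0 ≤ᵐ[volume.restrict (Ioc 0 b)] fun x : ℝ => (1 - x) ^ (-(3/2) : ℝ) := by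
    rw [EventuallyLE, ae_restrict_iff' measurableSet_Ioc]
    exact Eventually.of_forall fun x hx => Real.rpow_nonneg (by linarith [hx.2]) _
  rw [← ofReal_integral_eq_lintegral_ofReal hInt hnn]
  apply ENNReal.ofReal_le_ofReal
  have hval : ∫ x in Ioc 0 b, (1 - x) ^ (-(3/2) : ℝ) =
      2 * (1 - b) ^ (-(1/2) : ℝ) - 2 := by
    rw [← intervalIntegral.integral_of_le hb0.le]
    rw [intervalIntegral.integral_eq_sub_of_hasDerivAt
      (f := fun y : ℝ => 2 * (1 - y) ^ (-(1/2) : ℝ))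
      (fun x hx => by
        rw [uIcc_of_le hb0.le] at hx
        exact deriv_aux (lt_of_le_of_lt hx.2 hb1))
      (by
        apply ContinuousOn.intervalIntegrable
        rwa [uIcc_of_le hb0.le])]
    norm_num [Real.one_rpow]
  rw [hval]
  set s := (1 - b) ^ (-(1/2) : ℝ) with hs
  have hsp : (1 - b) * s = (1 - b) ^ ((1/2) : ℝ) := by
    rw [hs]
    rw [show (1 - b) * (1 - b) ^ (-(1/2) : ℝ) = (1 - b) ^ (1:ℝ) * (1 - b) ^ (-(1/2) : ℝ) by
      rw [Real.rpow_one]]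
    rw [← Real.rpow_add (by linarith)]
    norm_num
  have hle1 : (1 - b) ^ ((1/2) : ℝ) ≤ 1 :=
    Real.rpow_le_one (by linarith) (by linarith) (by norm_num)
  nlinarith

lemma int_half : ∫⁻ x in Ioo (0:ℝ) 1, ENNReal.ofReal ((1 - x) ^ (-(1/2) : ℝ)) < ⊤ := by
  have h1 : IntervalIntegrable (fun x : ℝ => x ^ (-(1/2) : ℝ)) volume 0 1 :=
    intervalIntegral.intervalIntegrable_rpow' (by norm_num)
  have h2 : IntervalIntegrable (fun x : ℝ => (1 - x) ^ (-(1/2) : ℝ)) volume 0 1 := by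
    have := (h1.comp_sub_left 1).symm
    norm_num at this
    exact this
  have h3 : IntegrableOn (fun x : ℝ => (1 - x) ^ (-(1/2) : ℝ)) (Ioo 0 1) := by
    have := (intervalIntegrable_iff_integrableOn_Ioc_of_le (by norm_num : (0:ℝ) ≤ 1)).mp h2
    exact this.mono_set Ioo_subset_Ioc_self
  calc ∫⁻ x in Ioo (0:ℝ) 1, ENNReal.ofReal ((1 - x) ^ (-(1/2) : ℝ))
      ≤ ∫⁻ x in Ioo (0:ℝ) 1, ‖(1 - x) ^ (-(1/2) : ℝ)‖₊ := by
        apply lintegral_mono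
        intro x
        exact Real.ofReal_le_enorm _
    _ < ⊤ := h3.2


lemma meas_rpow (r : ℝ) : Measurable fun x : ℝ => ENNReal.ofReal ((1 - x) ^ (r : ℝ)) :=
  ((measurable_const.sub measurable_id).pow measurable_const).ennreal_ofReal

lemma rpow_inv_le {x : ℝ} (hx : x ∈ Ioo (0:ℝ) 1) :
    (1 - x)⁻¹ ≤ (1 - x) ^ (-(3/2) : ℝ) := by
  rw [← Real.rpow_neg_one]
  exact Real.rpow_le_rpow_of_exponent_ge (by linarith [hx.2]) (by linarith [hx.1]) (by norm_num)

lemma T_bound (C : ℝ) (hC : 0 < C) (m : ℕ) :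
    ∀ (F : Fin (m+1) → ℝ → ℝ≥0∞), (∀ i, Measurable (F i)) →
    (∀ i, ∀ x ∈ Ioo (0:ℝ) 1, F i x ≤ ENNReal.ofReal (C / (x * (1 - x)))) →
    (∀ x ∈ Ioo (0:ℝ) 1, F (Fin.last m) x ≤ ENNReal.ofReal (C / (1 - x))) →
    ∀ b ∈ Ioo (0:ℝ) 1,
      ∫⁻ t in T m (Iic b), ∏ i, F i (t i) ≤
        ENNReal.ofReal ((2*C)^(m+1) * (b * (1 - b) ^ (-(1/2) : ℝ))) := by
  induction m with
  | zero =>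
    intro F hF hall hlast b hb
    simp only [Fin.prod_univ_succ, Fin.prod_univ_zero, mul_one]
    calc ∫⁻ t in T 0 (Iic b), F 0 (t 0)
        = ∫⁻ x in Iic b ∩ Ioi 0, F 0 x := lintegral_T_zero (F 0)
      _ = ∫⁻ x in Ioc 0 b, F 0 x := by rw [Iic_inter_Ioi]
      _ ≤ ∫⁻ x in Ioc 0 b, ENNReal.ofReal (C * (1 - x) ^ (-(3/2) : ℝ)) := by
          apply setLIntegral_mono' measurableSet_Ioc
          intro x hx
          have hx1 : x ∈ Ioo (0:ℝ) 1 := ⟨hx.1, lt_of_le_of_lt hx.2 hb.2⟩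
          refine le_trans (hlast x hx1) (ENNReal.ofReal_le_ofReal ?_)
          rw [div_eq_mul_inv]
          exact mul_le_mul_of_nonneg_left (rpow_inv_le hx1) hC.le
      _ = ENNReal.ofReal C * ∫⁻ x in Ioc 0 b, ENNReal.ofReal ((1 - x) ^ (-(3/2) : ℝ)) := by
          rw [← lintegral_const_mul _ (meas_rpow _)]
          refine setLIntegral_congr_fun measurableSet_Ioc (fun x hx => ?_)
          rw [← ENNReal.ofReal_mul hC.le]
      _ ≤ ENNReal.ofReal C * ENNReal.ofReal (2 * b * (1 - b) ^ (-(1/2) : ℝ)) :=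
          mul_le_mul_right (key_int hb) _
      _ = ENNReal.ofReal (C * (2 * b * (1 - b) ^ (-(1/2) : ℝ))) := (ENNReal.ofReal_mul hC.le).symm
      _ ≤ ENNReal.ofReal ((2*C)^(0+1) * (b * (1 - b) ^ (-(1/2) : ℝ))) := by
          apply ENNReal.ofReal_le_ofReal
          apply le_of_eq
          ring
  | succ k ih =>
    intro F hF hall hlast b hb
    rw [lintegral_T_succ k F hF measurableSet_Iic]
    set K := C * (2*C)^(k+1) with hK
    have hKpos : 0 < K := by positivity
    have hH0 : ∀ x : ℝ, x ≤ 0 →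
        (F 0 x * ∫⁻ r in T k (Iic x), ∏ j : Fin (k+1), F j.succ (r j)) = 0 := by
      intro x hx
      rw [T_empty hx]
      simp
    calc ∫⁻ x in Iic b, F 0 x * ∫⁻ r in T k (Iic x), ∏ j : Fin (k+1), F j.succ (r j)
        = (∫⁻ x in Iic 0, F 0 x * ∫⁻ r in T k (Iic x), ∏ j : Fin (k+1), F j.succ (r j)) +
          ∫⁻ x in Ioc 0 b, F 0 x * ∫⁻ r in T k (Iic x), ∏ j : Fin (k+1), F j.succ (r j) := by
          rw [← lintegral_union measurableSet_Ioc (Iic_disjoint_Ioc le_rfl),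
            Iic_union_Ioc_eq_Iic hb.1.le]
      _ = ∫⁻ x in Ioc 0 b, F 0 x * ∫⁻ r in T k (Iic x), ∏ j : Fin (k+1), F j.succ (r j) := by
          rw [setLIntegral_congr_fun measurableSet_Iic
            (fun x (hx : x ∈ Iic 0) => hH0 x hx), lintegral_zero, zero_add]
      _ ≤ ∫⁻ x in Ioc 0 b, ENNReal.ofReal (K * (1 - x) ^ (-(3/2) : ℝ)) := by
          apply setLIntegral_mono' measurableSet_Ioc
          intro x hx
          have hx1 : x ∈ Ioo (0:ℝ) 1 := ⟨hx.1, lt_of_le_of_lt hx.2 hb.2⟩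
          have hinner : (∫⁻ r in T k (Iic x), ∏ j : Fin (k+1), F j.succ (r j)) ≤
              ENNReal.ofReal ((2*C)^(k+1) * (x * (1 - x) ^ (-(1/2) : ℝ))) := by
            apply ih (fun j => F j.succ) (fun j => hF j.succ) (fun j => hall j.succ)
            · intro y hy
              rw [Fin.succ_last]
              exact hlast y hy
            · exact hx1
          calc F 0 x * ∫⁻ r in T k (Iic x), ∏ j : Fin (k+1), F j.succ (r j)
              ≤ ENNReal.ofReal (C / (x * (1 - x))) *
                ENNReal.ofReal ((2*C)^(k+1) * (x * (1 - x) ^ (-(1/2) : ℝ))) :=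
                mul_le_mul' (hall 0 x hx1) hinner
            _ = ENNReal.ofReal (C / (x * (1 - x)) *
                ((2*C)^(k+1) * (x * (1 - x) ^ (-(1/2) : ℝ)))) := by
                rw [← ENNReal.ofReal_mul (div_nonneg hC.le (by nlinarith [hx1.1, hx1.2]))]
            _ = ENNReal.ofReal (K * (1 - x) ^ (-(3/2) : ℝ)) := by
                congr 1
                have h1x : (0:ℝ) < 1 - x := by linarith [hx1.2]
                have hsplit : (1 - x) ^ (-(3/2) : ℝ) =
                    (1 - x)⁻¹ * (1 - x) ^ (-(1/2) : ℝ) := by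
                  rw [← Real.rpow_neg_one, ← Real.rpow_add h1x]
                  norm_num
                have hx0 : x ≠ 0 := ne_of_gt hx1.1
                have h1x0 : (1:ℝ) - x ≠ 0 := ne_of_gt h1x
                rw [hK, hsplit]
                field_simp
      _ = ENNReal.ofReal K * ∫⁻ x in Ioc 0 b, ENNReal.ofReal ((1 - x) ^ (-(3/2) : ℝ)) := by
          rw [← lintegral_const_mul _ (meas_rpow _)]
          refine setLIntegral_congr_fun measurableSet_Ioc (fun x hx => ?_)
          rw [← ENNReal.ofReal_mul hKpos.le]
      _ ≤ ENNReal.ofReal K * ENNReal.ofReal (2 * b * (1 - b) ^ (-(1/2) : ℝ)) :=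
          mul_le_mul_right (key_int hb) _
      _ = ENNReal.ofReal (K * (2 * b * (1 - b) ^ (-(1/2) : ℝ))) := (ENNReal.ofReal_mul hKpos.le).symm
      _ ≤ ENNReal.ofReal ((2*C)^(k+1+1) * (b * (1 - b) ^ (-(1/2) : ℝ))) := by
          apply ENNReal.ofReal_le_ofReal
          apply le_of_eq
          rw [hK]
          ring


lemma T_finite (n : ℕ) (F : Fin (n+1) → ℝ → ℝ≥0∞) (hF : ∀ i, Measurable (F i))
    (C : ℝ) (hC : 0 < C)
    (hall : ∀ i, ∀ x ∈ Ioo (0:ℝ) 1, F i x ≤ ENNReal.ofReal (C / (x * (1 - x))))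
    (hfirst : ∀ x ∈ Ioo (0:ℝ) 1, F 0 x ≤ ENNReal.ofReal (C / x))
    (hlast : ∀ x ∈ Ioo (0:ℝ) 1, F (Fin.last n) x ≤ ENNReal.ofReal (C / (1 - x))) :
    ∫⁻ t in T n (Iio 1), ∏ i, F i (t i) < ⊤ := by
  cases n with
  | zero =>
    simp only [Fin.prod_univ_succ, Fin.prod_univ_zero, mul_one]
    rw [lintegral_T_zero (F 0), show Iio (1:ℝ) ∩ Ioi 0 = Ioo 0 1 by
      rw [inter_comm, Ioi_inter_Iio]]
    calc ∫⁻ x in Ioo (0:ℝ) 1, F 0 x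
        ≤ ∫⁻ _ in Ioo (0:ℝ) 1, ENNReal.ofReal (2*C) := by
          apply setLIntegral_mono' measurableSet_Ioo
          intro x hx
          rcases le_or_gt x (1/2) with h | h
          · refine le_trans (hlast x hx) (ENNReal.ofReal_le_ofReal ?_)
            rw [div_le_iff₀ (by linarith [hx.2])]
            nlinarith [hC.le]
          · refine le_trans (hfirst x hx) (ENNReal.ofReal_le_ofReal ?_)
            rw [div_le_iff₀ hx.1]
            nlinarith [hC.le]
      _ = ENNReal.ofReal (2*C) * volume (Ioo (0:ℝ) 1) := setLIntegral_const _ _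
      _ < ⊤ := by
          rw [Real.volume_Ioo]
          exact ENNReal.mul_lt_top ENNReal.ofReal_lt_top ENNReal.ofReal_lt_top
  | succ m =>
    rw [lintegral_T_succ m F hF measurableSet_Iio]
    have hsp : Iio (1:ℝ) = Iic 0 ∪ Ioo 0 1 := by
      ext x
      simp only [mem_Iio, mem_union, mem_Iic, mem_Ioo]
      constructor
      · intro h
        rcases le_or_gt x 0 with h' | h'
        · exact Or.inl h'
        · exact Or.inr ⟨h', h⟩
      · rintro (h | ⟨_, h⟩) <;> linarith
    have hdisj : Disjoint (Iic (0:ℝ)) (Ioo 0 1) :=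
      disjoint_left.mpr fun x hx hx' => absurd hx'.1 (not_lt.mpr hx)
    rw [hsp, lintegral_union measurableSet_Ioo hdisj]
    have hH0 : ∀ x : ℝ, x ≤ 0 →
        (F 0 x * ∫⁻ r in T m (Iic x), ∏ j : Fin (m+1), F j.succ (r j)) = 0 := by
      intro x hx
      rw [T_empty hx]
      simp
    rw [setLIntegral_congr_fun measurableSet_Iic
      (fun x (hx : x ∈ Iic 0) => hH0 x hx), lintegral_zero, zero_add]
    set K := C * (2*C)^(m+1) with hKdef
    have hKpos : 0 < K := by positivity
    calc ∫⁻ x in Ioo (0:ℝ) 1, F 0 x * ∫⁻ r in T m (Iic x), ∏ j : Fin (m+1), F j.succ (r j)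
        ≤ ∫⁻ x in Ioo (0:ℝ) 1, ENNReal.ofReal (K * (1 - x) ^ (-(1/2) : ℝ)) := by
          apply setLIntegral_mono' measurableSet_Ioo
          intro x hx
          have hinner : (∫⁻ r in T m (Iic x), ∏ j : Fin (m+1), F j.succ (r j)) ≤
              ENNReal.ofReal ((2*C)^(m+1) * (x * (1 - x) ^ (-(1/2) : ℝ))) := by
            apply T_bound C hC m (fun j => F j.succ) (fun j => hF j.succ)
              (fun j => hall j.succ)
            · intro y hy
              rw [Fin.succ_last]
              exact hlast y hy
            · exact hx
          calc F 0 x * ∫⁻ r in T m (Iic x), ∏ j : Fin (m+1), F j.succ (r j)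
              ≤ ENNReal.ofReal (C / x) *
                ENNReal.ofReal ((2*C)^(m+1) * (x * (1 - x) ^ (-(1/2) : ℝ))) :=
                mul_le_mul' (hfirst x hx) hinner
            _ = ENNReal.ofReal (C / x * ((2*C)^(m+1) * (x * (1 - x) ^ (-(1/2) : ℝ)))) := by
                rw [← ENNReal.ofReal_mul (div_nonneg hC.le hx.1.le)]
            _ = ENNReal.ofReal (K * (1 - x) ^ (-(1/2) : ℝ)) := by
                congr 1
                have hx0 : x ≠ 0 := ne_of_gt hx.1
                rw [hKdef]
                field_simp
      _ = ENNReal.ofReal K * ∫⁻ x in Ioo (0:ℝ) 1, ENNReal.ofReal ((1 - x) ^ (-(1/2) : ℝ)) := by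
          rw [← lintegral_const_mul _ (meas_rpow _)]
          refine setLIntegral_congr_fun measurableSet_Ioo (fun x hx => ?_)
          rw [← ENNReal.ofReal_mul hKpos.le]
      _ < ⊤ := ENNReal.mul_lt_top ENNReal.ofReal_lt_top int_half


lemma near0 {γ γ' : ℝ → ℂ} (hγ : ∀ s ∈ Icc (0:ℝ) 1, HasDerivAt γ (γ' s) s)
    (hγ'0 : γ' 0 ≠ 0) (z : ℂ) :
    ∃ ε, ε ∈ Ioo (0:ℝ) (1/2) ∧ ∃ c, 0 < c ∧ ∀ x ∈ Ioc (0:ℝ) ε,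
      c * x ≤ ‖γ x - z‖ ∧ (z ≠ γ 0 → c ≤ ‖γ x - z‖) := by
  have hnorm0 : 0 < ‖γ' 0‖ := norm_pos_iff.mpr hγ'0
  by_cases hz0 : z = γ 0
  · subst hz0
    have hd : HasDerivAt γ (γ' 0) 0 := hγ 0 ⟨le_refl 0, zero_le_one⟩
    rw [hasDerivAt_iff_isLittleO] at hd
    have hb := hd.def (by positivity : (0:ℝ) < ‖γ' 0‖/2)
    rw [Metric.eventually_nhds_iff] at hb
    obtain ⟨ε, hε, hb⟩ := hb
    refine ⟨min (ε/2) (1/4), ⟨by positivity,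
      lt_of_le_of_lt (min_le_right _ _) (by norm_num)⟩, ‖γ' 0‖/2, by positivity, ?_⟩
    intro x hx
    have hx4 : x ≤ 1/4 := le_trans hx.2 (min_le_right _ _)
    have hxd : dist x 0 < ε := by
      rw [Real.dist_eq, sub_zero, abs_of_pos hx.1]
      have h2 := le_trans hx.2 (min_le_left _ _)
      linarith
    have h1 := hb hxd
    simp only [sub_zero] at h1
    rw [Real.norm_eq_abs, abs_of_pos hx.1] at h1
    have h2 : ‖(x:ℝ) • γ' 0‖ = x * ‖γ' 0‖ := by
      rw [norm_smul, Real.norm_eq_abs, abs_of_pos hx.1]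
    have h3 : ‖(x:ℝ) • γ' 0‖ - ‖γ x - γ 0‖ ≤ ‖γ x - γ 0 - x • γ' 0‖ := by
      have h4 := norm_sub_norm_le ((x:ℝ) • γ' 0) (γ x - γ 0)
      rwa [norm_sub_rev ((x:ℝ) • γ' 0) (γ x - γ 0)] at h4
    refine ⟨by nlinarith, fun h => absurd rfl h⟩
  · have hc : ContinuousAt γ 0 := (hγ 0 ⟨le_refl 0, zero_le_one⟩).continuousAt
    have hδ : 0 < ‖γ 0 - z‖ := by
      rw [norm_pos_iff, sub_ne_zero]
      exact fun h => hz0 h.symm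
    rw [Metric.continuousAt_iff] at hc
    obtain ⟨ε, hε, hc⟩ := hc _ (half_pos hδ)
    refine ⟨min (ε/2) (1/4), ⟨by positivity,
      lt_of_le_of_lt (min_le_right _ _) (by norm_num)⟩, ‖γ 0 - z‖/2, by positivity, ?_⟩
    intro x hx
    have hx4 : x ≤ 1/4 := le_trans hx.2 (min_le_right _ _)
    have hxd : dist x 0 < ε := by
      rw [Real.dist_eq, sub_zero, abs_of_pos hx.1]
      have h2 := le_trans hx.2 (min_le_left _ _)
      linarith
    have h1 := hc hxd
    rw [dist_eq_norm] at h1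
    have h2 : ‖γ 0 - z‖ ≤ ‖γ 0 - γ x‖ + ‖γ x - z‖ := by
      have h := norm_add_le (γ 0 - γ x) (γ x - z)
      rwa [sub_add_sub_cancel] at h
    rw [norm_sub_rev (γ 0) (γ x)] at h2
    have hkey : ‖γ 0 - z‖/2 ≤ ‖γ x - z‖ := by linarith
    exact ⟨by nlinarith [hx.1.le], fun _ => hkey⟩

lemma near1 {γ γ' : ℝ → ℂ} (hγ : ∀ s ∈ Icc (0:ℝ) 1, HasDerivAt γ (γ' s) s)
    (hγ'1 : γ' 1 ≠ 0) (z : ℂ) :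
    ∃ ε, ε ∈ Ioo (0:ℝ) (1/2) ∧ ∃ c, 0 < c ∧ ∀ x ∈ Ico (1 - ε) (1:ℝ),
      c * (1 - x) ≤ ‖γ x - z‖ ∧ (z ≠ γ 1 → c ≤ ‖γ x - z‖) := by
  have hnorm1 : 0 < ‖γ' 1‖ := norm_pos_iff.mpr hγ'1
  by_cases hz1 : z = γ 1
  · subst hz1
    have hd : HasDerivAt γ (γ' 1) 1 := hγ 1 ⟨zero_le_one, le_refl 1⟩
    rw [hasDerivAt_iff_isLittleO] at hd
    have hb := hd.def (by positivity : (0:ℝ) < ‖γ' 1‖/2)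
    rw [Metric.eventually_nhds_iff] at hb
    obtain ⟨ε, hε, hb⟩ := hb
    refine ⟨min (ε/2) (1/4), ⟨by positivity,
      lt_of_le_of_lt (min_le_right _ _) (by norm_num)⟩, ‖γ' 1‖/2, by positivity, ?_⟩
    intro x hx
    have hx4 : 1 - x ≤ 1/4 := by
      have := hx.1
      have := min_le_right (ε/2) (1/4)
      linarith
    have hx1 : x < 1 := hx.2
    have hxd : dist x 1 < ε := by
      rw [Real.dist_eq, abs_of_neg (by linarith : x - 1 < 0)]
      have h2 := min_le_left (ε/2) (1/4)
      have := hx.1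
      linarith
    have h1 := hb hxd
    rw [Real.norm_eq_abs, abs_of_neg (by linarith : x - 1 < 0)] at h1
    have h2 : ‖(x - 1 : ℝ) • γ' 1‖ = (1 - x) * ‖γ' 1‖ := by
      rw [norm_smul, Real.norm_eq_abs, abs_of_neg (by linarith : x - 1 < 0)]
      ring
    have h3 : ‖(x - 1 : ℝ) • γ' 1‖ - ‖γ x - γ 1‖ ≤ ‖γ x - γ 1 - (x - 1) • γ' 1‖ := by
      have h4 := norm_sub_norm_le ((x - 1 : ℝ) • γ' 1) (γ x - γ 1)
      rwa [norm_sub_rev ((x - 1 : ℝ) • γ' 1) (γ x - γ 1)] at h4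
    refine ⟨by nlinarith, fun h => absurd rfl h⟩
  · have hc : ContinuousAt γ 1 := (hγ 1 ⟨zero_le_one, le_refl 1⟩).continuousAt
    have hδ : 0 < ‖γ 1 - z‖ := by
      rw [norm_pos_iff, sub_ne_zero]
      exact fun h => hz1 h.symm
    rw [Metric.continuousAt_iff] at hc
    obtain ⟨ε, hε, hc⟩ := hc _ (half_pos hδ)
    refine ⟨min (ε/2) (1/4), ⟨by positivity,
      lt_of_le_of_lt (min_le_right _ _) (by norm_num)⟩, ‖γ 1 - z‖/2, by positivity, ?_⟩
    intro x hx
    have hx4 : 1 - x ≤ 1/4 := by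
      have := hx.1
      have := min_le_right (ε/2) (1/4)
      linarith
    have hx1 : x < 1 := hx.2
    have hxd : dist x 1 < ε := by
      rw [Real.dist_eq, abs_of_neg (by linarith : x - 1 < 0)]
      have h2 := min_le_left (ε/2) (1/4)
      have := hx.1
      linarith
    have h1 := hc hxd
    rw [dist_eq_norm] at h1
    have h2 : ‖γ 1 - z‖ ≤ ‖γ 1 - γ x‖ + ‖γ x - z‖ := by
      have h := norm_add_le (γ 1 - γ x) (γ x - z)
      rwa [sub_add_sub_cancel] at h
    rw [norm_sub_rev (γ 1) (γ x)] at h2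
    have hkey : ‖γ 1 - z‖/2 ≤ ‖γ x - z‖ := by linarith
    exact ⟨by nlinarith, fun _ => hkey⟩

lemma mid {γ γ' : ℝ → ℂ} (hγ : ∀ s ∈ Icc (0:ℝ) 1, HasDerivAt γ (γ' s) s)
    {P : Finset ℂ} (havoid : ∀ s ∈ Ioo (0:ℝ) 1, γ s ∉ P) {z : ℂ} (hz : z ∈ P)
    {a b : ℝ} (ha : 0 < a) (hab : a ≤ b) (hb : b < 1) :
    ∃ m, 0 < m ∧ ∀ x ∈ Icc a b, m ≤ ‖γ x - z‖ := by
  have hcont : ContinuousOn (fun x => ‖γ x - z‖) (Icc a b) := by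
    apply ContinuousOn.norm
    apply ContinuousOn.sub _ continuousOn_const
    intro x hx
    exact ((hγ x ⟨by linarith [hx.1], by linarith [hx.2]⟩).continuousAt).continuousWithinAt
  obtain ⟨x₀, hx₀, hmin⟩ := isCompact_Icc.exists_isMinOn (nonempty_Icc.mpr hab) hcont
  refine ⟨‖γ x₀ - z‖, ?_, fun x hx => (isMinOn_iff.mp hmin) x hx⟩
  rw [norm_pos_iff, sub_ne_zero]
  intro h
  exact havoid x₀ ⟨lt_of_lt_of_le ha hx₀.1, lt_of_le_of_lt hx₀.2 hb⟩ (h ▸ hz)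

lemma lower_aux {γ γ' : ℝ → ℂ} (hγ : ∀ s ∈ Icc (0:ℝ) 1, HasDerivAt γ (γ' s) s)
    (hγ'0 : γ' 0 ≠ 0) (hγ'1 : γ' 1 ≠ 0) {P : Finset ℂ}
    (havoid : ∀ s ∈ Ioo (0:ℝ) 1, γ s ∉ P) {z : ℂ} (hz : z ∈ P) :
    ∃ c, 0 < c ∧ ∀ x ∈ Ioo (0:ℝ) 1,
      c * (x * (1 - x)) ≤ ‖γ x - z‖ ∧
      (z ≠ γ 1 → c * x ≤ ‖γ x - z‖) ∧
      (z ≠ γ 0 → c * (1 - x) ≤ ‖γ x - z‖) := by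
  obtain ⟨ε₀, hε₀, c₀, hc₀, h₀⟩ := near0 hγ hγ'0 z
  obtain ⟨ε₁, hε₁, c₁, hc₁, h₁⟩ := near1 hγ hγ'1 z
  obtain ⟨m, hm, hmid⟩ := mid hγ havoid hz hε₀.1
    (by linarith [hε₀.2, hε₁.2] : ε₀ ≤ 1 - ε₁) (by linarith [hε₁.1])
  refine ⟨min (min c₀ c₁) m, by positivity, ?_⟩
  intro x hx
  set c := min (min c₀ c₁) m with hcdef
  have hcc₀ : c ≤ c₀ := le_trans (min_le_left _ _) (min_le_left _ _)
  have hcc₁ : c ≤ c₁ := le_trans (min_le_left _ _) (min_le_right _ _)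
  have hcm : c ≤ m := min_le_right _ _
  have hcpos : 0 < c := by positivity
  have hx0 := hx.1
  have hx1 := hx.2
  have h1x : (0:ℝ) ≤ 1 - x := by linarith
  have hxx1 : x * (1 - x) ≤ 1 := by nlinarith
  rcases le_or_gt x ε₀ with hle | hgt
  · -- near 0 region
    obtain ⟨ha, hb'⟩ := h₀ x ⟨hx0, hle⟩
    have key : c * (x * (1 - x)) ≤ c₀ * x := by
      nlinarith [mul_nonneg (sub_nonneg.mpr hcc₀) hx0.le,
        mul_nonneg (mul_nonneg hcpos.le hx0.le) hx0.le]
    have key2 : c * x ≤ c₀ * x := mul_le_mul_of_nonneg_right hcc₀ hx0.le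
    refine ⟨by linarith, fun _ => by linarith, fun hzg0 => ?_⟩
    have hcb := hb' hzg0
    have : c * (1 - x) ≤ c₀ := by nlinarith
    linarith
  · rcases le_or_gt (1 - ε₁) x with hge | hmidx
    · -- near 1 region
      obtain ⟨ha, hb'⟩ := h₁ x ⟨hge, hx1⟩
      have key : c * (x * (1 - x)) ≤ c₁ * (1 - x) := by
        nlinarith [mul_nonneg (sub_nonneg.mpr hcc₁) h1x,
          mul_nonneg (mul_nonneg hcpos.le h1x) h1x]
      have key2 : c * (1 - x) ≤ c₁ * (1 - x) := mul_le_mul_of_nonneg_right hcc₁ h1x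
      refine ⟨by linarith, fun hzg1 => ?_, fun _ => by linarith⟩
      have hcb := hb' hzg1
      have : c * x ≤ c₁ := by nlinarith
      linarith
    · -- middle region
      have hmx := hmid x ⟨hgt.le, hmidx.le⟩
      have k1 : c * (x * (1 - x)) ≤ m := by nlinarith
      have k2 : c * x ≤ m := by nlinarith
      have k3 : c * (1 - x) ≤ m := by nlinarith
      exact ⟨by linarith, fun _ => by linarith, fun _ => by linarith⟩
def A (m : ℕ) (s u : ℝ) : Set (Fin (m + 1) → ℝ) :=
  {t | t 0 ≤ u ∧ s ≤ t (Fin.last m) ∧ ∀ i : Fin m, t i.succ ≤ t i.castSucc}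

lemma measurableSet_A (m : ℕ) (s u : ℝ) : MeasurableSet (A m s u) := by
  have h1 : MeasurableSet {t : Fin (m+1) → ℝ | t 0 ≤ u} :=
    measurableSet_le (measurable_pi_apply 0) measurable_const
  have h2 : MeasurableSet {t : Fin (m+1) → ℝ | s ≤ t (Fin.last m)} :=
    measurableSet_le measurable_const (measurable_pi_apply _)
  have h3 : MeasurableSet {t : Fin (m+1) → ℝ | ∀ i : Fin m, t i.succ ≤ t i.castSucc} := by
    rw [Set.setOf_forall]
    exact MeasurableSet.iInter fun i =>
      measurableSet_le (measurable_pi_apply _) (measurable_pi_apply _)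
  exact h1.inter (h2.inter h3)

lemma mem_A_Icc {m : ℕ} {s u : ℝ} {t : Fin (m+1) → ℝ} (ht : t ∈ A m s u) (i : Fin (m+1)) :
    s ≤ t i ∧ t i ≤ u := by
  obtain ⟨h0, hl, hc⟩ := ht
  exact ⟨le_trans hl (chain_antitone hc (Fin.le_last i)),
    le_trans (chain_antitone hc (Fin.zero_le i)) h0⟩

lemma A_subset_T {m : ℕ} {s u : ℝ} (h0 : 0 < s) (h1 : u < 1) : A m s u ⊆ T m (Iio 1) := by
  intro t ht
  exact ⟨lt_of_le_of_lt ht.1 h1, lt_of_lt_of_le h0 (mem_A_Icc ht _).1, ht.2.2⟩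

lemma A_mono {m : ℕ} {s s' u u' : ℝ} (hs : s' ≤ s) (hu : u ≤ u') : A m s u ⊆ A m s' u' :=
  fun t ht => ⟨le_trans ht.1 hu, le_trans hs ht.2.1, ht.2.2⟩

lemma A_seq_mono (m : ℕ) : Monotone fun j : ℕ =>
    A m (1/(j+2 : ℝ)) (1 - 1/(j+2 : ℝ)) := by
  intro j j' hj
  have h1 : (1:ℝ)/(j'+2) ≤ 1/(j+2) := by
    apply div_le_div_of_nonneg_left (by norm_num) (by positivity)
    exact_mod_cast by omega
  exact A_mono h1 (by linarith)

lemma iUnion_A (m : ℕ) :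
    (⋃ j : ℕ, A m (1/(j+2 : ℝ)) (1 - 1/(j+2 : ℝ))) = T m (Iio 1) := by
  apply subset_antisymm
  · apply iUnion_subset
    intro j
    apply A_subset_T (by positivity)
    have : (0:ℝ) < 1/(j+2) := by positivity
    linarith
  · intro t ht
    obtain ⟨h0, hl, hc⟩ := ht
    have hmin : (0:ℝ) < min (t (Fin.last m)) (1 - t 0) := by
      apply lt_min hl
      simp only [mem_Iio] at h0
      linarith
    obtain ⟨j, hj⟩ := exists_nat_one_div_lt hmin
    refine mem_iUnion.mpr ⟨j, ?_, ?_, hc⟩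
    · have h2 : (1:ℝ)/(j+2) ≤ 1/(j+1) := by
        apply div_le_div_of_nonneg_left (by norm_num) (by positivity)
        push_cast
        linarith
      have := lt_min_iff.mp hj
      have h3 : (1:ℝ)/(j+2) < 1 - t 0 := lt_of_le_of_lt h2 this.2
      linarith
    · have h2 : (1:ℝ)/(j+2) ≤ 1/(j+1) := by
        apply div_le_div_of_nonneg_left (by norm_num) (by positivity)
        push_cast
        linarith
      exact le_of_lt (lt_of_le_of_lt h2 (lt_min_iff.mp hj).1)

end Stmt6Aux


end Stmt6AuxSection

open Stmt6Aux Set ENNReal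

/-- convergence of regularised iterated integrals.  With `γ` a `C¹` path whose
interior avoids the finite set `P` and whose endpoints `p = γ(0)`, `q = γ(1)` may lie in `P`,
and poles `p₀,…,p_n ∈ P` with `p₀ ≠ q` and `p_n ≠ p`, the truncated iterated integrals over
`{u ≥ t₀ ≥ ⋯ ≥ t_n ≥ s}` converge as `s → 0⁺`, `u → 1⁻`. -/
theorem stmt6 (P : Finset ℂ) (γ γ' : ℝ → ℂ)
    (hγ : ∀ s ∈ Set.Icc (0 : ℝ) 1, HasDerivAt γ (γ' s) s)
    (hγ' : ContinuousOn γ' (Set.Icc (0 : ℝ) 1))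
    (havoid : ∀ s ∈ Set.Ioo (0 : ℝ) 1, γ s ∉ P)
    (hγ'0 : γ' 0 ≠ 0) (hγ'1 : γ' 1 ≠ 0)
    (n : ℕ) (p : Fin (n + 1) → ℂ) (hp : ∀ i, p i ∈ P)
    (hfirst : p 0 ≠ γ 1) (hlast : p (Fin.last n) ≠ γ 0) :
    ∃ L : ℂ, Tendsto
      (fun su : ℝ × ℝ =>
        ∫ t in {t : Fin (n + 1) → ℝ | t 0 ≤ su.2 ∧ su.1 ≤ t (Fin.last n) ∧
            ∀ i : Fin n, t i.succ ≤ t i.castSucc},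
          ∏ i, γ' (t i) / (γ (t i) - p i))
      ((𝓝[>] (0 : ℝ)) ×ˢ (𝓝[<] (1 : ℝ))) (𝓝 L) := by
  classical
  -- clamp to [0,1]
  have hclmem : ∀ x : ℝ, max 0 (min x 1) ∈ Icc (0:ℝ) 1 := fun x =>
    ⟨le_max_left _ _, max_le (by norm_num) (min_le_right _ _)⟩
  have hcleq : ∀ x ∈ Icc (0:ℝ) 1, max 0 (min x 1) = x := fun x hx => by
    rw [min_eq_left hx.2, max_eq_right hx.1]
  have hclcont : Continuous fun x : ℝ => max 0 (min x 1) :=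
    continuous_const.max (continuous_id.min continuous_const)
  have hγcont : ContinuousOn γ (Icc 0 1) := fun x hx =>
    (hγ x hx).continuousAt.continuousWithinAt
  have hΓ : Continuous fun x : ℝ => γ (max 0 (min x 1)) :=
    hγcont.comp_continuous hclcont hclmem
  have hΓ' : Continuous fun x : ℝ => γ' (max 0 (min x 1)) :=
    hγ'.comp_continuous hclcont hclmem
  set f : Fin (n+1) → ℝ → ℂ :=
    fun i x => γ' (max 0 (min x 1)) / (γ (max 0 (min x 1)) - p i) with hfdef
  have hfm : ∀ i, Measurable (f i) := fun i =>
    hΓ'.measurable.div ((hΓ.sub continuous_const).measurable)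
  set g : (Fin (n+1) → ℝ) → ℂ := fun t => ∏ i, f i (t i) with hgdef
  have hgm : Measurable g :=
    Finset.measurable_prod _ fun i _ => (hfm i).comp (measurable_pi_apply i)
  set F : Fin (n+1) → ℝ → ℝ≥0∞ := fun i x => (‖f i x‖₊ : ℝ≥0∞) with hFdef
  have hFm : ∀ i, Measurable (F i) := fun i => (hfm i).enorm
  -- constants
  obtain ⟨B, hB⟩ := isCompact_Icc.exists_bound_of_continuousOn hγ'
  have hBpos : 0 < B :=
    lt_of_lt_of_le (norm_pos_iff.mpr hγ'0) (hB 0 ⟨le_refl 0, zero_le_one⟩)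
  choose cs hcs hlb using fun i : Fin (n+1) => lower_aux hγ hγ'0 hγ'1 havoid (hp i)
  have hne : (Finset.univ : Finset (Fin (n+1))).Nonempty := Finset.univ_nonempty
  set c0 : ℝ := Finset.univ.inf' hne cs with hc0def
  have hc0pos : 0 < c0 := (Finset.lt_inf'_iff hne).mpr fun i _ => hcs i
  have hc0le : ∀ i, c0 ≤ cs i := fun i => Finset.inf'_le _ (Finset.mem_univ i)
  set C : ℝ := B / c0 with hCdef
  have hC : 0 < C := div_pos hBpos hc0pos
  -- the three norm bounds
  have hnorm : ∀ (i : Fin (n+1)), ∀ x ∈ Ioo (0:ℝ) 1, ∀ d : ℝ, 0 < d →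
      d ≤ ‖γ x - p i‖ → ‖f i x‖ ≤ B / d := by
    intro i x hx d hd hdle
    have hxI : x ∈ Icc (0:ℝ) 1 := Ioo_subset_Icc_self hx
    rw [hfdef]
    simp only [hcleq x hxI, norm_div]
    exact div_le_div₀ (le_trans (norm_nonneg _) (hB x hxI)) (hB x hxI) hd hdle
  have hred : ∀ (i : Fin (n+1)) (w : ℝ), 0 < w → B / (cs i * w) ≤ C / w := by
    intro i w hw
    rw [hCdef, div_div]
    apply div_le_div_of_nonneg_left hBpos.le
    · exact mul_pos hc0pos hw
    · exact mul_le_mul_of_nonneg_right (hc0le i) hw.le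
  have hFbound : ∀ (i : Fin (n+1)) (w : ℝ), 0 < w → ∀ x ∈ Ioo (0:ℝ) 1,
      cs i * w ≤ ‖γ x - p i‖ → F i x ≤ ENNReal.ofReal (C / w) := by
    intro i w hw x hx hlow
    rw [hFdef]
    simp only []
    rw [← enorm_eq_nnnorm, ← ofReal_norm_eq_enorm]
    apply ENNReal.ofReal_le_ofReal
    exact le_trans (hnorm i x hx _ (mul_pos (hcs i) hw) hlow) (hred i w hw)
  have hall : ∀ i, ∀ x ∈ Ioo (0:ℝ) 1, F i x ≤ ENNReal.ofReal (C / (x * (1 - x))) := by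
    intro i x hx
    exact hFbound i (x * (1-x)) (mul_pos hx.1 (by linarith [hx.2])) x hx (hlb i x hx).1
  have hfirstF : ∀ x ∈ Ioo (0:ℝ) 1, F 0 x ≤ ENNReal.ofReal (C / x) := by
    intro x hx
    exact hFbound 0 x hx.1 x hx ((hlb 0 x hx).2.1 hfirst)
  have hlastF : ∀ x ∈ Ioo (0:ℝ) 1, F (Fin.last n) x ≤ ENNReal.ofReal (C / (1 - x)) := by
    intro x hx
    exact hFbound (Fin.last n) (1 - x) (by linarith [hx.2]) x hx ((hlb _ x hx).2.2 hlast)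
  -- integrability on the limit simplex
  have hgnorm : ∀ t, (‖g t‖₊ : ℝ≥0∞) = ∏ i, F i (t i) := by
    intro t
    rw [hgdef, hFdef]
    simp only [nnnorm_prod]
    rw [ENNReal.coe_finset_prod]
  have hfin : ∫⁻ t in T n (Iio 1), ∏ i, F i (t i) < ⊤ :=
    T_finite n F hFm C hC hall hfirstF hlastF
  have hint : IntegrableOn g (T n (Iio 1)) := by
    refine ⟨hgm.aestronglyMeasurable.restrict, ?_⟩
    show (∫⁻ t in T n (Iio 1), (‖g t‖₊ : ℝ≥0∞)) < ⊤
    rw [lintegral_congr hgnorm]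
    exact hfin
  have hnormint : IntegrableOn (fun t => ‖g t‖) (T n (Iio 1)) := hint.norm
  refine ⟨∫ t in T n (Iio 1), g t, ?_⟩
  -- replace the integrand by the clamped version, eventually
  have hev : (fun su : ℝ × ℝ =>
      ∫ t in {t : Fin (n + 1) → ℝ | t 0 ≤ su.2 ∧ su.1 ≤ t (Fin.last n) ∧
          ∀ i : Fin n, t i.succ ≤ t i.castSucc}, ∏ i, γ' (t i) / (γ (t i) - p i))
      =ᶠ[(𝓝[>] (0:ℝ)) ×ˢ (𝓝[<] (1:ℝ))] (fun su => ∫ t in A n su.1 su.2, g t) := by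
    filter_upwards [prod_mem_prod self_mem_nhdsWithin self_mem_nhdsWithin] with su hsu
    obtain ⟨hs, hu⟩ := hsu
    refine setIntegral_congr_fun (measurableSet_A n su.1 su.2) ?_
    intro t ht
    refine Finset.prod_congr rfl fun i _ => ?_
    have hco := mem_A_Icc ht i
    have hmem : t i ∈ Icc (0:ℝ) 1 :=
      ⟨le_trans (le_of_lt hs) hco.1, le_trans hco.2 (le_of_lt hu)⟩
    rw [hfdef]
    simp only [hcleq _ hmem]
  rw [tendsto_congr' hev]
  -- the main estimate
  rw [Metric.tendsto_nhds]
  intro ε hε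
  have htend := tendsto_setIntegral_of_monotone (μ := volume) (f := fun t => ‖g t‖)
    (fun j : ℕ => measurableSet_A n _ _) (A_seq_mono n) (by rw [iUnion_A n]; exact hnormint)
  rw [iUnion_A n] at htend
  obtain ⟨k, hk⟩ := (Metric.tendsto_nhds.mp htend ε hε).exists
  have hδpos : 0 < (1 : ℝ)/(k+2 : ℝ) := by positivity
  have hδlt : (1 : ℝ)/(k+2 : ℝ) < 1 := by
    rw [div_lt_one (by positivity)]
    push_cast
    linarith
  filter_upwards [prod_mem_prod
    (Ioc_mem_nhdsGT_of_mem (⟨le_refl 0, hδpos⟩ : (0:ℝ) ∈ Ico 0 (1/(k+2 : ℝ))))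
    (Ico_mem_nhdsLT_of_mem (⟨by linarith, le_refl 1⟩ : (1:ℝ) ∈ Ioc (1 - 1/(k+2 : ℝ)) 1))]
    with su hsu
  obtain ⟨hs, hu⟩ := hsu
  have hsub2 : A n su.1 su.2 ⊆ T n (Iio 1) := A_subset_T hs.1 hu.2
  have hsubk : A n (1/(k+2 : ℝ)) (1 - 1/(k+2 : ℝ)) ⊆ T n (Iio 1) :=
    A_subset_T hδpos (by linarith)
  have hsub1 : A n (1/(k+2 : ℝ)) (1 - 1/(k+2 : ℝ)) ⊆ A n su.1 su.2 := A_mono hs.2 hu.1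
  have hdiff : ∫ t in T n (Iio 1) \ A n su.1 su.2, g t =
      (∫ t in T n (Iio 1), g t) - ∫ t in A n su.1 su.2, g t :=
    integral_diff (measurableSet_A n su.1 su.2) hint hsub2
  rw [dist_eq_norm]
  have h1 : ‖(∫ t in A n su.1 su.2, g t) - ∫ t in T n (Iio 1), g t‖ =
      ‖∫ t in T n (Iio 1) \ A n su.1 su.2, g t‖ := by
    rw [hdiff, norm_sub_rev]
  rw [h1]
  calc ‖∫ t in T n (Iio 1) \ A n su.1 su.2, g t‖
      ≤ ∫ t in T n (Iio 1) \ A n su.1 su.2, ‖g t‖ := norm_integral_le_integral_norm _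
    _ ≤ ∫ t in T n (Iio 1) \ A n (1/(k+2 : ℝ)) (1 - 1/(k+2 : ℝ)), ‖g t‖ := by
        apply setIntegral_mono_set (hnormint.mono_set diff_subset)
        · exact ae_of_all _ fun t => norm_nonneg _
        · exact HasSubset.Subset.eventuallyLE (diff_subset_diff_right hsub1)
    _ = (∫ t in T n (Iio 1), ‖g t‖) -
        ∫ t in A n (1/(k+2 : ℝ)) (1 - 1/(k+2 : ℝ)), ‖g t‖ :=
        integral_diff (measurableSet_A n _ _) hnormint hsubk
    _ < ε := by
        rw [Real.dist_eq] at hk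
        have h2 := abs_lt.mp hk
        linarith [h2.1, h2.2]
end

section
/- Let Z = Σ_{a=1}^m z_a·P_a with z₁,…,z_m distinct complex numbers and P₁,…,P_m nonzero d×d complex matrices satisfying P_aP_b = δ_{ab}P_a and P₁+⋯+P_m = 1. Fix θ ∈ ℝ and an index i, and let φ be a d×d-matrix-valued function on the closed ray {z_i + s·e^{iθ} : s ≥ 0}, of polynomial growth along the ray, which is analytic at z_i (i.e. extends holomorphically to a neighborhood of z_i) with φ(z_i) = P_i. Define Y(t) = t^{−1}·∫₀^∞ φ(z_i + s·e^{iθ})·e^{−(z_i + s·e^{iθ})/t}·e^{iθ} ds for t ∈ H_θ. Then for every δ ∈ (0, π/2), Y(t)·e^{z_i/t} → P_i as t → 0 within the closed subsector {t ∈ ℂ* : |arg(t·e^{−iθ})| ≤ π/2 − δ} of H_θ. -/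
open Complex Filter Topology MeasureTheory

section StmtAux
open Set


lemma aux_exp_integral_real {ρ : ℝ} (hρ : 0 < ρ) :
    ∫ s in Ioi (0:ℝ), Real.exp (-(ρ * s)) = ρ⁻¹ := by
  have h := integral_Ioi_of_hasDerivAt_of_tendsto' (a := 0)
    (f := fun s : ℝ => -ρ⁻¹ * Real.exp (-(ρ * s)))
    (f' := fun s : ℝ => Real.exp (-(ρ * s))) (m := 0)
    (fun x _ => by
      have : HasDerivAt (fun s : ℝ => -(ρ * s)) (-ρ) x := by
        have h := ((hasDerivAt_id x).const_mul ρ).neg; simp only [mul_one] at h; exact h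
      have := (this.exp).const_mul (-ρ⁻¹)
      convert this using 1
      · rfl
      · field_simp [hρ.ne'])
    (by
      apply (exp_neg_integrableOn_Ioi 0 hρ).congr_fun (fun x _ => by ring_nf) measurableSet_Ioi)
    (by
      have : Tendsto (fun s : ℝ => Real.exp (-(ρ * s))) atTop (𝓝 0) := by
        have := Real.tendsto_exp_neg_atTop_nhds_zero.comp
          (tendsto_id.const_mul_atTop hρ)
        simpa [Function.comp_def] using this
      simpa using (this.const_mul (-ρ⁻¹)))
  simpa using h

lemma aux_norm_cexp_neg_mul (w : ℂ) (s : ℝ) :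
    ‖Complex.exp (-(s * w))‖ = Real.exp (-(w.re * s)) := by
  rw [Complex.norm_exp]
  congr 1
  simp [mul_comm]

lemma aux_exp_integral_complex {w : ℂ} (hw : 0 < w.re) :
    ∫ s in Ioi (0:ℝ), Complex.exp (-((s:ℂ) * w)) = w⁻¹ := by
  have hwne : w ≠ 0 := fun h => by simp [h] at hw
  have h := integral_Ioi_of_hasDerivAt_of_tendsto' (a := 0)
    (f := fun s : ℝ => -w⁻¹ * Complex.exp (-((s:ℂ) * w)))
    (f' := fun s : ℝ => Complex.exp (-((s:ℂ) * w))) (m := 0)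
    (fun x _ => by
      have h1 : HasDerivAt (fun s : ℝ => -((s:ℂ) * w)) (-w) x := by
        have h := ((Complex.ofRealCLM.hasDerivAt (x := x)).mul_const w).neg
        simp only [Complex.ofRealCLM_apply, Complex.ofReal_one, one_mul] at h; exact h
      have := (h1.cexp).const_mul (-w⁻¹)
      convert this using 1
      · rfl
      · field_simp [hwne])
    (by
      apply ((exp_neg_integrableOn_Ioi 0 hw).congr_fun
        (fun x _ => rfl) measurableSet_Ioi).congr' ?_ ?_
      · exact (Complex.continuous_ofReal.mul continuous_const).neg.cexp.aestronglyMeasurable.restrict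
      · refine (ae_restrict_iff' measurableSet_Ioi).2 (Eventually.of_forall fun x _ => ?_)
        rw [aux_norm_cexp_neg_mul]
        simp [Real.abs_exp, neg_mul])
    (by
      rw [tendsto_zero_iff_norm_tendsto_zero]
      have : Tendsto (fun s : ℝ => Real.exp (-(w.re * s))) atTop (𝓝 0) := by
        have := Real.tendsto_exp_neg_atTop_nhds_zero.comp
          (tendsto_id.const_mul_atTop hw)
        simpa [Function.comp_def] using this
      have h2 : Tendsto (fun s : ℝ => ‖(-w⁻¹ : ℂ)‖ * Real.exp (-(w.re * s))) atTop (𝓝 0) := by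
        simpa using this.const_mul ‖(-w⁻¹ : ℂ)‖
      refine h2.congr fun s => ?_
      rw [norm_mul, aux_norm_cexp_neg_mul])
  simpa [hwne] using h

lemma aux_tendsto_poly_exp (N : ℕ) {b : ℝ} (hb : 0 < b) :
    Tendsto (fun x : ℝ => (1 + x) ^ N * Real.exp (-(b * x))) atTop (𝓝 0) := by
  have h0 := tendsto_rpow_mul_exp_neg_mul_atTop_nhds_zero (N : ℝ) b hb
  have h1 : Tendsto (fun x : ℝ => (1 + x) ^ (N:ℝ) * Real.exp (-b * (1 + x))) atTop (𝓝 0) :=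
    h0.comp (tendsto_atTop_add_const_left _ 1 tendsto_id)
  have h2 := h1.const_mul (Real.exp b)
  rw [mul_zero] at h2
  refine h2.congr' ?_
  filter_upwards [eventually_ge_atTop (0:ℝ)] with x hx
  rw [← Real.rpow_natCast (1+x) N, mul_comm (Real.exp b), mul_assoc, ← Real.exp_add]
  ring_nf

lemma aux_integrableOn_poly_exp (C : ℝ) (N : ℕ) {b : ℝ} (hb : 0 < b) :
    IntegrableOn (fun s : ℝ => C * (1 + s) ^ N * Real.exp (-(b * s))) (Ioi 0) := by
  apply integrable_of_isBigO_exp_neg (half_pos hb)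
  · exact ((continuous_const.mul ((continuous_const.add continuous_id).pow N)).mul
      (Real.continuous_exp.comp ((continuous_const.mul continuous_id).neg))).continuousOn
  · have ht : Tendsto (fun x : ℝ => C * ((1 + x) ^ N * Real.exp (-(b/2 * x)))) atTop (𝓝 0) := by
      simpa using (aux_tendsto_poly_exp N (half_pos hb)).const_mul C
    have hO := ht.isBigO_one ℝ
    have := hO.mul (Asymptotics.isBigO_refl (fun x : ℝ => Real.exp (-(b/2) * x)) atTop)
    refine this.congr (fun x => ?_) (fun x => by simp)
    rw [mul_assoc, mul_assoc, ← Real.exp_add]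
    ring_nf

lemma aux_integrableOn_smul {E : Type*} [NormedAddCommGroup E] [NormedSpace ℂ E]
    (f : ℝ → E) (hf : AEStronglyMeasurable f (volume.restrict (Ici (0:ℝ))))
    (C : ℝ) (N : ℕ) (hb : ∀ s : ℝ, 0 ≤ s → ‖f s‖ ≤ C * (1 + s) ^ N)
    {w : ℂ} (hw : 0 < w.re) :
    IntegrableOn (fun s : ℝ => (w * Complex.exp (-((s:ℂ) * w))) • f s) (Ici 0) := by
  have hmeas : AEStronglyMeasurable (fun s : ℝ => (w * Complex.exp (-((s:ℂ) * w))) • f s)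
      (volume.restrict (Ici (0:ℝ))) := by
    refine AEStronglyMeasurable.smul ?_ hf
    exact (Continuous.aestronglyMeasurable (by continuity)).restrict
  refine Integrable.mono' (g := fun s => (‖w‖ * C) * (1 + s) ^ N * Real.exp (-(w.re * s)))
    ?_ hmeas ?_
  · have : IntegrableOn (fun s => ‖w‖ * C * (1 + s) ^ N * Real.exp (-(w.re * s))) (Ici 0) := by
      rw [integrableOn_Ici_iff_integrableOn_Ioi]
      exact aux_integrableOn_poly_exp (‖w‖ * C) N hw
    exact this
  · refine (ae_restrict_iff' measurableSet_Ici).2 (Eventually.of_forall fun s hs => ?_)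
    rw [norm_smul, norm_mul, aux_norm_cexp_neg_mul]
    calc ‖w‖ * Real.exp (-(w.re * s)) * ‖f s‖
        ≤ ‖w‖ * Real.exp (-(w.re * s)) * (C * (1 + s) ^ N) := by
          apply mul_le_mul_of_nonneg_left (hb s hs) (by positivity)
      _ = ‖w‖ * C * (1 + s) ^ N * Real.exp (-(w.re * s)) := by ring

lemma aux_sector {t : ℂ} (ht : t ≠ 0) {θ δ : ℝ} (hδ : 0 < δ) (hδ2 : δ < Real.pi / 2)
    (harg : |Complex.arg (t * Complex.exp (-(θ:ℂ) * Complex.I))| ≤ Real.pi / 2 - δ) :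
    Real.sin δ / ‖t‖ ≤ (Complex.exp ((θ:ℂ) * Complex.I) / t).re ∧
      ‖Complex.exp ((θ:ℂ) * Complex.I) / t‖ * Real.sin δ ≤
        (Complex.exp ((θ:ℂ) * Complex.I) / t).re := by
  set u := t * Complex.exp (-(θ:ℂ) * Complex.I) with hu
  have hune : u ≠ 0 := mul_ne_zero ht (Complex.exp_ne_zero _)
  have habs : ‖u‖ = ‖t‖ := by
    rw [hu, norm_mul, Complex.norm_exp]
    simp
  have hsinpos : 0 < Real.sin δ := Real.sin_pos_of_pos_of_lt_pi hδ
    (lt_trans hδ2 (by linarith [Real.pi_pos]))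
  have hcos : Real.sin δ ≤ Real.cos (Complex.arg u) := by
    have h1 : Real.cos (Complex.arg u) = Real.cos |Complex.arg u| := by
      rcases abs_choice (Complex.arg u) with h | h <;> rw [h] <;> simp [Real.cos_neg]
    rw [h1, ← Real.cos_pi_div_two_sub δ]
    apply Real.cos_le_cos_of_nonneg_of_le_pi (abs_nonneg _)
      (by linarith [Real.pi_pos]) harg
  have hre : ‖t‖ * Real.sin δ ≤ u.re := by
    have h2 : u.re = ‖u‖ * Real.cos (Complex.arg u) := by
      rw [Complex.cos_arg hune]
      have hne : ‖u‖ ≠ 0 := by simpa using hune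
      field_simp
    rw [h2, habs]
    exact mul_le_mul_of_nonneg_left hcos (norm_nonneg t)
  have hw : Complex.exp ((θ:ℂ) * Complex.I) / t = u⁻¹ := by
    rw [hu, mul_inv, ← Complex.exp_neg]
    ring_nf
  have habst : 0 < ‖t‖ := by
    exact norm_pos_iff.mpr ht
  have hwre : (Complex.exp ((θ:ℂ) * Complex.I) / t).re = u.re / (‖t‖)^2 := by
    rw [hw, Complex.inv_re, Complex.normSq_eq_norm_sq, habs]
  constructor
  · rw [hwre, div_le_div_iff₀ habst (by positivity)]
    calc Real.sin δ * ‖t‖ ^ 2 = (‖t‖ * Real.sin δ) * ‖t‖ := by ring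
      _ ≤ u.re * ‖t‖ := mul_le_mul_of_nonneg_right hre habst.le
  · have hnw : ‖Complex.exp ((θ:ℂ) * Complex.I) / t‖ = (‖t‖)⁻¹ := by
      rw [hw, norm_inv, habs]
    rw [hnw, hwre]
    rw [inv_mul_eq_div, div_le_div_iff₀ habst (by positivity)]
    calc Real.sin δ * ‖t‖ ^ 2 = (‖t‖ * Real.sin δ) * ‖t‖ := by ring
      _ ≤ u.re * ‖t‖ := mul_le_mul_of_nonneg_right hre habst.le

lemma aux_main {E : Type*} [NormedAddCommGroup E] [NormedSpace ℂ E] [CompleteSpace E]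
    (z : ℂ) (θ : ℝ) (φ : ℂ → E) (Pi : E)
    (hφmeas : AEStronglyMeasurable
      (fun s : ℝ => φ (z + (s : ℂ) * Complex.exp ((θ : ℂ) * Complex.I)))
      (volume.restrict (Set.Ici (0 : ℝ))))
    (c : ℝ) (N : ℕ)
    (hgrow : ∀ s : ℝ, 0 ≤ s →
      ‖φ (z + (s : ℂ) * Complex.exp ((θ : ℂ) * Complex.I))‖ ≤ c * (1 + s) ^ N)
    (hφcont : ContinuousAt φ z) (hφi : φ z = Pi)
    {δ : ℝ} (hδ1 : 0 < δ) (hδ2 : δ < Real.pi / 2) :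
    Tendsto (fun t : ℂ => Complex.exp (z / t) •
          (t⁻¹ • ∫ s in Set.Ici (0 : ℝ),
            (Complex.exp (-(z + (s : ℂ) * Complex.exp ((θ : ℂ) * Complex.I)) / t) *
              Complex.exp ((θ : ℂ) * Complex.I)) •
              φ (z + (s : ℂ) * Complex.exp ((θ : ℂ) * Complex.I))))
        (𝓝[{t : ℂ | t ≠ 0 ∧
            |Complex.arg (t * Complex.exp (-(θ : ℂ) * Complex.I))| ≤ Real.pi / 2 - δ}] 0)
        (𝓝 Pi) := by
  set e : ℂ := Complex.exp ((θ:ℂ) * Complex.I) with he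
  set Φ : ℝ → E := fun s => φ (z + (s:ℂ) * e) with hΦ
  set F : ℝ → E := fun s => Φ s - Pi with hF
  -- basic constants
  set C : ℝ := max c 0 + ‖Pi‖ with hC
  have hCnn : 0 ≤ C := by positivity
  have hone_le : ∀ s : ℝ, 0 ≤ s → (1:ℝ) ≤ (1 + s) ^ N :=
    fun s hs => one_le_pow₀ (by linarith)
  have hΦbound : ∀ s : ℝ, 0 ≤ s → ‖Φ s‖ ≤ C * (1 + s) ^ N := by
    intro s hs
    refine le_trans (hgrow s hs) ?_
    have h1 : c ≤ max c 0 := le_max_left _ _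
    have h2 : (0:ℝ) ≤ (1+s)^N := by positivity
    nlinarith [hone_le s hs, norm_nonneg Pi]
  have hFbound : ∀ s : ℝ, 0 ≤ s → ‖F s‖ ≤ C * (1 + s) ^ N := by
    intro s hs
    have := norm_sub_le (Φ s) Pi
    have h2 : (0:ℝ) ≤ (1+s)^N := by positivity
    have h3 := hgrow s hs
    have h1 : c ≤ max c 0 := le_max_left _ _
    have := hone_le s hs
    simp only [hF]
    nlinarith [norm_nonneg Pi]
  have hFmeas : AEStronglyMeasurable F (volume.restrict (Ici (0:ℝ))) :=
    hφmeas.sub aestronglyMeasurable_const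
  have hsδ : 0 < Real.sin δ := Real.sin_pos_of_pos_of_lt_pi hδ1
    (lt_trans hδ2 (by linarith [Real.pi_pos]))
  -- continuity of F at 0
  have hFc : ContinuousAt F 0 := by
    have h1 : ContinuousAt (fun s : ℝ => z + (s:ℂ) * e) 0 := by fun_prop
    have h2 : ContinuousAt Φ 0 := by
      apply ContinuousAt.comp (g := φ) ?_ h1
      simpa using hφcont
    exact h2.sub continuousAt_const
  have hF0 : F 0 = 0 := by simp [hF, hΦ, hφi]
  rw [Metric.tendsto_nhdsWithin_nhds]
  intro ηt hηt
  -- choose ε'' from continuity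
  obtain ⟨ε₀, hε₀, hεsmall⟩ := Metric.continuousAt_iff.1 hFc (ηt * Real.sin δ / 4)
    (by positivity)
  set ε := ε₀ / 2 with hεdef
  have hε : 0 < ε := by positivity
  have hsmall : ∀ s ∈ Icc (0:ℝ) ε, ‖F s‖ ≤ ηt * Real.sin δ / 4 := by
    intro s hs
    have : dist s 0 < ε₀ := by
      rw [Real.dist_eq, sub_zero, _root_.abs_of_nonneg hs.1]
      linarith [hs.2]
    have := hεsmall this
    rw [hF0, dist_zero_right] at this
    exact this.le
  -- the tail constant
  set K : ℝ := ∫ s in Ioi (0:ℝ), C * (1 + s) ^ N * Real.exp (-(1 * s)) with hKdef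
  set A : ℝ := Real.exp ε * K / Real.sin δ with hAdef
  -- choose ρ₁ from the tail estimate
  have htail : Tendsto (fun ρ : ℝ => A * (ρ * Real.exp (-(ε * ρ)))) atTop (𝓝 0) := by
    have h0 := tendsto_rpow_mul_exp_neg_mul_atTop_nhds_zero 1 ε hε
    have h1 : Tendsto (fun ρ : ℝ => ρ * Real.exp (-(ε * ρ))) atTop (𝓝 0) := by
      refine h0.congr' ?_
      filter_upwards [eventually_ge_atTop (0:ℝ)] with x hx
      rw [Real.rpow_one, neg_mul, mul_comm ε x]
    simpa using h1.const_mul A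
  obtain ⟨ρ₀, hρ₀⟩ := (eventually_atTop).1 (htail.eventually
    (gt_mem_nhds (show (0:ℝ) < ηt / 4 by positivity)))
  set ρ₁ : ℝ := max ρ₀ 1 with hρ₁def
  refine ⟨Real.sin δ / ρ₁, by positivity, ?_⟩
  rintro t ⟨ht, harg⟩ hdist
  rw [Complex.dist_eq, sub_zero] at hdist
  -- sector estimates
  obtain ⟨hsec1, hsec2⟩ := aux_sector ht hδ1 hδ2 harg
  set w : ℂ := e / t with hwdef
  have habst : 0 < ‖t‖ := norm_pos_iff.mpr ht
  set ρ : ℝ := w.re with hρdef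
  have hρbig : ρ₁ < ρ := by
    have h1 : ρ₁ * ‖t‖ < Real.sin δ := by
      have hρ₁pos : (0:ℝ) < ρ₁ := lt_of_lt_of_le one_pos (le_max_right _ _)
      calc ρ₁ * ‖t‖ < ρ₁ * (Real.sin δ / ρ₁) :=
            mul_lt_mul_of_pos_left hdist hρ₁pos
        _ = Real.sin δ := by field_simp
    have := hsec1
    rw [div_le_iff₀ habst] at this
    calc ρ₁ < Real.sin δ / ‖t‖ := by
          rw [lt_div_iff₀ habst]; exact h1
      _ ≤ ρ := hsec1
  have hρpos : 0 < ρ := lt_trans (lt_of_lt_of_le one_pos (le_max_right _ _)) hρbig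
  have hρ1 : 1 ≤ ρ := le_of_lt (lt_of_le_of_lt (le_max_right _ _) hρbig)
  -- integrability facts
  have hIntΦ : IntegrableOn (fun s : ℝ => (w * Complex.exp (-((s:ℂ) * w))) • Φ s) (Ici 0) :=
    aux_integrableOn_smul Φ hφmeas C N hΦbound hρpos
  have hIntF : IntegrableOn (fun s : ℝ => (w * Complex.exp (-((s:ℂ) * w))) • F s) (Ici 0) :=
    aux_integrableOn_smul F hFmeas C N hFbound hρpos
  have hIntP : IntegrableOn (fun s : ℝ => (w * Complex.exp (-((s:ℂ) * w))) • Pi) (Ici 0) :=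
    aux_integrableOn_smul (fun _ => Pi) aestronglyMeasurable_const ‖Pi‖ 0
      (fun s _ => by simp) hρpos
  -- step (★): rewrite the function value
  have hstar : Complex.exp (z / t) • (t⁻¹ • ∫ s in Set.Ici (0 : ℝ),
        (Complex.exp (-(z + (s : ℂ) * e) / t) * e) • Φ s)
      = Pi + ∫ s in Ici (0:ℝ), (w * Complex.exp (-((s:ℂ) * w))) • F s := by
    rw [← integral_smul, ← integral_smul]
    have hptw : ∀ s : ℝ, Complex.exp (z / t) • (t⁻¹ • ((Complex.exp (-(z + (s : ℂ) * e) / t) * e) • Φ s))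
        = (w * Complex.exp (-((s:ℂ) * w))) • Φ s := by
      intro s
      rw [smul_smul, smul_smul]
      congr 1
      have harg_eq : z / t + -(z + (s : ℂ) * e) / t = -((s:ℂ) * w) := by
        rw [hwdef]
        field_simp
        ring
      calc Complex.exp (z / t) * t⁻¹ * (Complex.exp (-(z + (s : ℂ) * e) / t) * e)
          = (Complex.exp (z / t) * Complex.exp (-(z + (s : ℂ) * e) / t)) * (t⁻¹ * e) := by ring
        _ = Complex.exp (-((s:ℂ) * w)) * (t⁻¹ * e) := by rw [← Complex.exp_add, harg_eq]
        _ = w * Complex.exp (-((s:ℂ) * w)) := by rw [hwdef]; ring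
    rw [setIntegral_congr_fun (f := fun s : ℝ => Complex.exp (z / t) • (t⁻¹ • ((Complex.exp (-(z + (s : ℂ) * e) / t) * e) • Φ s)))
      (g := fun s : ℝ => (w * Complex.exp (-((s:ℂ) * w))) • Φ s) measurableSet_Ici (fun s _ => hptw s)]
    have hsplit : ∀ s : ℝ, (w * Complex.exp (-((s:ℂ) * w))) • Φ s
        = (w * Complex.exp (-((s:ℂ) * w))) • F s + (w * Complex.exp (-((s:ℂ) * w))) • Pi := by
      intro s
      rw [← smul_add]
      congr 1
      simp [hF]
    rw [setIntegral_congr_fun (g := fun s : ℝ => (w * Complex.exp (-((s:ℂ) * w))) • F s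
        + (w * Complex.exp (-((s:ℂ) * w))) • Pi) measurableSet_Ici (fun s _ => hsplit s)]
    rw [integral_add hIntF hIntP]
    have hwne : w ≠ 0 := by
      intro h0
      rw [hρdef, h0] at hρpos
      simp at hρpos
    have hPint : (∫ s in Ici (0:ℝ), (w * Complex.exp (-((s:ℂ) * w))) • Pi) = Pi := by
      rw [integral_smul_const]
      have h1 : (∫ s in Ici (0:ℝ), w * Complex.exp (-((s:ℂ) * w))) = 1 := by
        rw [integral_Ici_eq_integral_Ioi, integral_const_mul, aux_exp_integral_complex hρpos,
          mul_inv_cancel₀ hwne]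
      rw [h1, one_smul]
    rw [hPint]
    abel
  rw [hstar, dist_eq_norm, add_sub_cancel_left]
  -- now bound the remaining integral
  have hsplitset : (Ici (0:ℝ)) = Icc 0 ε ∪ Ioi ε := (Icc_union_Ioi_eq_Ici hε.le).symm
  have hdisj : Disjoint (Icc (0:ℝ) ε) (Ioi ε) :=
    Set.disjoint_left.mpr fun x hx hx' => absurd hx.2 (not_le.mpr hx')
  have hsub1 : Icc (0:ℝ) ε ⊆ Ici 0 := fun x hx => hx.1
  have hsub2 : Ioi ε ⊆ Ici (0:ℝ) := fun x hx => le_trans hε.le (le_of_lt hx)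
  rw [hsplitset, setIntegral_union hdisj measurableSet_Ioi (hIntF.mono_set hsub1)
    (hIntF.mono_set hsub2)]
  refine lt_of_le_of_lt (norm_add_le _ _) ?_
  have hwle : ‖w‖ ≤ ρ / Real.sin δ := (le_div_iff₀ hsδ).2 hsec2
  have hK0 : 0 ≤ K := by
    rw [hKdef]
    apply setIntegral_nonneg measurableSet_Ioi
    intro x hx
    have : (0:ℝ) ≤ 1 + x := by linarith [le_of_lt (mem_Ioi.1 hx)]
    positivity
  have hfront : ‖∫ s in Icc (0:ℝ) ε, (w * Complex.exp (-((s:ℂ) * w))) • F s‖ ≤ ηt / 4 := by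
    have hdomIci : IntegrableOn (fun s : ℝ => ‖w‖ * (ηt * Real.sin δ / 4) * Real.exp (-(ρ * s)))
        (Ici 0) := by
      rw [integrableOn_Ici_iff_integrableOn_Ioi]
      have := (exp_neg_integrableOn_Ioi (0:ℝ) hρpos).const_mul (‖w‖ * (ηt * Real.sin δ / 4))
      exact IntegrableOn.congr_fun this (fun x _ => by rw [neg_mul]) measurableSet_Ioi
    have h1 : ‖∫ s in Icc (0:ℝ) ε, (w * Complex.exp (-((s:ℂ) * w))) • F s‖
        ≤ ∫ s in Icc (0:ℝ) ε, ‖w‖ * (ηt * Real.sin δ / 4) * Real.exp (-(ρ * s)) := by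
      refine norm_integral_le_of_norm_le (hdomIci.mono_set hsub1) ?_
      refine (ae_restrict_iff' measurableSet_Icc).2 (Eventually.of_forall fun s hs => ?_)
      rw [norm_smul, norm_mul, aux_norm_cexp_neg_mul]
      calc ‖w‖ * Real.exp (-(w.re * s)) * ‖F s‖
          ≤ ‖w‖ * Real.exp (-(w.re * s)) * (ηt * Real.sin δ / 4) :=
            mul_le_mul_of_nonneg_left (hsmall s hs) (by positivity)
        _ = ‖w‖ * (ηt * Real.sin δ / 4) * Real.exp (-(ρ * s)) := by rw [hρdef]; ring
    have h2 : (∫ s in Icc (0:ℝ) ε, ‖w‖ * (ηt * Real.sin δ / 4) * Real.exp (-(ρ * s)))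
        ≤ ∫ s in Ici (0:ℝ), ‖w‖ * (ηt * Real.sin δ / 4) * Real.exp (-(ρ * s)) := by
      refine setIntegral_mono_set hdomIci ?_ hsub1.eventuallyLE
      exact Eventually.of_forall fun s => by positivity
    have h3 : (∫ s in Ici (0:ℝ), ‖w‖ * (ηt * Real.sin δ / 4) * Real.exp (-(ρ * s)))
        = ‖w‖ * (ηt * Real.sin δ / 4) * ρ⁻¹ := by
      rw [integral_Ici_eq_integral_Ioi, integral_const_mul, aux_exp_integral_real hρpos]
    have h4 : ‖w‖ * (ηt * Real.sin δ / 4) * ρ⁻¹ ≤ ηt / 4 := by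
      rw [mul_inv_le_iff₀ hρpos]
      calc ‖w‖ * (ηt * Real.sin δ / 4) = ‖w‖ * Real.sin δ * (ηt / 4) := by ring
        _ ≤ ρ * (ηt / 4) := mul_le_mul_of_nonneg_right hsec2 (by positivity)
        _ = ηt / 4 * ρ := by ring
    linarith
  have htailb : ‖∫ s in Ioi ε, (w * Complex.exp (-((s:ℂ) * w))) • F s‖ < ηt / 4 := by
    have hg2Ioi0 : IntegrableOn (fun s : ℝ => ‖w‖ * (C * (1 + s) ^ N * Real.exp (-(ρ * s))))
        (Ioi 0) := (aux_integrableOn_poly_exp C N hρpos).const_mul ‖w‖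
    have hg2int : IntegrableOn (fun s : ℝ => ‖w‖ * (C * (1 + s) ^ N * Real.exp (-(ρ * s))))
        (Ioi ε) := hg2Ioi0.mono_set (Ioi_subset_Ioi hε.le)
    have hg3Ioi0 : IntegrableOn (fun s : ℝ =>
        (‖w‖ * Real.exp (-((ρ - 1) * ε))) * (C * (1 + s) ^ N * Real.exp (-(1 * s))))
        (Ioi 0) := (aux_integrableOn_poly_exp C N one_pos).const_mul _
    have hg3int : IntegrableOn (fun s : ℝ =>
        (‖w‖ * Real.exp (-((ρ - 1) * ε))) * (C * (1 + s) ^ N * Real.exp (-(1 * s))))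
        (Ioi ε) := hg3Ioi0.mono_set (Ioi_subset_Ioi hε.le)
    have h1 : ‖∫ s in Ioi ε, (w * Complex.exp (-((s:ℂ) * w))) • F s‖
        ≤ ∫ s in Ioi ε, ‖w‖ * (C * (1 + s) ^ N * Real.exp (-(ρ * s))) := by
      refine norm_integral_le_of_norm_le hg2int ?_
      refine (ae_restrict_iff' measurableSet_Ioi).2 (Eventually.of_forall fun s hs => ?_)
      have hs0 : (0:ℝ) ≤ s := le_trans hε.le (le_of_lt hs)
      rw [norm_smul, norm_mul, aux_norm_cexp_neg_mul]
      calc ‖w‖ * Real.exp (-(w.re * s)) * ‖F s‖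
          ≤ ‖w‖ * Real.exp (-(w.re * s)) * (C * (1 + s) ^ N) :=
            mul_le_mul_of_nonneg_left (hFbound s hs0) (by positivity)
        _ = ‖w‖ * (C * (1 + s) ^ N * Real.exp (-(ρ * s))) := by rw [hρdef]; ring
    have h2 : (∫ s in Ioi ε, ‖w‖ * (C * (1 + s) ^ N * Real.exp (-(ρ * s))))
        ≤ ∫ s in Ioi ε,
          (‖w‖ * Real.exp (-((ρ - 1) * ε))) * (C * (1 + s) ^ N * Real.exp (-(1 * s))) := by
      refine setIntegral_mono_on hg2int hg3int measurableSet_Ioi fun s hs => ?_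
      have hsε : ε ≤ s := le_of_lt hs
      have hs0 : (0:ℝ) ≤ s := le_trans hε.le hsε
      have hexp : Real.exp (-(ρ * s)) ≤ Real.exp (-((ρ - 1) * ε)) * Real.exp (-(1 * s)) := by
        rw [← Real.exp_add]
        apply Real.exp_le_exp.2
        have hmono : (ρ-1)*ε ≤ (ρ-1)*s := mul_le_mul_of_nonneg_left hsε (by linarith)
        linarith
      have h1s : (0:ℝ) ≤ (1 + s) ^ N := by positivity
      calc ‖w‖ * (C * (1 + s) ^ N * Real.exp (-(ρ * s)))
          ≤ ‖w‖ * (C * (1 + s) ^ N * (Real.exp (-((ρ - 1) * ε)) * Real.exp (-(1 * s)))) := by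
            apply mul_le_mul_of_nonneg_left ?_ (norm_nonneg w)
            exact mul_le_mul_of_nonneg_left hexp (by positivity)
        _ = (‖w‖ * Real.exp (-((ρ - 1) * ε))) * (C * (1 + s) ^ N * Real.exp (-(1 * s))) := by
            ring
    have h3 : (∫ s in Ioi ε,
          (‖w‖ * Real.exp (-((ρ - 1) * ε))) * (C * (1 + s) ^ N * Real.exp (-(1 * s))))
        ≤ (‖w‖ * Real.exp (-((ρ - 1) * ε))) * K := by
      have hle : (∫ s in Ioi ε,
            (‖w‖ * Real.exp (-((ρ - 1) * ε))) * (C * (1 + s) ^ N * Real.exp (-(1 * s))))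
          ≤ ∫ s in Ioi (0:ℝ),
            (‖w‖ * Real.exp (-((ρ - 1) * ε))) * (C * (1 + s) ^ N * Real.exp (-(1 * s))) := by
        refine setIntegral_mono_set hg3Ioi0 ?_ (Ioi_subset_Ioi hε.le).eventuallyLE
        refine (ae_restrict_iff' measurableSet_Ioi).2 (Eventually.of_forall fun s hs => ?_)
        have : (0:ℝ) ≤ 1 + s := by linarith [le_of_lt (mem_Ioi.1 hs)]
        positivity
      refine le_trans hle (le_of_eq ?_)
      rw [integral_const_mul, hKdef]
    have h4 : (‖w‖ * Real.exp (-((ρ - 1) * ε))) * K ≤ A * (ρ * Real.exp (-(ε * ρ))) := by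
      have hAeq : A * (ρ * Real.exp (-(ε * ρ))) = (ρ / Real.sin δ) * Real.exp (-((ρ - 1) * ε)) * K := by
        rw [hAdef, show (-((ρ-1)*ε)) = ε + -(ε*ρ) by ring, Real.exp_add]
        ring
      rw [hAeq]
      have := mul_le_mul_of_nonneg_right
        (mul_le_mul_of_nonneg_right hwle (Real.exp_pos (-((ρ - 1) * ε))).le) hK0
      linarith
    have h5 : A * (ρ * Real.exp (-(ε * ρ))) < ηt / 4 :=
      hρ₀ ρ (le_of_lt (lt_of_le_of_lt (le_max_left _ _) hρbig))
    linarith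
  linarith

end StmtAux

attribute [local instance] Matrix.normedAddCommGroup Matrix.normedSpace

/-- if `φ` is of polynomial growth along the ray `z_i + ℝ_{≥0} e^{iθ}` and
analytic at `z_i` with `φ(z_i) = P_i`, then the Fourier–Laplace transform
`Y(t) = t⁻¹ ∫₀^∞ φ(z_i+s e^{iθ}) e^{-(z_i+s e^{iθ})/t} e^{iθ} ds` satisfies
`Y(t) e^{z_i/t} → P_i` as `t → 0` in every closed subsector
`{|arg (t e^{-iθ})| ≤ π/2 - δ}` of `H_θ`. -/
theorem stmt10 {d : ℕ} {m : ℕ} (z : Fin m → ℂ) (hz : Function.Injective z)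
    (P : Fin m → Matrix (Fin d) (Fin d) ℂ) (hPne : ∀ a, P a ≠ 0)
    (hmul : ∀ a b, P a * P b = if a = b then P a else 0)
    (hsum : ∑ a, P a = 1)
    (θ : ℝ) (i : Fin m) (φ : ℂ → Matrix (Fin d) (Fin d) ℂ)
    (hφmeas : AEStronglyMeasurable
      (fun s : ℝ => φ (z i + (s : ℂ) * Complex.exp ((θ : ℂ) * Complex.I)))
      (volume.restrict (Set.Ici (0 : ℝ))))
    (c : ℝ) (N : ℕ)
    (hgrow : ∀ s : ℝ, 0 ≤ s →
      ‖φ (z i + (s : ℂ) * Complex.exp ((θ : ℂ) * Complex.I))‖ ≤ c * (1 + s) ^ N)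
    (r : ℝ) (hr : 0 < r) (hφanal : DifferentiableOn ℂ φ (Metric.ball (z i) r))
    (hφi : φ (z i) = P i) :
    ∀ δ : ℝ, 0 < δ → δ < Real.pi / 2 →
      Tendsto (fun t : ℂ => Complex.exp (z i / t) •
          (t⁻¹ • ∫ s in Set.Ici (0 : ℝ),
            (Complex.exp (-(z i + (s : ℂ) * Complex.exp ((θ : ℂ) * Complex.I)) / t) *
              Complex.exp ((θ : ℂ) * Complex.I)) •
              φ (z i + (s : ℂ) * Complex.exp ((θ : ℂ) * Complex.I))))
        (𝓝[{t : ℂ | t ≠ 0 ∧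
            |Complex.arg (t * Complex.exp (-(θ : ℂ) * Complex.I))| ≤ Real.pi / 2 - δ}] 0)
        (𝓝 (P i)) := by
  intro δ hδ1 hδ2
  have hφcont : ContinuousAt φ (z i) :=
    hφanal.continuousOn.continuousAt (Metric.ball_mem_nhds _ hr)
  exact aux_main (z i) θ φ (P i) hφmeas c N hgrow hφcont hφi hδ1 hδ2
end

section
/- Let V be a complex vector space and U ⊆ V a subspace. If φ : V → V and ψ : V → V are non-commutative power series that both preserve U, then the composition ψ∘φ preserves U. -/
/-- A non-commutative power series `U → V`: a sequence of `n`-multilinear maps `Uⁿ → V`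
for `n ≥ 1` (the `n = 0` component is irrelevant). -/
def NCSeries (U V : Type*) [AddCommGroup U] [Module ℂ U] [AddCommGroup V] [Module ℂ V] :=
  ∀ n : ℕ, MultilinearMap ℂ (fun _ : Fin n => U) V

/-- The `n`-th component of the composition `ψ ∘ φ` of non-commutative power series,
as a function: `(ψ∘φ)_n(u₁,…,u_n) = Σ_{0=i₀<⋯<i_k=n} ψ_k(φ_{i₁-i₀}(u₁,…), …)`. -/
noncomputable def ncComp {U V W : Type*} [AddCommGroup U] [Module ℂ U]
    [AddCommGroup V] [Module ℂ V] [AddCommGroup W] [Module ℂ W]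
    (ψ : NCSeries V W) (φ : NCSeries U V) (n : ℕ) (v : Fin n → U) : W :=
  ∑ c : Composition n,
    ψ c.length (fun j => φ (c.blocksFun j) (v ∘ c.embedding j))

/-- The components of the identity non-commutative power series, as functions:
`(id)₁ = id` and `(id)_n = 0` for `n ≠ 1`. -/
def ncIdFun (V : Type*) [AddCommGroup V] [Module ℂ V] : ∀ n : ℕ, (Fin n → V) → V
  | 1, v => v 0
  | _, _ => 0

/-- `ψ` is a two-sided compositional inverse of `φ`. -/
def NCInverse {U V : Type*} [AddCommGroup U] [Module ℂ U] [AddCommGroup V] [Module ℂ V]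
    (φ : NCSeries U V) (ψ : NCSeries V U) : Prop :=
  (∀ n : ℕ, 1 ≤ n → ∀ v : Fin n → U, ncComp ψ φ n v = ncIdFun U n v) ∧
  (∀ n : ℕ, 1 ≤ n → ∀ v : Fin n → V, ncComp φ ψ n v = ncIdFun V n v)

/-- A sequence of `n`-ary functions on `V` preserves a subspace `U ⊆ V` if all its
symmetrisations map `U` into `U`. -/
def FunPreserves {V : Type*} [AddCommGroup V] [Module ℂ V]
    (f : ∀ n : ℕ, (Fin n → V) → V) (U : Submodule ℂ V) : Prop :=
  ∀ n : ℕ, 1 ≤ n → ∀ v : Fin n → V, (∀ i, v i ∈ U) →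
    (∑ σ : Equiv.Perm (Fin n), f n (v ∘ σ)) ∈ U

section Aux

open Finset Equiv

variable {V : Type*} [AddCommGroup V] [Module ℂ V]

/-- The relabelling permutation of `Fin n` associated to two compositions with matched
blocks and a family of in-block permutations. -/
def relabelPerm {n : ℕ} (c c' : Composition n) (ρ : Fin c'.length ≃ Fin c.length)
    (h : ∀ j, c'.blocksFun j = c.blocksFun (ρ j))
    (y : ∀ j : Fin c'.length, Equiv.Perm (Fin (c'.blocksFun j))) : Equiv.Perm (Fin n) :=
  c'.blocksFinEquiv.symm.trans
    ((Equiv.sigmaCongr ρ fun j => (y j).trans (finCongr (h j))).trans c.blocksFinEquiv)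

theorem relabelPerm_apply {n : ℕ} (c c' : Composition n) (ρ : Fin c'.length ≃ Fin c.length)
    (h : ∀ j, c'.blocksFun j = c.blocksFun (ρ j))
    (y : ∀ j : Fin c'.length, Equiv.Perm (Fin (c'.blocksFun j))) (j : Fin c'.length)
    (i : Fin (c'.blocksFun j)) :
    relabelPerm c c' ρ h y (c'.embedding j i) = c.embedding (ρ j) (Fin.cast (h j) (y j i)) := by
  have h1 : c'.blocksFinEquiv.symm (c'.embedding j i) = ⟨j, i⟩ :=
    c'.blocksFinEquiv.symm_apply_apply ⟨j, i⟩
  simp only [relabelPerm, Equiv.trans_apply, h1]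
  rfl

/-- Permuting the blocks of a composition. -/
def permuteComp {n : ℕ} (c : Composition n) (e : Equiv.Perm (Fin c.length)) : Composition n where
  blocks := List.ofFn fun j => c.blocksFun (e j)
  blocks_pos := by
    intro i hi
    rw [List.mem_ofFn] at hi
    obtain ⟨j, rfl⟩ := hi
    exact c.one_le_blocksFun _
  blocks_sum := by
    rw [List.sum_ofFn, Equiv.sum_comp e c.blocksFun]
    exact c.sum_blocksFun

theorem length_permuteComp {n : ℕ} (c : Composition n) (e : Equiv.Perm (Fin c.length)) :
    (permuteComp c e).length = c.length := by
  show (List.ofFn fun j => c.blocksFun (e j)).length = c.length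
  rw [List.length_ofFn]

theorem blocksFun_permuteComp {n : ℕ} (c : Composition n) (e : Equiv.Perm (Fin c.length))
    (j : Fin (permuteComp c e).length) :
    (permuteComp c e).blocksFun j = c.blocksFun (e (Fin.cast (length_permuteComp c e) j)) := by
  simp only [Composition.blocksFun, permuteComp, List.get_ofFn, List.get_eq_getElem, List.getElem_ofFn]
  exact List.getElem_ofFn ..

theorem ofFn_comp_cast {α : Type*} {m k : ℕ} (h : k = m) (f : Fin m → α) :
    List.ofFn (f ∘ Fin.cast h) = List.ofFn f := by subst h; rfl

theorem permuteComp_one {n : ℕ} (c : Composition n) : permuteComp c 1 = c := by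
  apply Composition.ext
  show List.ofFn (fun j => c.blocksFun ((1 : Equiv.Perm (Fin c.length)) j)) = c.blocks
  simp only [Equiv.Perm.coe_one, id_eq]
  exact c.ofFn_blocksFun

theorem permCongr_permCongr {α β γ : Type*} (A : β ≃ γ) (B : α ≃ β) (p : Equiv.Perm α) :
    Equiv.permCongr A (Equiv.permCongr B p) = Equiv.permCongr (B.trans A) p := by
  ext x
  simp

theorem permuteComp_permuteComp {n : ℕ} (c : Composition n) (e : Equiv.Perm (Fin c.length))
    (e' : Equiv.Perm (Fin (permuteComp c e).length)) :
    permuteComp (permuteComp c e) e'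
      = permuteComp c (e * Equiv.permCongr (finCongr (length_permuteComp c e)) e') := by
  apply Composition.ext
  show List.ofFn (fun j => (permuteComp c e).blocksFun (e' j)) = _
  have h1 : (fun j => (permuteComp c e).blocksFun (e' j))
      = ((fun x => c.blocksFun ((e * Equiv.permCongr (finCongr (length_permuteComp c e)) e') x))
          ∘ Fin.cast (length_permuteComp c e)) := by
    funext j
    rw [blocksFun_permuteComp]
    rfl
  rw [h1, ofFn_comp_cast]
  rfl

/-- Lifting a permutation of `Fin k` to `Fin m` when `m = k` (and the identity otherwise). -/
noncomputable def liftPerm (m k : ℕ) (π : Equiv.Perm (Fin k)) : Equiv.Perm (Fin m) :=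
  if h : m = k then Equiv.permCongr (finCongr h).symm π else 1

theorem liftPerm_eq {m k : ℕ} (h : m = k) (π : Equiv.Perm (Fin k)) :
    liftPerm m k π = Equiv.permCongr (finCongr h).symm π := dif_pos h

theorem liftPerm_mul {m m' k : ℕ} (hm : m = k) (hm' : m' = k) (h : m' = m)
    (π π' : Equiv.Perm (Fin k)) (hππ : π * π' = 1) :
    liftPerm m k π * Equiv.permCongr (finCongr h) (liftPerm m' k π') = 1 := by
  subst h
  subst hm
  rw [liftPerm_eq rfl, liftPerm_eq rfl]
  ext x
  simp only [Equiv.Perm.mul_apply, Equiv.permCongr_apply, Equiv.symm_symm, finCongr_apply,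
    Fin.cast_refl, Equiv.Perm.coe_one, id_eq, finCongr_refl, Equiv.refl_apply, Equiv.refl_symm]
  rw [← Equiv.Perm.mul_apply, hππ]
  rfl

/-- transport of an `NCSeries` application along an equality of arities -/
theorem app_cast (f : NCSeries V V) {m m' : ℕ} (e : m = m') (w : Fin m' → V) :
    f m (w ∘ Fin.cast e) = f m' w := by subst e; rfl

theorem symsum_cast (φ : NCSeries V V) {m m' : ℕ} (e : m = m') (w : Fin m' → V) :
    (∑ y : Equiv.Perm (Fin m), φ m ((w ∘ Fin.cast e) ∘ y))
      = ∑ y : Equiv.Perm (Fin m'), φ m' (w ∘ y) := by subst e; rfl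

/-- the in-block symmetrisation of `φ` along a composition -/
noncomputable def Wsym (φ : NCSeries V V) {n : ℕ} (c : Composition n) (u : Fin n → V)
    (j : Fin c.length) : V :=
  ∑ y : Equiv.Perm (Fin (c.blocksFun j)), φ (c.blocksFun j) ((u ∘ c.embedding j) ∘ y)

theorem Wsym_mem {U : Submodule ℂ V} (φ : NCSeries V V)
    (hφ : FunPreserves (fun n => φ n) U) {n : ℕ} (c : Composition n)
    (u : Fin n → V) (hu : ∀ i, u i ∈ U) (j : Fin c.length) : Wsym φ c u j ∈ U :=
  hφ _ (c.one_le_blocksFun j) _ (fun _ => hu _)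

theorem Wsym_relabel (φ : NCSeries V V) {n : ℕ} (c c' : Composition n)
    (ρ : Fin c'.length ≃ Fin c.length) (h : ∀ j, c'.blocksFun j = c.blocksFun (ρ j))
    (u : Fin n → V) (j : Fin c'.length) :
    Wsym φ c' (u ∘ relabelPerm c c' ρ h (fun _ => 1)) j = Wsym φ c u (ρ j) := by
  have key : (u ∘ relabelPerm c c' ρ h (fun _ => 1)) ∘ c'.embedding j
      = (u ∘ c.embedding (ρ j)) ∘ Fin.cast (h j) := by
    funext i
    simp only [Function.comp_apply]
    rw [relabelPerm_apply]
    rfl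
  show (∑ y : Equiv.Perm (Fin (c'.blocksFun j)), φ (c'.blocksFun j)
      (((u ∘ relabelPerm c c' ρ h (fun _ => 1)) ∘ c'.embedding j) ∘ y)) = _
  rw [key, symsum_cast]
  rfl

theorem stage1 (φ ψ : NCSeries V V) {n : ℕ} (v : Fin n → V) (c : Composition n) :
    (∑ σ : Equiv.Perm (Fin n), ψ c.length (Wsym φ c (v ∘ σ)))
      = (∏ j, (c.blocksFun j).factorial) •
        ∑ σ : Equiv.Perm (Fin n), ψ c.length
          (fun j => φ (c.blocksFun j) ((v ∘ σ) ∘ c.embedding j)) := by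
  classical
  have step1 : ∀ σ : Equiv.Perm (Fin n), ψ c.length (Wsym φ c (v ∘ σ))
      = ∑ r : (∀ j : Fin c.length, Equiv.Perm (Fin (c.blocksFun j))),
          ψ c.length (fun j => φ (c.blocksFun j) ((((v ∘ σ) ∘ c.embedding j)) ∘ r j)) := by
    intro σ
    exact (ψ c.length).map_sum
      (fun j (y : Equiv.Perm (Fin (c.blocksFun j))) =>
        φ (c.blocksFun j) (((v ∘ σ) ∘ c.embedding j) ∘ y))
  calc (∑ σ : Equiv.Perm (Fin n), ψ c.length (Wsym φ c (v ∘ σ)))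
      = ∑ σ : Equiv.Perm (Fin n),
          ∑ r : (∀ j : Fin c.length, Equiv.Perm (Fin (c.blocksFun j))),
          ψ c.length (fun j => φ (c.blocksFun j) ((((v ∘ σ) ∘ c.embedding j)) ∘ r j)) := by
        exact Finset.sum_congr rfl fun σ _ => step1 σ
    _ = ∑ r : (∀ j : Fin c.length, Equiv.Perm (Fin (c.blocksFun j))),
          ∑ σ : Equiv.Perm (Fin n),
          ψ c.length (fun j => φ (c.blocksFun j) ((((v ∘ σ) ∘ c.embedding j)) ∘ r j)) :=
        Finset.sum_comm
    _ = ∑ _r : (∀ j : Fin c.length, Equiv.Perm (Fin (c.blocksFun j))),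
          ∑ σ : Equiv.Perm (Fin n),
          ψ c.length (fun j => φ (c.blocksFun j) ((v ∘ σ) ∘ c.embedding j)) := by
        refine Finset.sum_congr rfl fun r _ => ?_
        have hterm : ∀ σ : Equiv.Perm (Fin n),
            ψ c.length (fun j => φ (c.blocksFun j) ((((v ∘ σ) ∘ c.embedding j)) ∘ r j))
            = (fun τ : Equiv.Perm (Fin n) => ψ c.length
                (fun j => φ (c.blocksFun j) ((v ∘ τ) ∘ c.embedding j)))
              ((Equiv.mulRight (relabelPerm c c (Equiv.refl _) (fun _ => rfl) r)) σ) := by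
          intro σ
          congr 1
          funext j
          congr 1
          funext i
          show v (σ ((c.embedding j) (r j i)))
            = v (σ (relabelPerm c c (Equiv.refl _) (fun _ => rfl) r ((c.embedding j) i)))
          exact (congrArg (fun x => v (σ x))
            (relabelPerm_apply c c (Equiv.refl _) (fun _ => rfl) r j i)).symm
        rw [Finset.sum_congr rfl fun σ _ => hterm σ]
        exact Equiv.sum_comp (Equiv.mulRight (relabelPerm c c (Equiv.refl _) (fun _ => rfl) r))
          (fun τ : Equiv.Perm (Fin n) => ψ c.length
            (fun j => φ (c.blocksFun j) ((v ∘ τ) ∘ c.embedding j)))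
    _ = (∏ j, (c.blocksFun j).factorial) •
          ∑ σ : Equiv.Perm (Fin n), ψ c.length
            (fun j => φ (c.blocksFun j) ((v ∘ σ) ∘ c.embedding j)) := by
        rw [Finset.sum_const, Finset.card_univ]
        congr 1
        rw [Fintype.card_pi]
        exact Finset.prod_congr rfl fun j _ => by
          rw [Fintype.card_perm, Fintype.card_fin]

theorem stage2 (φ ψ : NCSeries V V) {n k : ℕ} (v : Fin n → V) (c : Composition n)
    (hc : c.length = k) (π : Equiv.Perm (Fin k)) :
    (∑ σ : Equiv.Perm (Fin n),
        ψ (permuteComp c (liftPerm c.length k π)).length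
          (Wsym φ (permuteComp c (liftPerm c.length k π)) (v ∘ σ)))
      = ∑ σ : Equiv.Perm (Fin n),
          ψ c.length (Wsym φ c (v ∘ σ) ∘ liftPerm c.length k π) := by
  set e : Equiv.Perm (Fin c.length) := liftPerm c.length k π with he
  set c' : Composition n := permuteComp c e with hc'
  have hlen : c'.length = c.length := length_permuteComp c e
  set ρ : Fin c'.length ≃ Fin c.length := (finCongr hlen).trans e with hρ
  have h : ∀ j, c'.blocksFun j = c.blocksFun (ρ j) := fun j => blocksFun_permuteComp c e j
  set s : Equiv.Perm (Fin n) := relabelPerm c c' ρ h (fun _ => 1) with hs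
  calc (∑ σ : Equiv.Perm (Fin n), ψ c'.length (Wsym φ c' (v ∘ σ)))
      = ∑ σ : Equiv.Perm (Fin n), ψ c'.length (Wsym φ c' (v ∘ ⇑(σ * s))) :=
        (Equiv.sum_comp (Equiv.mulRight s)
          (fun τ : Equiv.Perm (Fin n) => ψ c'.length (Wsym φ c' (v ∘ τ)))).symm
    _ = ∑ σ : Equiv.Perm (Fin n), ψ c.length (Wsym φ c (v ∘ σ) ∘ e) := by
        refine Finset.sum_congr rfl fun σ _ => ?_
        have h2 : Wsym φ c' (v ∘ ⇑(σ * s)) = (Wsym φ c (v ∘ σ)) ∘ ρ := by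
          funext j
          have hvs : v ∘ ⇑(σ * s) = (v ∘ σ) ∘ s := by
            rw [Equiv.Perm.coe_mul]
            rfl
          rw [hvs]
          exact Wsym_relabel φ c c' ρ h (v ∘ σ) j
        rw [h2]
        have h3 : ((Wsym φ c (v ∘ σ)) ∘ ρ : Fin c'.length → V)
            = ((Wsym φ c (v ∘ σ)) ∘ e) ∘ Fin.cast hlen := rfl
        rw [h3]
        exact app_cast ψ hlen _

end Aux

/-- if the non-commutative power series `φ, ψ : V → V` both preserve the
subspace `U ⊆ V`, then so does their composition `ψ ∘ φ`. -/
theorem stmt13 {V : Type*} [AddCommGroup V] [Module ℂ V] (U : Submodule ℂ V)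
    (φ ψ : NCSeries V V)
    (hφ : FunPreserves (fun n => φ n) U) (hψ : FunPreserves (fun n => ψ n) U) :
    FunPreserves (ncComp ψ φ) U := by
  classical
  intro n hn v hv
  -- the (ℕ-valued) normalisation constant attached to a composition
  set N : Composition n → ℕ := fun c => ∏ j, (c.blocksFun j).factorial with hN
  have hNpos : ∀ c : Composition n, 0 < N c := fun c =>
    Finset.prod_pos fun j _ => Nat.factorial_pos _
  have hNne : ∀ c : Composition n, ((N c : ℂ)) ≠ 0 := fun c =>
    Nat.cast_ne_zero.mpr (hNpos c).ne'
  -- Step 1: rewrite the symmetrised sum using in-block symmetrisations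
  have expand : (∑ σ : Equiv.Perm (Fin n), ncComp ψ φ n (v ∘ σ))
      = ∑ c : Composition n, ((N c : ℂ))⁻¹ •
          ∑ σ : Equiv.Perm (Fin n), ψ c.length (Wsym φ c (v ∘ σ)) := by
    simp only [ncComp]
    rw [Finset.sum_comm]
    refine Finset.sum_congr rfl fun c _ => ?_
    have h1 := stage1 φ ψ v c
    have h2 : ((N c : ℂ)) • (∑ σ : Equiv.Perm (Fin n), ψ c.length
        (fun j => φ (c.blocksFun j) ((v ∘ σ) ∘ c.embedding j)))
        = ∑ σ : Equiv.Perm (Fin n), ψ c.length (Wsym φ c (v ∘ σ)) := by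
      rw [h1, hN]
      exact Nat.cast_smul_eq_nsmul ℂ _ _
    rw [← h2, ← smul_assoc, smul_eq_mul, inv_mul_cancel₀ (hNne c), one_smul]
  rw [expand]
  -- Step 2: group the compositions according to their lengths
  rw [← Finset.sum_fiberwise_of_maps_to
    (g := fun c : Composition n => c.length)
    (fun c _ => Finset.mem_range.mpr (Nat.lt_succ_of_le c.length_le))
    (fun c : Composition n => ((N c : ℂ))⁻¹ •
      ∑ σ : Equiv.Perm (Fin n), ψ c.length (Wsym φ c (v ∘ σ)))]
  refine Submodule.sum_mem U fun k _ => ?_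
  rcases Nat.eq_zero_or_pos k with hk0 | hk
  · -- no composition has length 0 (since n ≥ 1)
    subst hk0
    rw [Finset.sum_eq_zero]
    · exact U.zero_mem
    intro c hc
    rw [Finset.mem_filter] at hc
    exfalso
    have hb : c.blocks = [] := List.length_eq_zero_iff.mp hc.2
    have := c.blocks_sum
    rw [hb] at this
    simp at this
    omega
  -- the fibre over k, with its sum R
  set F : Finset (Composition n) :=
    Finset.univ.filter (fun c : Composition n => c.length = k) with hF
  set g : Composition n → V := fun c => ((N c : ℂ))⁻¹ •
    ∑ σ : Equiv.Perm (Fin n), ψ c.length (Wsym φ c (v ∘ σ)) with hg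
  -- Step 3: averaging over block permutations
  have key : ∀ π : Equiv.Perm (Fin k), (∑ c ∈ F, g c)
      = ∑ c ∈ F, ((N c : ℂ))⁻¹ •
          ∑ σ : Equiv.Perm (Fin n), ψ c.length (Wsym φ c (v ∘ σ) ∘ liftPerm c.length k π) := by
    intro π
    refine (Finset.sum_nbij'
      (i := fun c => permuteComp c (liftPerm c.length k π))
      (j := fun c => permuteComp c (liftPerm c.length k π⁻¹)) ?_ ?_ ?_ ?_ ?_).symm
    · intro c hcF
      rw [hF, Finset.mem_filter] at hcF ⊢
      exact ⟨Finset.mem_univ _, (length_permuteComp _ _).trans hcF.2⟩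
    · intro c hcF
      rw [hF, Finset.mem_filter] at hcF ⊢
      exact ⟨Finset.mem_univ _, (length_permuteComp _ _).trans hcF.2⟩
    · -- left inverse
      intro c hcF
      rw [hF, Finset.mem_filter] at hcF
      have hc : c.length = k := hcF.2
      have hc2 : (permuteComp c (liftPerm c.length k π)).length = k :=
        (length_permuteComp _ _).trans hc
      show permuteComp (permuteComp c (liftPerm c.length k π))
        (liftPerm (permuteComp c (liftPerm c.length k π)).length k π⁻¹) = c
      rw [permuteComp_permuteComp]
      have harg : liftPerm c.length k π *
          Equiv.permCongr (finCongr (length_permuteComp c (liftPerm c.length k π)))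
            (liftPerm (permuteComp c (liftPerm c.length k π)).length k π⁻¹) = 1 :=
        liftPerm_mul hc hc2 _ π π⁻¹ (by simp)
      rw [harg, permuteComp_one]
    · -- right inverse
      intro c hcF
      rw [hF, Finset.mem_filter] at hcF
      have hc : c.length = k := hcF.2
      have hc2 : (permuteComp c (liftPerm c.length k π⁻¹)).length = k :=
        (length_permuteComp _ _).trans hc
      show permuteComp (permuteComp c (liftPerm c.length k π⁻¹))
        (liftPerm (permuteComp c (liftPerm c.length k π⁻¹)).length k π) = c
      rw [permuteComp_permuteComp]
      have harg : liftPerm c.length k π⁻¹ *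
          Equiv.permCongr (finCongr (length_permuteComp c (liftPerm c.length k π⁻¹)))
            (liftPerm (permuteComp c (liftPerm c.length k π⁻¹)).length k π) = 1 :=
        liftPerm_mul hc hc2 _ π⁻¹ π (by simp)
      rw [harg, permuteComp_one]
    · -- the terms match
      intro c hcF
      rw [hF, Finset.mem_filter] at hcF
      have hc : c.length = k := hcF.2
      simp only [hg]
      have hNinv : N (permuteComp c (liftPerm c.length k π)) = N c := by
        simp only [hN]
        have := Equiv.prod_comp ((finCongr (length_permuteComp c (liftPerm c.length k π))).trans
          (liftPerm c.length k π)) (fun j => (c.blocksFun j).factorial)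
        rw [← this]
        exact Finset.prod_congr rfl fun j _ => by
          rw [blocksFun_permuteComp]
          rfl
      rw [stage2 φ ψ v c hc π, hNinv]
  -- Step 4: summing over all block permutations
  set M : ℕ := Fintype.card (Equiv.Perm (Fin k)) with hM
  have hMne : ((M : ℂ)) ≠ 0 := Nat.cast_ne_zero.mpr Fintype.card_ne_zero
  have big : ((M : ℂ)) • (∑ c ∈ F, g c)
      = ∑ c ∈ F, ((N c : ℂ))⁻¹ • ∑ σ : Equiv.Perm (Fin n),
          ∑ τ : Equiv.Perm (Fin c.length), ψ c.length (Wsym φ c (v ∘ σ) ∘ τ) := by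
    have h1 : ((M : ℂ)) • (∑ c ∈ F, g c)
        = ∑ _π : Equiv.Perm (Fin k), ∑ c ∈ F, g c := by
      rw [Finset.sum_const, Finset.card_univ, ← hM, Nat.cast_smul_eq_nsmul]
    rw [h1]
    rw [Finset.sum_congr rfl fun π _ => key π]
    rw [Finset.sum_comm]
    refine Finset.sum_congr rfl fun c hcF => ?_
    rw [hF, Finset.mem_filter] at hcF
    have hc : c.length = k := hcF.2
    rw [← Finset.smul_sum]
    congr 1
    rw [Finset.sum_comm]
    refine Finset.sum_congr rfl fun σ _ => ?_
    have h2 : ∀ π : Equiv.Perm (Fin k),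
        ψ c.length (Wsym φ c (v ∘ σ) ∘ liftPerm c.length k π)
        = (fun τ : Equiv.Perm (Fin c.length) => ψ c.length (Wsym φ c (v ∘ σ) ∘ τ))
            ((Equiv.permCongr (finCongr hc).symm) π) := by
      intro π
      rw [liftPerm_eq hc]
    rw [Finset.sum_congr rfl fun π _ => h2 π]
    exact Equiv.sum_comp (Equiv.permCongr (finCongr hc).symm)
      (fun τ : Equiv.Perm (Fin c.length) => ψ c.length (Wsym φ c (v ∘ σ) ∘ τ))
  -- Step 5: membership
  have mem : (∑ c ∈ F, ((N c : ℂ))⁻¹ • ∑ σ : Equiv.Perm (Fin n),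
      ∑ τ : Equiv.Perm (Fin c.length), ψ c.length (Wsym φ c (v ∘ σ) ∘ τ)) ∈ U := by
    refine Submodule.sum_mem U fun c hcF => Submodule.smul_mem U _ ?_
    refine Submodule.sum_mem U fun σ _ => ?_
    rw [hF, Finset.mem_filter] at hcF
    have hc : c.length = k := hcF.2
    exact hψ c.length (by omega) (Wsym φ c (v ∘ σ))
      (fun j => Wsym_mem φ hφ c (v ∘ σ) (fun i => hv _) j)
  have : (∑ c ∈ F, g c) = ((M : ℂ))⁻¹ • (((M : ℂ)) • (∑ c ∈ F, g c)) := by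
    rw [← smul_assoc, smul_eq_mul, inv_mul_cancel₀ hMne, one_smul]
  rw [this, big]
  exact Submodule.smul_mem U _ mem
end

section
/- A transform F is invertible (i.e. there exists a transform G with G∘F = id = F∘G) if and only if the function F₁ : ℂ → ℂ is nowhere vanishing. -/
/-- A transform: a sequence of functions `F_n : ℂⁿ → ℂ` for `n ≥ 1`
(the `n = 0` component is irrelevant). -/
def Transform := ∀ n : ℕ, (Fin n → ℂ) → ℂ

/-- The composite transform:
`(G∘F)_n(z₁,…,z_n) = Σ_{0=i₀<⋯<i_k=n} G_k(Σ_{block 1} z, …, Σ_{block k} z) ∏_j F_{|block j|}(z|_{block j})`. -/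
noncomputable def tComp (G F : Transform) : Transform := fun n z =>
  ∑ c : Composition n,
    G c.length (fun j => ∑ i, z (c.embedding j i)) *
      ∏ j, F (c.blocksFun j) (z ∘ c.embedding j)

/-- The identity transform: `id₁ ≡ 1`, `id_n ≡ 0` for `n ≠ 1`. -/
def tId : Transform := fun n _ => if n = 1 then 1 else 0

/-- `G` is a two-sided compositional inverse of the transform `F`. -/
def TInverse (F G : Transform) : Prop :=
  (∀ n : ℕ, 1 ≤ n → ∀ z : Fin n → ℂ, tComp G F n z = tId n z) ∧
  (∀ n : ℕ, 1 ≤ n → ∀ z : Fin n → ℂ, tComp F G n z = tId n z)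

/-- generic congruence across an equality of lengths -/
theorem ffcongr {α : Sort*} (Φ : ∀ m : ℕ, (Fin m → ℂ) → α) {m₁ m₂ : ℕ} (h : m₁ = m₂)
    {v : Fin m₁ → ℂ} {w : Fin m₂ → ℂ}
    (hv : ∀ (k : ℕ) (h1 : k < m₁) (h2 : k < m₂), v ⟨k, h1⟩ = w ⟨k, h2⟩) :
    Φ m₁ v = Φ m₂ w := by
  subst h
  have : v = w := funext fun k => by simpa using hv k k.2 k.2
  rw [this]

noncomputable def linv (F : Transform) : ∀ n : ℕ, (Fin n → ℂ) → ℂ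
  | n => fun z =>
    (tId n z -
        ∑ c ∈ (Finset.univ.filter fun c : Composition n => c.length < n).attach,
          linv F c.1.length (fun j => ∑ i, z (c.1.embedding j i)) *
            ∏ j, F (c.1.blocksFun j) (z ∘ c.1.embedding j)) /
      ∏ i, F 1 (fun _ => z i)
  termination_by n => n
  decreasing_by exact (Finset.mem_filter.mp c.2).2

theorem linv_def (F : Transform) (n : ℕ) (z : Fin n → ℂ) :
    linv F n z = (tId n z -
        ∑ c ∈ (Finset.univ.filter fun c : Composition n => c.length < n).attach,
          linv F c.1.length (fun j => ∑ i, z (c.1.embedding j i)) *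
            ∏ j, F (c.1.blocksFun j) (z ∘ c.1.embedding j)) /
      ∏ i, F 1 (fun _ => z i) := by
  rw [linv]

open Composition in
theorem key_emb {n : ℕ} (a : Composition n) (b : Composition a.length)
    {j i k : ℕ} (hj : j < b.length) (hi : i < b.blocksFun ⟨j, hj⟩)
    (hj' : j < (a.gather b).length)
    (hi' : i < (a.sigmaCompositionAux b ⟨j, hj'⟩).length)
    (hk : k < a.blocksFun (b.embedding ⟨j, hj⟩ ⟨i, hi⟩))
    (hk' : k < (a.sigmaCompositionAux b ⟨j, hj'⟩).blocksFun ⟨i, hi'⟩) :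
    a.embedding (b.embedding ⟨j, hj⟩ ⟨i, hi⟩) ⟨k, hk⟩ =
      (a.gather b).embedding ⟨j, hj'⟩
        ((a.sigmaCompositionAux b ⟨j, hj'⟩).embedding ⟨i, hi'⟩ ⟨k, hk'⟩) := by
  apply Fin.ext
  simp only [Composition.coe_embedding]
  have h1 : (⟨j, (Composition.length_gather a b).symm ▸ hj⟩ : Fin (a.gather b).length)
      = ⟨j, hj'⟩ := rfl
  have := Composition.sizeUpTo_sizeUpTo_add a b hj hi
  rw [h1] at this
  rw [this]
  omega

theorem key_sum {n : ℕ} (a : Composition n) (b : Composition a.length) (z : Fin n → ℂ)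
    {j i : ℕ} (hj : j < b.length) (hi : i < b.blocksFun ⟨j, hj⟩)
    (hj' : j < (a.gather b).length)
    (hi' : i < (a.sigmaCompositionAux b ⟨j, hj'⟩).length) :
    ∑ i' : Fin (a.blocksFun (b.embedding ⟨j, hj⟩ ⟨i, hi⟩)),
        z (a.embedding (b.embedding ⟨j, hj⟩ ⟨i, hi⟩) i') =
      ∑ k : Fin ((a.sigmaCompositionAux b ⟨j, hj'⟩).blocksFun ⟨i, hi'⟩),
        z ((a.gather b).embedding ⟨j, hj'⟩
          ((a.sigmaCompositionAux b ⟨j, hj'⟩).embedding ⟨i, hi'⟩ k)) := by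
  apply ffcongr (fun m v => ∑ x, v x)
    (show a.blocksFun (b.embedding ⟨j, hj⟩ ⟨i, hi⟩)
        = (a.sigmaCompositionAux b ⟨j, hj'⟩).blocksFun ⟨i, hi'⟩ from
      (Composition.blocksFun_sigmaCompositionAux a b ⟨j, hj⟩ ⟨i, hi⟩).symm)
  intro k h1 h2
  exact congrArg z (key_emb a b hj hi hj' hi' h1 h2)

theorem key_gather_sum {n : ℕ} (a : Composition n) (b : Composition a.length) (z : Fin n → ℂ)
    {j : ℕ} (hj : j < b.length) (hj' : j < (a.gather b).length) :
    ∑ i : Fin (b.blocksFun ⟨j, hj⟩),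
        ∑ i', z (a.embedding (b.embedding ⟨j, hj⟩ i) i') =
      ∑ i : Fin ((a.gather b).blocksFun ⟨j, hj'⟩), z ((a.gather b).embedding ⟨j, hj'⟩ i) := by
  rw [← Equiv.sum_comp (Composition.blocksFinEquiv (a.sigmaCompositionAux b ⟨j, hj'⟩))
    (fun i => z ((a.gather b).embedding ⟨j, hj'⟩ i)), ← Finset.univ_sigma_univ,
    Finset.sum_sigma]
  apply ffcongr (fun m v => ∑ x, v x)
    (show b.blocksFun ⟨j, hj⟩ = (a.sigmaCompositionAux b ⟨j, hj'⟩).length from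
      (Composition.length_sigmaCompositionAux a b ⟨j, hj⟩).symm)
  intro i h1 h2
  exact key_sum a b z hj h1 hj' h2

theorem key_prod {n : ℕ} (a : Composition n) (b : Composition a.length) (F : Transform)
    (z : Fin n → ℂ) :
    ∏ k, F (a.blocksFun k) (z ∘ a.embedding k) =
      ∏ j, ∏ i,
        F ((a.sigmaCompositionAux b j).blocksFun i)
          ((z ∘ (a.gather b).embedding j) ∘ (a.sigmaCompositionAux b j).embedding i) := by
  rw [← Equiv.prod_comp (Composition.blocksFinEquiv b)
    (fun k => F (a.blocksFun k) (z ∘ a.embedding k)), ← Finset.univ_sigma_univ,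
    Finset.prod_sigma]
  apply ffcongr (fun m v => ∏ x, v x) (Composition.length_gather a b).symm
  intro j hj1 hj2
  apply ffcongr (fun m v => ∏ x, v x)
    (show b.blocksFun ⟨j, hj1⟩ = (a.sigmaCompositionAux b ⟨j, hj2⟩).length from
      (Composition.length_sigmaCompositionAux a b ⟨j, hj1⟩).symm)
  intro i hi1 hi2
  apply ffcongr F
    (show a.blocksFun (b.embedding ⟨j, hj1⟩ ⟨i, hi1⟩)
        = (a.sigmaCompositionAux b ⟨j, hj2⟩).blocksFun ⟨i, hi2⟩ from
      (Composition.blocksFun_sigmaCompositionAux a b ⟨j, hj1⟩ ⟨i, hi1⟩).symm)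
  intro k h1 h2
  exact congrArg z (key_emb a b hj1 hi1 hj2 hi2 h1 h2)

set_option maxHeartbeats 1000000 in
theorem tComp_assoc (H G F : Transform) (n : ℕ) (z : Fin n → ℂ) :
    tComp (tComp H G) F n z = tComp H (tComp G F) n z := by
  simp only [tComp]
  calc
    ∑ a : Composition n,
        (∑ b : Composition a.length,
            H b.length (fun j => ∑ i,
                (fun j' => ∑ i', z (a.embedding j' i')) (b.embedding j i)) *
              ∏ j, G (b.blocksFun j)
                ((fun j' => ∑ i', z (a.embedding j' i')) ∘ b.embedding j)) *
          ∏ k, F (a.blocksFun k) (z ∘ a.embedding k)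
      = ∑ x : Σ a : Composition n, Composition a.length,
          (H x.2.length (fun j => ∑ i,
              (fun j' => ∑ i', z (x.1.embedding j' i')) (x.2.embedding j i)) *
            ∏ j, G (x.2.blocksFun j)
              ((fun j' => ∑ i', z (x.1.embedding j' i')) ∘ x.2.embedding j)) *
          ∏ k, F (x.1.blocksFun k) (z ∘ x.1.embedding k) := by
        simp_rw [Finset.sum_mul]
        rw [← Finset.univ_sigma_univ, Finset.sum_sigma]
    _ = ∑ y : Σ c : Composition n, ∀ i : Fin c.length, Composition (c.blocksFun i),
          H y.1.length (fun j => ∑ i, z (y.1.embedding j i)) *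
            ∏ j, (G ((y.2 j).length)
                (fun i => ∑ i', (z ∘ y.1.embedding j) ((y.2 j).embedding i i')) *
              ∏ i, F ((y.2 j).blocksFun i)
                ((z ∘ y.1.embedding j) ∘ (y.2 j).embedding i)) := by
        rw [← Equiv.sum_comp (Composition.sigmaEquivSigmaPi n)]
        apply Finset.sum_congr rfl
        rintro ⟨a, b⟩ -
        dsimp [Composition.sigmaEquivSigmaPi]
        rw [Finset.prod_mul_distrib]
        have E1 : H b.length (fun j => ∑ i,
              (fun j' => ∑ i', z (a.embedding j' i')) (b.embedding j i)) =
            H (a.gather b).length (fun j => ∑ i, z ((a.gather b).embedding j i)) := by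
          apply ffcongr H (Composition.length_gather a b).symm
          intro k h1 h2
          exact key_gather_sum a b z h1 h2
        have E2 : (∏ j, G (b.blocksFun j)
              ((fun j' => ∑ i', z (a.embedding j' i')) ∘ b.embedding j)) =
            ∏ j, G ((a.sigmaCompositionAux b j).length)
              (fun i => ∑ i', (z ∘ (a.gather b).embedding j)
                ((a.sigmaCompositionAux b j).embedding i i')) := by
          apply ffcongr (fun m v => ∏ x, v x) (Composition.length_gather a b).symm
          intro k h1 h2
          apply ffcongr G
            (show b.blocksFun ⟨k, h1⟩ = (a.sigmaCompositionAux b ⟨k, h2⟩).length from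
              (Composition.length_sigmaCompositionAux a b ⟨k, h1⟩).symm)
          intro i hi1 hi2
          exact key_sum a b z h1 hi1 h2 hi2
        rw [E1, E2, key_prod a b F z]
        simp only [Function.comp_apply]
        exact mul_assoc _ _ _
    _ = ∑ c : Composition n,
          H c.length (fun j => ∑ i, z (c.embedding j i)) *
            ∏ j, ∑ d : Composition (c.blocksFun j),
              G d.length (fun i => ∑ i', (z ∘ c.embedding j) (d.embedding i i')) *
                ∏ i, F (d.blocksFun i) ((z ∘ c.embedding j) ∘ d.embedding i) := by
        rw [← Finset.univ_sigma_univ, Finset.sum_sigma]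
        apply Finset.sum_congr rfl
        intro c _
        rw [Fintype.prod_sum, Finset.mul_sum]

theorem tComp_congr_left {G G' : Transform} (F : Transform)
    (h : ∀ m, 1 ≤ m → ∀ v : Fin m → ℂ, G m v = G' m v) {n : ℕ} (hn : 1 ≤ n) (z : Fin n → ℂ) :
    tComp G F n z = tComp G' F n z := by
  simp only [tComp]
  exact Finset.sum_congr rfl fun c _ => by
    rw [h c.length (Composition.length_pos_of_pos c hn)]

theorem tComp_congr_right (G : Transform) {F F' : Transform}
    (h : ∀ m, 1 ≤ m → ∀ v : Fin m → ℂ, F m v = F' m v) {n : ℕ} (z : Fin n → ℂ) :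
    tComp G F n z = tComp G F' n z := by
  simp only [tComp]
  exact Finset.sum_congr rfl fun c _ => by
    rw [Finset.prod_congr rfl fun j _ => h (c.blocksFun j) (c.one_le_blocksFun j) _]

theorem tId_comp (F : Transform) {n : ℕ} (hn : 1 ≤ n) (z : Fin n → ℂ) :
    tComp tId F n z = F n z := by
  rw [tComp, Finset.sum_eq_single (Composition.single n hn)]
  · have h1 : tId (Composition.single n hn).length
        (fun j => ∑ i, z ((Composition.single n hn).embedding j i)) = 1 := by
      simp [tId, Composition.single_length]
    rw [h1, one_mul]
    have h2 : ∀ j : Fin (Composition.single n hn).length,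
        F ((Composition.single n hn).blocksFun j)
          (z ∘ (Composition.single n hn).embedding j) = F n z := by
      intro j
      apply ffcongr F (Composition.single_blocksFun hn j)
      intro k hk1 hk2
      have hj : (j : ℕ) = 0 := by
        have h := j.2
        have hl : (Composition.single n hn).length = 1 := Composition.single_length hn
        omega
      simp only [Function.comp_apply]
      congr 1
      apply Fin.ext
      rw [Composition.coe_embedding, hj, Composition.sizeUpTo_zero, Nat.zero_add]
    rw [Finset.prod_congr rfl fun j _ => h2 j, Finset.prod_const, Finset.card_univ,
      Fintype.card_fin, Composition.single_length, pow_one]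
  · intro c _ hc
    have : c.length ≠ 1 := by
      simpa [Composition.eq_single_iff_length hn] using hc
    simp [tId, this]
  · simp

theorem comp_tId (G : Transform) {n : ℕ} (hn : 1 ≤ n) (z : Fin n → ℂ) :
    tComp G tId n z = G n z := by
  rw [tComp, Finset.sum_eq_single (Composition.ones n)]
  · have h1 : (∏ j, tId ((Composition.ones n).blocksFun j)
        (z ∘ (Composition.ones n).embedding j)) = 1 :=
      Finset.prod_eq_one fun j _ => by simp [tId, Composition.ones_blocksFun]
    rw [h1, mul_one]
    apply ffcongr G (Composition.ones_length n)
    intro k h1 h2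
    have : ∑ i, z ((Composition.ones n).embedding ⟨k, h1⟩ i)
        = ∑ _i : Fin 1, z ⟨k, h2⟩ := by
      apply ffcongr (fun m v => ∑ x, v x) (Composition.ones_blocksFun n ⟨k, h1⟩)
      intro k' hk1 hk2
      congr 1
      apply Fin.ext
      rw [Composition.coe_embedding]
      have : (Composition.ones n).sizeUpTo k = min k n := Composition.ones_sizeUpTo n k
      simp only [this]
      omega
    rw [this, Fin.sum_univ_one]
  · intro c _ hc
    obtain ⟨i, hi, hlt⟩ := Composition.ne_ones_iff.mp hc
    rw [← Composition.ofFn_blocksFun c] at hi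
    obtain ⟨j, hj⟩ := List.mem_ofFn.mp hi
    have : tId (c.blocksFun j) (z ∘ c.embedding j) = 0 := by
      have : c.blocksFun j ≠ 1 := by omega
      simp [tId, this]
    rw [Finset.prod_eq_zero (Finset.mem_univ j) this, mul_zero]
  · simp

theorem linv_one (F : Transform) (v : Fin 1 → ℂ) : linv F 1 v = 1 / F 1 v := by
  rw [linv_def]
  have he : (Finset.univ.filter fun c : Composition 1 => c.length < 1) = ∅ := by
    apply Finset.filter_false_of_mem
    intro c _
    simp only [not_lt]
    exact Composition.length_pos_of_pos c one_pos
  have hv : (fun _ : Fin 1 => v 0) = v := funext fun i => by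
    congr
    apply Fin.ext
    have := i.2
    omega
  rw [he]
  simp [tId, hv, Fin.prod_univ_one]

theorem ones_blockSum {n : ℕ} (z : Fin n → ℂ) {k : ℕ}
    (h1 : k < (Composition.ones n).length) (h2 : k < n) :
    ∑ i, z ((Composition.ones n).embedding ⟨k, h1⟩ i) = z ⟨k, h2⟩ := by
  have : ∑ i, z ((Composition.ones n).embedding ⟨k, h1⟩ i)
      = ∑ _i : Fin 1, z ⟨k, h2⟩ := by
    apply ffcongr (fun m v => ∑ x, v x) (Composition.ones_blocksFun n ⟨k, h1⟩)
    intro k' hk1 hk2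
    congr 1
    apply Fin.ext
    rw [Composition.coe_embedding]
    have : (Composition.ones n).sizeUpTo k = min k n := Composition.ones_sizeUpTo n k
    simp only [this]
    omega
  rw [this, Fin.sum_univ_one]

theorem ones_term {n : ℕ} (F : Transform) (z : Fin n → ℂ) :
    (∏ j, F ((Composition.ones n).blocksFun j) (z ∘ (Composition.ones n).embedding j)) =
      ∏ i, F 1 (fun _ => z i) := by
  apply ffcongr (fun m v => ∏ x, v x) (Composition.ones_length n)
  intro k h1 h2
  apply ffcongr F (Composition.ones_blocksFun n ⟨k, h1⟩)
  intro k' hk1 hk2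
  simp only [Function.comp_apply]
  congr 1
  apply Fin.ext
  rw [Composition.coe_embedding]
  have : (Composition.ones n).sizeUpTo k = min k n := Composition.ones_sizeUpTo n k
  simp only [this]
  omega

theorem linv_comp (F : Transform) (hF : ∀ v : Fin 1 → ℂ, F 1 v ≠ 0) {n : ℕ} (hn : 1 ≤ n)
    (z : Fin n → ℂ) : tComp (linv F) F n z = tId n z := by
  have hP : (∏ i, F 1 (fun _ => z i)) ≠ 0 := Finset.prod_ne_zero_iff.mpr fun i _ => hF _
  unfold tComp; rw [
    ← Finset.sum_filter_add_sum_filter_not Finset.univ (fun c : Composition n => c.length < n)]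
  have hsplit : Finset.univ.filter (fun c : Composition n => ¬c.length < n)
      = {Composition.ones n} := by
    ext c
    simp only [Finset.mem_filter, Finset.mem_univ, true_and, not_lt, Finset.mem_singleton]
    rw [← Composition.eq_ones_iff_le_length]
  rw [hsplit, Finset.sum_singleton]
  have hA : linv F (Composition.ones n).length
      (fun j => ∑ i, z ((Composition.ones n).embedding j i)) = linv F n z := by
    apply ffcongr (linv F) (Composition.ones_length n)
    intro k h1 h2
    exact ones_blockSum z h1 h2
  rw [hA, ones_term F z]
  have hS : ∑ c ∈ (Finset.univ.filter fun c : Composition n => c.length < n),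
      linv F c.length (fun j => ∑ i, z (c.embedding j i)) *
        ∏ j, F (c.blocksFun j) (z ∘ c.embedding j)
      = ∑ c ∈ (Finset.univ.filter fun c : Composition n => c.length < n).attach,
      linv F c.1.length (fun j => ∑ i, z (c.1.embedding j i)) *
        ∏ j, F (c.1.blocksFun j) (z ∘ c.1.embedding j) :=
    (Finset.sum_attach _ _).symm
  rw [hS]
  rw [linv_def, div_mul_cancel₀ _ hP]
  ring

/-- a transform `F` is invertible iff `F₁ : ℂ → ℂ` is nowhere vanishing. -/
theorem stmt15 (F : Transform) :
    (∃ G : Transform, TInverse F G) ↔ ∀ v : Fin 1 → ℂ, F 1 v ≠ 0 := by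
  constructor
  · rintro ⟨G, hGF, hFG⟩ v
    have h1 := hGF 1 le_rfl v
    simp only [tComp] at h1
    have huniv : (Finset.univ : Finset (Composition 1)) = {Composition.ones 1} :=
      (Finset.eq_univ_of_card _ (by simp [composition_card])).symm
    rw [huniv, Finset.sum_singleton, ones_term F v, Fin.prod_univ_one] at h1
    have hv : (fun _ : Fin 1 => v 0) = v := funext fun i => by
      congr
      apply Fin.ext
      have := i.2
      omega
    rw [hv] at h1
    simp only [tId, if_pos rfl] at h1
    intro hz
    rw [hz, mul_zero] at h1
    exact one_ne_zero h1.symm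
  · intro hF
    set G := linv F with hG
    have hG1 : ∀ v : Fin 1 → ℂ, G 1 v ≠ 0 := fun v => by
      rw [hG, linv_one]; exact one_div_ne_zero (hF v)
    have hGF : ∀ n, 1 ≤ n → ∀ z : Fin n → ℂ, tComp G F n z = tId n z :=
      fun n hn z => linv_comp F hF hn z
    set H := linv G with hH
    have hHG : ∀ n, 1 ≤ n → ∀ z : Fin n → ℂ, tComp H G n z = tId n z :=
      fun n hn z => linv_comp G hG1 hn z
    have hFH : ∀ n, 1 ≤ n → ∀ z : Fin n → ℂ, F n z = H n z := by
      intro n hn z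
      calc F n z = tComp tId F n z := (tId_comp F hn z).symm
        _ = tComp (tComp H G) F n z :=
            tComp_congr_left F (fun m hm v => (hHG m hm v).symm) hn z
        _ = tComp H (tComp G F) n z := tComp_assoc H G F n z
        _ = tComp H tId n z := tComp_congr_right H (fun m hm v => hGF m hm v) z
        _ = H n z := comp_tId H hn z
    refine ⟨G, hGF, ?_⟩
    intro n hn z
    calc tComp F G n z = tComp H G n z :=
          tComp_congr_left G (fun m hm v => hFH m hm v) hn z
      _ = tId n z := hHG n hn z
end
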